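/- arXiv:1804.02259 — 9 statements merged into one kernel-verified Lean document; each statement's English description precedes it below -/
import Mathlib

section
/- For every finite simple graph G, the independence number α(G) is at least the sum over all vertices u of 1/(d(u)+1), where d(u) is the degree of u. -/
open Finset

private lemma caro_wei_aux {V : Type*} [Fintype V] [DecidableEq V]
    (G : SimpleGraph V) [DecidableRel G.Adj] :
    ∀ n (s : Finset V), s.card ≤ n →
      ∃ I : Finset V, I ⊆ s ∧ (I : Set V).Pairwise (fun u v => ¬ G.Adj u v) ∧
        ∑ u ∈ s, (1 : ℝ) / ((s.filter (G.Adj u)).card + 1) ≤ I.card := by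
  intro n
  induction n with
  | zero =>
    intro s hs
    have : s = ∅ := Finset.card_eq_zero.mp (Nat.le_zero.mp hs)
    subst this
    exact ⟨∅, by simp⟩
  | succ n ih =>
    intro s hs
    rcases s.eq_empty_or_nonempty with rfl | hne
    · exact ⟨∅, by simp⟩
    obtain ⟨v, hvs, hvmin⟩ := s.exists_min_image (fun u => (s.filter (G.Adj u)).card) hne
    set t : Finset V := insert v (s.filter (G.Adj v)) with ht
    have htsub : t ⊆ s := by
      intro x hx
      rcases Finset.mem_insert.mp hx with rfl | hx
      · exact hvs
      · exact (Finset.mem_filter.mp hx).1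
    have hvt : v ∈ t := Finset.mem_insert_self _ _
    have htcard : t.card = (s.filter (G.Adj v)).card + 1 := by
      rw [ht, Finset.card_insert_of_notMem]
      simp [G.irrefl]
    set s' := s \ t with hs'
    have hs'card : s'.card ≤ n := by
      have h1 : s'.card < s.card := by
        apply Finset.card_lt_card
        constructor
        · exact Finset.sdiff_subset
        · intro hsub
          exact Finset.mem_sdiff.mp (hsub hvs) |>.2 hvt
      omega
    obtain ⟨I, hIs, hI, hsum⟩ := ih s' hs'card
    have hvI : v ∉ I := fun h => (Finset.mem_sdiff.mp (hIs h)).2 hvt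
    refine ⟨insert v I, ?_, ?_, ?_⟩
    · exact Finset.insert_subset hvs (hIs.trans Finset.sdiff_subset)
    · -- independence
      have hnotadj : ∀ u ∈ I, ¬ G.Adj v u := by
        intro u hu hadj
        have := Finset.mem_sdiff.mp (hIs hu)
        exact this.2 (Finset.mem_insert_of_mem (Finset.mem_filter.mpr ⟨this.1, hadj⟩))
      rw [Finset.coe_insert]
      apply Set.Pairwise.insert hI
      intro u hu _
      exact ⟨fun h => (hnotadj u hu) h, fun h => (hnotadj u hu) (h.symm)⟩
    · -- counting
      have hsplit : s = s' ∪ t := by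
        rw [hs', Finset.sdiff_union_of_subset htsub]
      have hdisj : Disjoint s' t := Finset.sdiff_disjoint
      rw [hsplit, Finset.sum_union hdisj]
      have hbound1 : ∀ u ∈ s', (1 : ℝ) / (((s' ∪ t).filter (G.Adj u)).card + 1)
          ≤ 1 / ((s'.filter (G.Adj u)).card + 1) := by
        intro u _
        apply one_div_le_one_div_of_le
        · exact Nat.cast_add_one_pos _
        · have : s'.filter (G.Adj u) ⊆ (s' ∪ t).filter (G.Adj u) :=
            Finset.filter_subset_filter _ Finset.subset_union_left
          have := Finset.card_le_card this
          exact add_le_add_left (Nat.cast_le.mpr this) 1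
      have hbound2 : ∀ u ∈ t, (1 : ℝ) / (((s' ∪ t).filter (G.Adj u)).card + 1)
          ≤ 1 / ((s.filter (G.Adj v)).card + 1) := by
        intro u hu
        apply one_div_le_one_div_of_le
        · exact Nat.cast_add_one_pos _
        · have := hvmin u (htsub hu)
          rw [← hsplit]
          exact_mod_cast add_le_add_left (Nat.cast_le.mpr this) 1
      calc ∑ u ∈ s', (1 : ℝ) / (((s' ∪ t).filter (G.Adj u)).card + 1)
            + ∑ u ∈ t, (1 : ℝ) / (((s' ∪ t).filter (G.Adj u)).card + 1)
          ≤ ∑ u ∈ s', (1 : ℝ) / ((s'.filter (G.Adj u)).card + 1)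
            + ∑ u ∈ t, (1 : ℝ) / ((s.filter (G.Adj v)).card + 1) := by
            exact add_le_add (Finset.sum_le_sum hbound1) (Finset.sum_le_sum hbound2)
        _ = ∑ u ∈ s', (1 : ℝ) / ((s'.filter (G.Adj u)).card + 1) + 1 := by
            rw [Finset.sum_const, htcard]
            rw [nsmul_eq_mul]; push_cast
            rw [mul_one_div_cancel (Nat.cast_add_one_ne_zero _)]
        _ ≤ I.card + 1 := by linarith
        _ = ((insert v I).card : ℝ) := by
            rw [Finset.card_insert_of_notMem hvI]
            push_cast
            ring

/-- Caro–Wei bound: every finite simple graph has an independent set (a set of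
pairwise non-adjacent vertices) of size at least ∑_u 1/(d(u)+1). -/
theorem caro_wei {V : Type*} [Fintype V] [DecidableEq V]
    (G : SimpleGraph V) [DecidableRel G.Adj] :
    ∃ I : Finset V, (I : Set V).Pairwise (fun u v => ¬ G.Adj u v) ∧
      (∑ u : V, (1 : ℝ) / (G.degree u + 1)) ≤ I.card := by
  obtain ⟨I, _, hI, hsum⟩ := caro_wei_aux G (Finset.univ.card) Finset.univ le_rfl
  refine ⟨I, hI, ?_⟩
  calc ∑ u : V, (1 : ℝ) / (G.degree u + 1)
      = ∑ u ∈ Finset.univ, (1 : ℝ) / ((Finset.univ.filter (G.Adj u)).card + 1) := by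
        apply Finset.sum_congr rfl
        intro u _
        rw [← SimpleGraph.neighborFinset_eq_filter, SimpleGraph.card_neighborFinset_eq_degree]
    _ ≤ I.card := hsum
end

section
/- For every finite simple graph G and fixed non-negative integer d, G contains a d-degenerate induced subgraph on at least ∑_{u∈V(G)} (min{d(u),d}+1)/(d(u)+1) vertices. -/
variable {V : Type*} [Fintype V] [DecidableEq V]

/-- A list of vertices witnesses κ-degeneracy: each vertex has at most κ of it
neighbors among the earlier vertices of the ordering. -/
def DegenList (G : SimpleGraph V) [DecidableRel G.Adj] (κ : V → ℤ) (l : List V) : Prop :=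
  l.Nodup ∧ ∀ i : Fin l.length,
    ((((l.take i).toFinset).filter (fun v => G.Adj (l.get i) v)).card : ℤ) ≤ κ (l.get i)

/-- A set of vertices is κ-degenerate if it admits a suitable linear ordering. -/
def IsDegen (G : SimpleGraph V) [DecidableRel G.Adj] (κ : V → ℤ) (I : Finset V) : Prop :=
  ∃ l : List V, l.toFinset = I ∧ DegenList G κ l

namespace AKSaux

noncomputable def w (d D : ℕ) : ℝ := ((min D d : ℕ) + 1) / (D + 1)

lemma w_nonneg (d D : ℕ) : 0 ≤ w d D := by unfold w; positivity

lemma w_le_one (d D : ℕ) : w d D ≤ 1 := by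
  unfold w
  rw [div_le_one (by positivity)]
  have : (min D d : ℕ) ≤ D := min_le_left _ _
  exact_mod_cast Nat.succ_le_succ this

lemma w_anti {d a b : ℕ} (h : a ≤ b) : w d b ≤ w d a := by
  unfold w
  rw [div_le_div_iff₀ (by positivity) (by positivity)]
  have key : (min b d + 1) * (a + 1) ≤ (min a d + 1) * (b + 1) := by
    rcases le_total b d with hb | hb
    · rw [min_eq_left hb, min_eq_left (h.trans hb)]; nlinarith
    · rw [min_eq_right hb]
      rcases le_total a d with ha | ha
      · rw [min_eq_left ha]
        have : d + 1 ≤ b + 1 := Nat.succ_le_succ hb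
        nlinarith
      · rw [min_eq_right ha]; nlinarith
  exact_mod_cast key

lemma w_eq_of_lt {d D : ℕ} (h : d < D) : w d D = ((d : ℝ) + 1) / (D + 1) := by
  unfold w
  rw [min_eq_right h.le]

lemma w_gain {d D : ℕ} (h : d < D) :
    w d D + ((d : ℝ) + 1) / (D * (D + 1)) ≤ w d (D - 1) := by
  have hD1 : 1 ≤ D := Nat.one_le_of_lt (Nat.lt_of_le_of_lt (Nat.zero_le d) h)
  have hmin : min (D - 1) d = d := min_eq_right (by omega)
  have hcast : ((D - 1 : ℕ) : ℝ) = (D : ℝ) - 1 := by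
    push_cast [Nat.cast_sub hD1]; ring
  rw [w_eq_of_lt h]
  unfold w
  rw [hmin, hcast]
  have hD : (0 : ℝ) < D := by exact_mod_cast hD1
  rw [sub_add_cancel]
  rw [div_add_div _ _ (by positivity) (by positivity), div_le_div_iff₀ (by positivity) hD]
  ring_nf
  nlinarith [hD]

lemma key (G : SimpleGraph V) [DecidableRel G.Adj] (d : ℕ) :
    ∀ n (s : Finset V), s.card = n →
    ∃ l : List V, l.toFinset ⊆ s ∧ DegenList G (fun _ => (d : ℤ)) l ∧
      ∑ u ∈ s, w d ((s.filter (G.Adj u)).card) ≤ l.length := by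
  intro n
  induction n using Nat.strong_induction_on with
  | _ n ih =>
    intro s hs
    rcases s.eq_empty_or_nonempty with rfl | hne
    · refine ⟨[], by simp, ⟨List.nodup_nil, fun i => absurd i.isLt (by simp)⟩, by simp⟩
    have hcard : ∀ v ∈ s, (s.erase v).card < n := by
      intro v hv
      rw [Finset.card_erase_of_mem hv, hs]
      exact Nat.sub_lt (hs ▸ Finset.card_pos.2 hne) one_pos
    by_cases hA : ∃ v ∈ s, (s.filter (G.Adj v)).card ≤ d
    · -- low degree vertex exists: append it at the end
      obtain ⟨v, hv, hdv⟩ := hA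
      obtain ⟨l, hls, ⟨hnd, hdg⟩, hsum⟩ := ih _ (hcard v hv) (s.erase v) rfl
      have hvl : v ∉ l := by
        intro hmem
        exact Finset.notMem_erase v s (hls (List.mem_toFinset.2 hmem))
      refine ⟨l ++ [v], ?_, ⟨?_, ?_⟩, ?_⟩
      · rw [List.toFinset_append]
        simp only [List.toFinset_cons, List.toFinset_nil]
        exact Finset.union_subset (hls.trans (Finset.erase_subset _ _)) (by simpa using hv)
      · rw [List.nodup_append]
        exact ⟨hnd, List.nodup_singleton v, by simpa using (fun a ha hav => hvl (hav ▸ ha) : ∀ a ∈ l, ¬a = v)⟩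
      · intro i
        have hi : (i : ℕ) < l.length + 1 := by simpa using i.isLt
        rcases Nat.lt_succ_iff_lt_or_eq.1 hi with hlt | heq
        · have hget : (l ++ [v]).get i = l.get ⟨i.1, hlt⟩ := by
            simp [List.get_eq_getElem, List.getElem_append_left hlt]
          have htake : (l ++ [v]).take i.1 = l.take i.1 :=
            List.take_append_of_le_length hlt.le
          simp only [hget, htake]
          exact hdg ⟨i.1, hlt⟩
        · have hget : (l ++ [v]).get i = v := by
            simp [List.get_eq_getElem, List.getElem_concat_length heq]
          have htake : (l ++ [v]).take i.1 = l := by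
            rw [heq]; exact List.take_left
          simp only [hget, htake]
          have hsub : l.toFinset.filter (fun u => G.Adj v u) ⊆ s.filter (G.Adj v) :=
            Finset.filter_subset_filter _ (hls.trans (Finset.erase_subset _ _))
          have := (Finset.card_le_card hsub).trans hdv
          exact_mod_cast this
      · rw [← Finset.add_sum_erase _ _ hv]
        have h2 : ∑ u ∈ s.erase v, w d ((s.filter (G.Adj u)).card)
            ≤ ∑ u ∈ s.erase v, w d (((s.erase v).filter (G.Adj u)).card) := by
          refine Finset.sum_le_sum fun u hu => w_anti ?_
          exact Finset.card_le_card (Finset.filter_subset_filter _ (Finset.erase_subset _ _))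
        have h1 := w_le_one d ((s.filter (G.Adj v)).card)
        have hlen : ((l ++ [v]).length : ℝ) = l.length + 1 := by
          simp
        rw [hlen]
        linarith
    · -- all degrees > d: remove a maximum degree vertex
      push_neg at hA
      obtain ⟨v, hv, hmax⟩ := Finset.exists_max_image s (fun u => (s.filter (G.Adj u)).card) hne
      obtain ⟨l, hls, hdl, hsum⟩ := ih _ (hcard v hv) (s.erase v) rfl
      refine ⟨l, hls.trans (Finset.erase_subset _ _), hdl, ?_⟩
      refine le_trans ?_ hsum
      set D := (s.filter (G.Adj v)).card with hDdef
      have hD : d < D := hA v hv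
      have hDpos : 0 < D := Nat.lt_of_le_of_lt (Nat.zero_le d) hD
      have hDR : (0 : ℝ) < D := by exact_mod_cast hDpos
      set c : ℝ := ((d : ℝ) + 1) / (D * (D + 1)) with hc
      have hterm : ∀ u ∈ s.erase v,
          w d ((s.filter (G.Adj u)).card) + (if G.Adj v u then c else 0)
            ≤ w d (((s.erase v).filter (G.Adj u)).card) := by
        intro u hu
        have hus : u ∈ s := Finset.mem_of_mem_erase hu
        by_cases hadj : G.Adj v u
        · rw [if_pos hadj]
          have hvin : v ∈ s.filter (G.Adj u) := Finset.mem_filter.2 ⟨hv, hadj.symm⟩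
          have hcards : ((s.erase v).filter (G.Adj u)).card = (s.filter (G.Adj u)).card - 1 := by
            rw [Finset.filter_erase, Finset.card_erase_of_mem hvin]
          rw [hcards]
          have hDu : d < (s.filter (G.Adj u)).card := hA u hus
          have hle : (s.filter (G.Adj u)).card ≤ D := hmax u hus
          refine le_trans ?_ (w_gain hDu)
          have : c ≤ ((d : ℝ) + 1) / ((s.filter (G.Adj u)).card * ((s.filter (G.Adj u)).card + 1)) := by
            have h1 : (0:ℝ) < (s.filter (G.Adj u)).card := by
              exact_mod_cast Nat.lt_of_le_of_lt (Nat.zero_le d) hDu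
            have h2 : ((s.filter (G.Adj u)).card : ℝ) ≤ D := by exact_mod_cast hle
            have hd0 : (0:ℝ) ≤ (d:ℝ) := Nat.cast_nonneg d
            have h3 : ((s.filter (G.Adj u)).card : ℝ) * ((s.filter (G.Adj u)).card + 1)
                ≤ (D : ℝ) * ((D : ℝ) + 1) :=
              mul_le_mul h2 (by linarith) (by linarith) (le_of_lt hDR)
            rw [hc, div_le_div_iff₀ (by positivity) (by positivity)]
            have := mul_le_mul_of_nonneg_left h3 (by linarith : (0:ℝ) ≤ (d:ℝ) + 1)
            linarith
          linarith
        · rw [if_neg hadj, add_zero]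
          have : (s.erase v).filter (G.Adj u) = s.filter (G.Adj u) := by
            rw [Finset.filter_erase]
            apply Finset.erase_eq_of_notMem
            simp only [Finset.mem_filter, not_and]
            intro _ h
            exact hadj h.symm
          rw [this]
      have hsumle := Finset.sum_le_sum hterm
      rw [Finset.sum_add_distrib] at hsumle
      have hfilter : (s.erase v).filter (G.Adj v) = s.filter (G.Adj v) := by
        rw [Finset.filter_erase]
        exact Finset.erase_eq_of_notMem (by simp [G.irrefl])
      have hcount : (∑ u ∈ s.erase v, if G.Adj v u then c else 0) = D * c := by
        rw [← Finset.sum_filter, hfilter, Finset.sum_const, hDdef, nsmul_eq_mul]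
      rw [hcount] at hsumle
      have hwD : w d D = (D : ℝ) * c := by
        rw [w_eq_of_lt hD, hc]
        field_simp
      rw [← Finset.add_sum_erase _ _ hv, hwD]
      linarith

end AKSaux

/-- Alon–Kahn–Seymour: G contains a d-degenerate set on at least
∑_u (min{d(u),d}+1)/(d(u)+1) vertices. -/
theorem alon_kahn_seymour (G : SimpleGraph V) [DecidableRel G.Adj] (d : ℕ) :
    ∃ I : Finset V, IsDegen G (fun _ => (d : ℤ)) I ∧
      (∑ u : V, ((min (G.degree u) d : ℝ) + 1) / (G.degree u + 1)) ≤ I.card := by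
  obtain ⟨l, -, hdl, hsum⟩ := AKSaux.key G d (Finset.univ.card) Finset.univ rfl
  refine ⟨l.toFinset, ⟨l, rfl, hdl⟩, ?_⟩
  have hdeg : ∀ u : V, (Finset.univ.filter (G.Adj u)).card = G.degree u := by
    intro u
    rw [← SimpleGraph.neighborFinset_eq_filter, SimpleGraph.card_neighborFinset_eq_degree]
  have heq : (∑ u : V, ((min (G.degree u) d : ℝ) + 1) / (G.degree u + 1))
      = ∑ u : V, AKSaux.w d ((Finset.univ.filter (G.Adj u)).card) := by
    refine Finset.sum_congr rfl fun u _ => ?_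
    rw [hdeg u]
    unfold AKSaux.w
    push_cast
    ring
  rw [heq, List.toFinset_card_of_nodup hdl.1]
  exact hsum
end

section
/- Let G be a finite simple graph and κ: V(G) → ℤ with 0 ≤ κ(u) ≤ d(u) for every vertex u. Then G has a κ-degenerate set of vertices of size at least ∑_{u∈V(G)} (κ(u)+1)/(d(u)+1). -/
variable {V : Type*} [Fintype V] [DecidableEq V]

/-- Graph obtained by deleting all edges at `u`. -/
def delVert (G : SimpleGraph V) (u : V) : SimpleGraph V where
  Adj a b := G.Adj a b ∧ a ≠ u ∧ b ≠ u
  symm := ⟨fun a b ⟨h, ha, hb⟩ => ⟨h.symm, hb, ha⟩⟩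
  loopless := ⟨fun a ⟨h, _, _⟩ => G.loopless.irrefl a h⟩

instance (G : SimpleGraph V) [DecidableRel G.Adj] (u : V) :
    DecidableRel (delVert G u).Adj :=
  fun a b => inferInstanceAs (Decidable (G.Adj a b ∧ a ≠ u ∧ b ≠ u))

lemma delVert_adj (G : SimpleGraph V) (u a b : V) :
    (delVert G u).Adj a b ↔ G.Adj a b ∧ a ≠ u ∧ b ≠ u := Iff.rfl

lemma delVert_nbr (G : SimpleGraph V) [DecidableRel G.Adj] (u v : V) (hv : v ≠ u) :
    (delVert G u).neighborFinset v = (G.neighborFinset v).erase u := by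
  ext w
  simp [SimpleGraph.mem_neighborFinset, delVert_adj, hv, and_comm, eq_comm]

lemma delVert_deg_self (G : SimpleGraph V) [DecidableRel G.Adj] (u : V) :
    (delVert G u).degree u = 0 := by
  rw [SimpleGraph.degree, Finset.card_eq_zero]
  ext w
  simp [SimpleGraph.mem_neighborFinset, delVert_adj]

lemma delVert_deg_adj (G : SimpleGraph V) [DecidableRel G.Adj] {u v : V} (h : G.Adj u v) :
    G.degree v = (delVert G u).degree v + 1 := by
  have hv : v ≠ u := fun e => G.loopless.irrefl u (e ▸ h)
  rw [SimpleGraph.degree, SimpleGraph.degree, delVert_nbr G u v hv,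
    Finset.card_erase_of_mem (by simp [SimpleGraph.mem_neighborFinset, h.symm])]
  have : 0 < (G.neighborFinset v).card := Finset.card_pos.2 ⟨u, by
    simp [SimpleGraph.mem_neighborFinset, h.symm]⟩
  omega

lemma delVert_deg_nadj (G : SimpleGraph V) [DecidableRel G.Adj] {u v : V}
    (h : ¬ G.Adj u v) (hv : v ≠ u) : (delVert G u).degree v = G.degree v := by
  rw [SimpleGraph.degree, SimpleGraph.degree, delVert_nbr G u v hv,
    Finset.erase_eq_of_notMem (by
      simp only [SimpleGraph.mem_neighborFinset]
      exact fun a => h a.symm)]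

/-- `φ v` : the loss incurred at a neighbor `v` when its degree and κ both drop by 1. -/
noncomputable def phi (G : SimpleGraph V) [DecidableRel G.Adj] (κ : V → ℤ) (v : V) : ℝ :=
  ((G.degree v : ℝ) - (κ v : ℝ)) / ((G.degree v : ℝ) * ((G.degree v : ℝ) + 1))

/-- `ψ u = 1 - (κ u + 1)/(d u + 1)` : the allowed total loss at `u`'s neighbors. -/
noncomputable def psi (G : SimpleGraph V) [DecidableRel G.Adj] (κ : V → ℤ) (v : V) : ℝ :=
  ((G.degree v : ℝ) - (κ v : ℝ)) / ((G.degree v : ℝ) + 1)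

lemma averaging (G : SimpleGraph V) [DecidableRel G.Adj] (κ : V → ℤ)
    (hκ : ∀ u, κ u ≤ (G.degree u : ℤ))
    (hA : (Finset.univ.filter (fun v => 0 ≤ κ v)).Nonempty) :
    ∃ u ∈ Finset.univ.filter (fun v => 0 ≤ κ v),
      ∑ v ∈ (Finset.univ.filter (fun v => 0 ≤ κ v)).filter (fun v => G.Adj u v),
        phi G κ v ≤ psi G κ u := by
  set A := Finset.univ.filter (fun v => 0 ≤ κ v) with hAdef
  have hnum : ∀ v, (0:ℝ) ≤ (G.degree v : ℝ) - (κ v : ℝ) := by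
    intro v
    have := hκ v
    have : ((κ v : ℝ)) ≤ (G.degree v : ℝ) := by exact_mod_cast this
    linarith
  have hphi : ∀ v, 0 ≤ phi G κ v := fun v => div_nonneg (hnum v) (by positivity)
  have hdphi : ∀ v, (G.degree v : ℝ) * phi G κ v ≤ psi G κ v := by
    intro v
    rcases Nat.eq_zero_or_pos (G.degree v) with h | h
    · have : psi G κ v = -(κ v : ℝ) := by simp [psi, h]
      rw [this]
      have := hκ v
      simp [phi, h]
      have h0 : κ v ≤ 0 := by have := hκ v; omega
      exact_mod_cast h0
    · have hd : (0:ℝ) < (G.degree v : ℝ) := by exact_mod_cast h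
      have heq : (G.degree v : ℝ) * phi G κ v = psi G κ v := by
        unfold phi psi
        field_simp
      exact heq.le
  have key : ∑ u ∈ A, (∑ v ∈ A.filter (fun v => G.Adj u v), phi G κ v)
      ≤ ∑ u ∈ A, psi G κ u := by
    calc ∑ u ∈ A, ∑ v ∈ A.filter (fun v => G.Adj u v), phi G κ v
        = ∑ u ∈ A, ∑ v ∈ A, if G.Adj u v then phi G κ v else 0 :=
          Finset.sum_congr rfl fun u _ => Finset.sum_filter _ _
      _ = ∑ v ∈ A, ∑ u ∈ A, if G.Adj u v then phi G κ v else 0 := Finset.sum_comm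
      _ = ∑ v ∈ A, ((A.filter (fun u => G.Adj u v)).card : ℝ) * phi G κ v := by
          refine Finset.sum_congr rfl fun v _ => ?_
          rw [← Finset.sum_filter, Finset.sum_const, nsmul_eq_mul]
      _ ≤ ∑ v ∈ A, (G.degree v : ℝ) * phi G κ v := by
          refine Finset.sum_le_sum fun v _ => mul_le_mul_of_nonneg_right ?_ (hphi v)
          have hsub : A.filter (fun u => G.Adj u v) ⊆ G.neighborFinset v := by
            intro w hw
            simp only [Finset.mem_filter] at hw
            simp [SimpleGraph.mem_neighborFinset, hw.2.symm]
          exact_mod_cast Nat.cast_le.mpr (Finset.card_le_card hsub)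
      _ ≤ ∑ v ∈ A, psi G κ v := Finset.sum_le_sum fun v _ => hdphi v
  exact Finset.exists_le_of_sum_le hA key

lemma aux (n : ℕ) : ∀ (G : SimpleGraph V) [DecidableRel G.Adj] (κ : V → ℤ),
    (Finset.univ.filter fun v => 0 ≤ κ v).card ≤ n →
    (∀ u, -1 ≤ κ u ∧ κ u ≤ (G.degree u : ℤ)) →
    ∃ I : Finset V, IsDegen G κ I ∧
      (∑ u : V, ((κ u : ℝ) + 1) / (G.degree u + 1)) ≤ I.card := by
  induction n with
  | zero =>
    intro G inst κ hcard hκ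
    refine ⟨∅, ⟨[], by simp, List.nodup_nil, fun i => i.elim0⟩, ?_⟩
    have hall : ∀ v : V, κ v = -1 := by
      intro v
      by_contra h
      have h0 : 0 ≤ κ v := by have := (hκ v).1; omega
      have : v ∈ Finset.univ.filter fun v => 0 ≤ κ v := by simp [h0]
      have := Finset.card_pos.2 ⟨v, this⟩
      omega
    have : (∑ u : V, ((κ u : ℝ) + 1) / (G.degree u + 1)) = 0 :=
      Finset.sum_eq_zero fun v _ => by rw [hall v]; norm_num
    simp [this]
  | succ n ih =>
    intro G inst κ hcard hκ
    by_cases hA : (Finset.univ.filter fun v => 0 ≤ κ v).Nonempty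
    · obtain ⟨u, huA, hsum⟩ := averaging G κ (fun v => (hκ v).2) hA
      have huκ : 0 ≤ κ u := (Finset.mem_filter.1 huA).2
      set κ' : V → ℤ := fun v =>
        if v = u then -1 else if G.Adj u v then max (κ v - 1) (-1) else κ v with hκ'def
      have hκ'u : κ' u = -1 := by simp [hκ'def]
      have hκ'inv : ∀ v, -1 ≤ κ' v ∧ κ' v ≤ ((delVert G u).degree v : ℤ) := by
        intro v
        by_cases hv : v = u
        · subst hv
          rw [hκ'u, delVert_deg_self]
          omega
        · by_cases hadj : G.Adj u v
          · have hd := delVert_deg_adj G hadj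
            have h2 := (hκ v).2
            simp only [hκ'def, hv, if_false, hadj, if_true]
            omega
          · rw [delVert_deg_nadj G hadj hv]
            simp only [hκ'def, hv, if_false, hadj]
            exact hκ v
      have hκ'le : ∀ v, κ' v ≤ κ v := by
        intro v
        have := (hκ v).1
        by_cases hv : v = u
        · subst hv; rw [hκ'u]; omega
        · simp only [hκ'def, hv, if_false]
          split_ifs <;> omega
      have hA' : (Finset.univ.filter fun v => 0 ≤ κ' v).card ≤ n := by
        have hsub : (Finset.univ.filter fun v => 0 ≤ κ' v) ⊆
            (Finset.univ.filter fun v => 0 ≤ κ v).erase u := by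
          intro v hv
          simp only [Finset.mem_filter, Finset.mem_erase, Finset.mem_univ, true_and] at hv ⊢
          refine ⟨fun e => ?_, le_trans hv (hκ'le v)⟩
          subst e
          rw [hκ'u] at hv
          omega
        have := Finset.card_le_card hsub
        rw [Finset.card_erase_of_mem huA] at this
        omega
      obtain ⟨I', ⟨l, hlI, hnd, hDL⟩, hsum'⟩ := ih (delVert G u) κ' hA' hκ'inv
      have hmemκ : ∀ w ∈ l, 0 ≤ κ' w := by
        intro w hw
        obtain ⟨i, rfl⟩ := List.mem_iff_get.1 hw
        exact le_trans (Int.ofNat_nonneg _) (hDL i)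
      have hul : u ∉ l := fun h => by have := hmemκ u h; rw [hκ'u] at this; omega
      have huI' : u ∉ I' := by rw [← hlI]; simpa using hul
      have hcardI : (insert u I').card = I'.card + 1 := Finset.card_insert_of_notMem huI'
      refine ⟨insert u I', ⟨u :: l, by rw [List.toFinset_cons, hlI], ?_, ?_⟩, ?_⟩
      · exact List.nodup_cons.2 ⟨hul, hnd⟩
      · intro i
        refine Fin.cases ?_ ?_ i
        · refine le_trans (le_of_eq ?_) huκ
          norm_cast
        · intro j
          have hw_mem : l.get j ∈ l := by simpa using List.get_mem l j.val j.isLt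
          have hwu : l.get j ≠ u := fun e => hul (e ▸ hw_mem)
          have hus : u ∉ (l.take j).toFinset := fun h =>
            hul (List.take_subset _ _ (List.mem_toFinset.1 h))
          have hfe : ((l.take j).toFinset).filter (fun v => G.Adj (l.get j) v) =
              ((l.take j).toFinset).filter (fun v => (delVert G u).Adj (l.get j) v) := by
            apply Finset.filter_congr
            intro v hv
            have hvu : v ≠ u := fun e =>
              hul (e ▸ List.take_subset _ _ (List.mem_toFinset.1 hv))
            simp only [eq_iff_iff, delVert_adj]
            exact ⟨fun h => ⟨h, hwu, hvu⟩, fun h => h.1⟩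
          have hget : (u :: l).get j.succ = l.get j := rfl
          have htake : ((u :: l).take (j.succ : Fin (u :: l).length)).toFinset =
              insert u (l.take j).toFinset := by
            rw [Fin.val_succ, List.take_succ_cons, List.toFinset_cons]
          rw [hget, htake]
          by_cases hadj : G.Adj (l.get j) u
          · rw [Finset.filter_insert, if_pos hadj,
              Finset.card_insert_of_notMem (fun h => hus (Finset.mem_of_mem_filter _ h)), hfe]
            have h2 := hDL j
            have hκ'w : κ' (l.get j) = κ (l.get j) - 1 := by
              have h0 : 0 ≤ κ' (l.get j) := hmemκ _ hw_mem
              simp only [hκ'def, hwu, if_false, hadj.symm, if_true] at h0 ⊢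
              omega
            rw [hκ'w] at h2
            push_cast
            omega
          · rw [Finset.filter_insert, if_neg hadj, hfe]
            refine le_trans (hDL j) ?_
            exact hκ'le _
      · -- the sum inequality
        set g : V → ℝ := fun v =>
          if v = u then 1 - psi G κ u else
            if 0 ≤ κ v ∧ G.Adj u v then phi G κ v else 0 with hgdef
        have hdpos : ∀ v : V, (0:ℝ) < (G.degree v : ℝ) + 1 := fun v => by positivity
        have hdiff : ∀ v : V, ((κ v : ℝ) + 1) / ((G.degree v : ℝ) + 1)
            ≤ ((κ' v : ℝ) + 1) / (((delVert G u).degree v : ℝ) + 1) + g v := by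
          intro v
          by_cases hv : v = u
          · subst hv
            rw [hgdef]
            simp only [if_pos rfl]
            rw [hκ'u, delVert_deg_self]
            have h1 : ((κ v : ℝ) + 1) / ((G.degree v : ℝ) + 1) + psi G κ v = 1 := by
              unfold psi
              rw [← add_div, div_eq_one_iff_eq (ne_of_gt (hdpos v))]
              ring
            push_cast
            norm_num
            linarith
          · rw [hgdef]
            simp only [if_neg hv]
            by_cases hadj : G.Adj u v
            · have hd := delVert_deg_adj G hadj
              have hdR : (G.degree v : ℝ) = ((delVert G u).degree v : ℝ) + 1 := by
                exact_mod_cast hd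
              by_cases h0 : 0 ≤ κ v
              · rw [if_pos ⟨h0, hadj⟩]
                have hκ'v : κ' v = κ v - 1 := by
                  simp only [hκ'def, hv, if_false, hadj, if_true]
                  omega
                rw [hκ'v]
                unfold phi
                apply le_of_eq
                rw [hdR]
                have h2 : (0:ℝ) < ((delVert G u).degree v : ℝ) + 1 := by positivity
                have h3 : (0:ℝ) < ((delVert G u).degree v : ℝ) + 1 + 1 := by positivity
                field_simp
                push_cast
                ring
              · rw [if_neg (by tauto)]
                have hv1 : κ v = -1 := by have := (hκ v).1; omega
                have hκ'v : κ' v = -1 := by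
                  simp only [hκ'def, hv, if_false, hadj, if_true, hv1]
                  decide
                rw [hκ'v, hv1]
                norm_num
            · rw [if_neg (by tauto)]
              have hκ'v : κ' v = κ v := by simp [hκ'def, hv, hadj]
              rw [hκ'v, delVert_deg_nadj G hadj hv]
              simp
        have hgsum : ∑ v : V, g v ≤ 1 := by
          have hsplit : ∑ v : V, g v = g u + ∑ v ∈ Finset.univ.erase u, g v :=
            (Finset.add_sum_erase _ _ (Finset.mem_univ u)).symm
          have hgu : g u = 1 - psi G κ u := by rw [hgdef]; simp
          have herase : ∑ v ∈ Finset.univ.erase u, g v =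
              ∑ v ∈ (Finset.univ.filter fun v => 0 ≤ κ v).filter (fun v => G.Adj u v),
                phi G κ v := by
            have step1 : ∑ v ∈ Finset.univ.erase u, g v
                = ∑ v ∈ Finset.univ.erase u,
                    (if 0 ≤ κ v ∧ G.Adj u v then phi G κ v else 0) :=
              Finset.sum_congr rfl fun v hv => by
                simp only [hgdef]
                rw [if_neg (Finset.ne_of_mem_erase hv)]
            rw [step1, ← Finset.sum_filter]
            apply Finset.sum_congr _ (fun v _ => rfl)
            ext v
            simp only [Finset.mem_filter, Finset.mem_erase, Finset.mem_univ, true_and,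
              and_assoc]
            constructor
            · rintro ⟨-, h0, hadj⟩; exact ⟨h0, hadj⟩
            · rintro ⟨h0, hadj⟩; exact ⟨hadj.ne', h0, hadj⟩
          rw [hsplit, hgu, herase]
          linarith
        have h1 : ∑ v : V, ((κ v : ℝ) + 1) / ((G.degree v : ℝ) + 1)
            ≤ (∑ v : V, ((κ' v : ℝ) + 1) / (((delVert G u).degree v : ℝ) + 1)) + ∑ v : V, g v := by
          rw [← Finset.sum_add_distrib]
          exact Finset.sum_le_sum fun v _ => hdiff v
        rw [hcardI]
        push_cast
        linarith
    · -- A empty : same as base case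
      refine ⟨∅, ⟨[], by simp, List.nodup_nil, fun i => i.elim0⟩, ?_⟩
      have hall : ∀ v : V, κ v = -1 := by
        intro v
        by_contra h
        have h0 : 0 ≤ κ v := by have := (hκ v).1; omega
        exact hA ⟨v, by simp [h0]⟩
      have : (∑ u : V, ((κ u : ℝ) + 1) / (G.degree u + 1)) = 0 :=
        Finset.sum_eq_zero fun v _ => by rw [hall v]; norm_num
      simp [this]

/-- Ackerman–Ben-Zwi–Wolfovitz bound. -/
theorem ackerman_benzwi_wolfovitz (G : SimpleGraph V) [DecidableRel G.Adj]
    (κ : V → ℤ) (hκ : ∀ u, 0 ≤ κ u ∧ κ u ≤ (G.degree u : ℤ)) :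
    ∃ I : Finset V, IsDegen G κ I ∧
      (∑ u : V, ((κ u : ℝ) + 1) / (G.degree u + 1)) ≤ I.card := by
  exact aux (Finset.univ.filter fun v => 0 ≤ κ v).card G κ le_rfl
    (fun u => ⟨by have := (hκ u).1; omega, (hκ u).2⟩)
end

section
/- Let G be a finite simple graph, c: V(G) → ℝ_{>0} a weight function, and κ: V(G) → ℤ with 0 ≤ κ(u) ≤ d(u) for every vertex u. Then the maximum c-weight α(G,c,κ) of a κ-degenerate set of vertices of G satisfies α(G,c,κ) ≥ ∑_{u∈V(G)} c(u)(κ(u)+1)/(d(u)+1). -/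
set_option linter.unusedSectionVars false


variable {V : Type*} [Fintype V] [DecidableEq V]

/-- Maximum c-weight of a κ-degenerate set of vertices. -/
noncomputable def alphaW (G : SimpleGraph V) [DecidableRel G.Adj] (c : V → ℝ) (κ : V → ℤ) : ℝ :=
  sSup {x : ℝ | ∃ I : Finset V, IsDegen G κ I ∧ x = ∑ u ∈ I, c u}

section CGRVauxSection
open Finset

namespace CGRVaux

variable (G : SimpleGraph V) [DecidableRel G.Adj]

/-- number of neighbors of `u` occurring before `u` in the ordering `σ`. -/
def rk (σ : V ≃ Fin (Fintype.card V)) (u : V) : ℕ :=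
  ((G.neighborFinset u).filter (fun w => σ w < σ u)).card

def Tset (u : V) : Finset V := insert u (G.neighborFinset u)

lemma not_mem_nbr (u : V) : u ∉ G.neighborFinset u := by
  simp [SimpleGraph.mem_neighborFinset]

lemma card_Tset (u : V) : (Tset G u).card = G.degree u + 1 := by
  rw [Tset, card_insert_of_notMem (not_mem_nbr G u), G.card_neighborFinset_eq_degree]

def Pset (σ : V ≃ Fin (Fintype.card V)) (u : V) : Finset (Fin (Fintype.card V)) :=
  (Tset G u).image σ

lemma card_Pset (σ : V ≃ Fin (Fintype.card V)) (u : V) :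
    (Pset G σ u).card = G.degree u + 1 := by
  rw [Pset, card_image_of_injective _ σ.injective, card_Tset]

noncomputable def posAt (σ : V ≃ Fin (Fintype.card V)) (u : V) (j : Fin (G.degree u + 1)) :
    Fin (Fintype.card V) :=
  ((Pset G σ u).orderIsoOfFin (card_Pset G σ u) j : Fin (Fintype.card V))

lemma posAt_mem (σ : V ≃ Fin (Fintype.card V)) (u : V) (j : Fin (G.degree u + 1)) :
    posAt G σ u j ∈ Pset G σ u :=
  ((Pset G σ u).orderIsoOfFin (card_Pset G σ u) j).2

lemma card_filter_lt_posAt (σ : V ≃ Fin (Fintype.card V)) (u : V) (j : Fin (G.degree u + 1)) :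
    ((Pset G σ u).filter (fun p => p < posAt G σ u j)).card = j := by
  set e := (Pset G σ u).orderIsoOfFin (card_Pset G σ u) with he
  have himg : (Pset G σ u).filter (fun p => p < posAt G σ u j)
      = (Finset.Iio j).image (fun i => (e i : Fin (Fintype.card V))) := by
    ext q
    simp only [mem_filter, mem_image, mem_Iio]
    constructor
    · rintro ⟨hq, hlt⟩
      refine ⟨e.symm ⟨q, hq⟩, ?_, by simp⟩
      have : e (e.symm ⟨q, hq⟩) < e j := by
        rw [e.apply_symm_apply]
        exact Subtype.mk_lt_mk.2 hlt
      exact e.lt_iff_lt.1 this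
    · rintro ⟨i, hij, rfl⟩
      exact ⟨(e i).2, Subtype.mk_lt_mk.1 (e.lt_iff_lt.2 hij)⟩
  have hinj : Function.Injective (fun i : Fin (G.degree u + 1) => (e i : Fin (Fintype.card V))) :=
    fun a b hab => e.injective (Subtype.ext hab)
  rw [himg, card_image_of_injective _ hinj, Fin.card_Iio]

lemma posAt_unique (σ : V ≃ Fin (Fintype.card V)) (u : V) (j : Fin (G.degree u + 1))
    {p : Fin (Fintype.card V)} (hp : p ∈ Pset G σ u)
    (hcard : ((Pset G σ u).filter (fun q => q < p)).card = j) : p = posAt G σ u j := by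
  set e := (Pset G σ u).orderIsoOfFin (card_Pset G σ u) with he
  have h1 : ((Pset G σ u).filter (fun q => q < posAt G σ u (e.symm ⟨p, hp⟩))).card
      = (e.symm ⟨p, hp⟩ : ℕ) := card_filter_lt_posAt G σ u _
  have hp' : p = posAt G σ u (e.symm ⟨p, hp⟩) := by
    have := e.apply_symm_apply ⟨p, hp⟩
    simp only [posAt, ← he, this]
  have : (e.symm ⟨p, hp⟩ : Fin (G.degree u + 1)) = j := by
    apply Fin.ext
    rw [← h1, ← hp', hcard]
  rw [hp', this]

lemma rk_eq_card_Pset (σ : V ≃ Fin (Fintype.card V)) (u : V) :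
    rk G σ u = ((Pset G σ u).filter (fun p => p < σ u)).card := by
  have : (Pset G σ u).filter (fun p => p < σ u)
      = ((G.neighborFinset u).filter (fun w => σ w < σ u)).image σ := by
    ext q
    simp only [Pset, Tset, mem_filter, mem_image, mem_insert]
    constructor
    · rintro ⟨⟨x, hx, rfl⟩, hlt⟩
      rcases hx with rfl | hx
      · exact absurd hlt (lt_irrefl _)
      · exact ⟨x, ⟨hx, hlt⟩, rfl⟩
    · rintro ⟨x, ⟨hx, hlt⟩, rfl⟩
      exact ⟨⟨x, Or.inr hx, rfl⟩, hlt⟩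
  rw [this, card_image_of_injective _ σ.injective, rk]

lemma rk_lt (σ : V ≃ Fin (Fintype.card V)) (u : V) : rk G σ u < G.degree u + 1 := by
  have : rk G σ u ≤ G.degree u := by
    rw [rk, ← G.card_neighborFinset_eq_degree]
    exact card_le_card (filter_subset _ _)
  omega

lemma posAt_rk (σ : V ≃ Fin (Fintype.card V)) (u : V) :
    posAt G σ u ⟨rk G σ u, rk_lt G σ u⟩ = σ u := by
  refine (posAt_unique G σ u _ ?_ ?_).symm
  · exact mem_image_of_mem σ (mem_insert_self u _)
  · exact (rk_eq_card_Pset G σ u).symm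



/-- the reordering that moves `u` to the position of rank `j` among `u` and its neighbors. -/
noncomputable def swp (σ : V ≃ Fin (Fintype.card V)) (u : V) (j : Fin (G.degree u + 1)) :
    V ≃ Fin (Fintype.card V) :=
  (Equiv.swap u (σ.symm (posAt G σ u j))).trans σ

lemma swap_mem_Tset {u w x : V} (hw : w ∈ Tset G u) (hx : x ∈ Tset G u) :
    Equiv.swap u w x ∈ Tset G u := by
  rcases eq_or_ne x u with rfl | hxu
  · rwa [Equiv.swap_apply_left]
  rcases eq_or_ne x w with rfl | hxw
  · rw [Equiv.swap_apply_right]; exact mem_insert_self u _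
  · rwa [Equiv.swap_apply_of_ne_of_ne hxu hxw]

lemma Pset_swp (σ : V ≃ Fin (Fintype.card V)) (u : V) (j : Fin (G.degree u + 1)) :
    Pset G (swp G σ u j) u = Pset G σ u := by
  have hw : σ.symm (posAt G σ u j) ∈ Tset G u := by
    have := posAt_mem G σ u j
    rw [Pset, mem_image] at this
    rcases this with ⟨x, hx, hxe⟩
    have : σ.symm (posAt G σ u j) = x := by rw [← hxe, Equiv.symm_apply_apply]
    rwa [this]
  apply Finset.Subset.antisymm <;> intro q hq <;> rw [Pset, mem_image] at hq ⊢ <;>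
    rcases hq with ⟨x, hx, rfl⟩
  · exact ⟨Equiv.swap u (σ.symm (posAt G σ u j)) x,
      swap_mem_Tset G hw hx, rfl⟩
  · refine ⟨Equiv.swap u (σ.symm (posAt G σ u j)) x, swap_mem_Tset G hw hx, ?_⟩
    simp [swp, Equiv.swap_apply_self]

lemma swp_apply_self (σ : V ≃ Fin (Fintype.card V)) (u : V) (j : Fin (G.degree u + 1)) :
    swp G σ u j u = posAt G σ u j := by
  simp [swp]

lemma rk_swp (σ : V ≃ Fin (Fintype.card V)) (u : V) (j : Fin (G.degree u + 1)) :
    rk G (swp G σ u j) u = j := by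
  rw [rk_eq_card_Pset, Pset_swp, swp_apply_self]
  exact card_filter_lt_posAt G σ u j

lemma posAt_congr (σ τ : V ≃ Fin (Fintype.card V)) (u : V) (j : Fin (G.degree u + 1))
    (h : Pset G σ u = Pset G τ u) : posAt G σ u j = posAt G τ u j := by
  refine posAt_unique G τ u j ?_ ?_
  · rw [← h]; exact posAt_mem G σ u j
  · rw [← h]; exact card_filter_lt_posAt G σ u j

lemma swp_swp (σ : V ≃ Fin (Fintype.card V)) (u : V) (j : Fin (G.degree u + 1))
    (i : Fin (G.degree u + 1)) (hi : (i : ℕ) = rk G σ u) :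
    swp G (swp G σ u j) u i = σ := by
  have hpos : posAt G (swp G σ u j) u i = σ u := by
    rw [posAt_congr G (swp G σ u j) σ u i (Pset_swp G σ u j)]
    have : i = ⟨rk G σ u, rk_lt G σ u⟩ := Fin.ext hi
    rw [this]; exact posAt_rk G σ u
  have hwinv : (swp G σ u j).symm (σ u) = Equiv.swap u (σ.symm (posAt G σ u j)) u := by
    rw [swp]
    simp [Equiv.symm_apply_eq]
  rw [swp, hpos, hwinv, Equiv.swap_apply_left]
  ext x
  simp [swp, Equiv.swap_apply_self]

lemma fiber_card_eq (u : V) (r s : ℕ) (hr : r < G.degree u + 1) (hs : s < G.degree u + 1) :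
    (univ.filter (fun σ : V ≃ Fin (Fintype.card V) => rk G σ u = r)).card
    = (univ.filter (fun σ : V ≃ Fin (Fintype.card V) => rk G σ u = s)).card := by
  apply Finset.card_bij' (fun σ _ => swp G σ u ⟨s, hs⟩) (fun τ _ => swp G τ u ⟨r, hr⟩)
  · intro σ hσ
    simp only [mem_filter, mem_univ, true_and]
    exact rk_swp G σ u ⟨s, hs⟩
  · intro τ hτ
    simp only [mem_filter, mem_univ, true_and]
    exact rk_swp G τ u ⟨r, hr⟩
  · intro σ hσ
    simp only [mem_filter, mem_univ, true_and] at hσ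
    exact swp_swp G σ u ⟨s, hs⟩ ⟨r, hr⟩ (by simp [hσ])
  · intro τ hτ
    simp only [mem_filter, mem_univ, true_and] at hτ
    exact swp_swp G τ u ⟨r, hr⟩ ⟨s, hs⟩ (by simp [hτ])



lemma total_card (u : V) :
    Fintype.card (V ≃ Fin (Fintype.card V))
      = (G.degree u + 1) * (univ.filter (fun σ : V ≃ Fin (Fintype.card V) => rk G σ u = 0)).card := by
  have h := Finset.card_eq_sum_card_fiberwise
    (f := fun σ : V ≃ Fin (Fintype.card V) => rk G σ u)
    (s := univ) (t := Finset.range (G.degree u + 1))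
    (fun σ _ => Finset.mem_range.2 (rk_lt G σ u))
  rw [← Fintype.card, Fintype.card] at *
  rw [h]
  rw [Finset.sum_congr rfl (fun r hr => fiber_card_eq G u r 0 (Finset.mem_range.1 hr)
    (Nat.succ_pos _))]
  rw [Finset.sum_const, Finset.card_range, smul_eq_mul]

lemma favorable_card (u : V) (k : ℕ) (hk : k ≤ G.degree u) :
    (univ.filter (fun σ : V ≃ Fin (Fintype.card V) => rk G σ u ≤ k)).card
      = (k + 1) * (univ.filter (fun σ : V ≃ Fin (Fintype.card V) => rk G σ u = 0)).card := by
  have h := Finset.card_eq_sum_card_fiberwise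
    (f := fun σ : V ≃ Fin (Fintype.card V) => rk G σ u)
    (s := univ.filter (fun σ : V ≃ Fin (Fintype.card V) => rk G σ u ≤ k))
    (t := Finset.range (k + 1))
    (fun σ hσ => Finset.mem_range.2 (Nat.lt_succ_of_le (Finset.mem_filter.1 hσ).2))
  rw [h]
  have hfib : ∀ r ∈ Finset.range (k + 1),
      ((univ.filter (fun σ : V ≃ Fin (Fintype.card V) => rk G σ u ≤ k)).filter
        (fun σ => rk G σ u = r)).card
      = (univ.filter (fun σ : V ≃ Fin (Fintype.card V) => rk G σ u = 0)).card := by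
    intro r hr
    have hr' := Finset.mem_range.1 hr
    have : (univ.filter (fun σ : V ≃ Fin (Fintype.card V) => rk G σ u ≤ k)).filter
        (fun σ => rk G σ u = r)
        = univ.filter (fun σ : V ≃ Fin (Fintype.card V) => rk G σ u = r) := by
      ext σ
      simp only [mem_filter, mem_univ, true_and]
      constructor
      · rintro ⟨_, h2⟩; exact h2
      · rintro h2; exact ⟨by omega, h2⟩
    rw [this]
    exact fiber_card_eq G u r 0 (by omega) (Nat.succ_pos _)
  rw [Finset.sum_congr rfl hfib, Finset.sum_const, Finset.card_range, smul_eq_mul]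

variable (G : SimpleGraph V) [DecidableRel G.Adj]

/-- the selected set for ordering σ -/
def Iset (κ : V → ℤ) (σ : V ≃ Fin (Fintype.card V)) : Finset V :=
  univ.filter (fun u => (rk G σ u : ℤ) ≤ κ u)

def olist (κ : V → ℤ) (σ : V ≃ Fin (Fintype.card V)) : List V :=
  ((List.finRange (Fintype.card V)).map σ.symm).filter (fun v => v ∈ Iset G κ σ)

lemma olist_pairwise (κ : V → ℤ) (σ : V ≃ Fin (Fintype.card V)) :
    (olist G κ σ).Pairwise (fun a b => σ a < σ b) := by
  apply List.Pairwise.filter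
  rw [List.pairwise_map]
  have := List.pairwise_lt_finRange (Fintype.card V)
  apply this.imp
  intro a b h
  simpa using h

lemma olist_nodup (κ : V → ℤ) (σ : V ≃ Fin (Fintype.card V)) : (olist G κ σ).Nodup := by
  apply List.Nodup.filter
  exact (List.nodup_finRange _).map σ.symm.injective

lemma mem_olist (κ : V → ℤ) (σ : V ≃ Fin (Fintype.card V)) (v : V) :
    v ∈ olist G κ σ ↔ v ∈ Iset G κ σ := by
  rw [olist, List.mem_filter]
  simp only [List.mem_map, decide_eq_true_eq]
  constructor
  · rintro ⟨_, h⟩; exact h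
  · intro h
    exact ⟨⟨σ v, List.mem_finRange _, Equiv.symm_apply_apply σ v⟩, h⟩

lemma olist_toFinset (κ : V → ℤ) (σ : V ≃ Fin (Fintype.card V)) :
    (olist G κ σ).toFinset = Iset G κ σ := by
  ext v
  rw [List.mem_toFinset, mem_olist]

lemma isDegen_Iset (κ : V → ℤ) (σ : V ≃ Fin (Fintype.card V)) :
    IsDegen G κ (Iset G κ σ) := by
  refine ⟨olist G κ σ, olist_toFinset G κ σ, olist_nodup G κ σ, ?_⟩
  intro i
  have hu_mem : (olist G κ σ).get i ∈ Iset G κ σ := by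
    rw [← mem_olist G κ σ]
    simp only [List.get_eq_getElem]
    exact List.getElem_mem _
  have hsub : (((olist G κ σ).take i).toFinset.filter (fun v => G.Adj ((olist G κ σ).get i) v))
      ⊆ (G.neighborFinset ((olist G κ σ).get i)).filter
        (fun w => σ w < σ ((olist G κ σ).get i)) := by
    intro w hw
    rw [mem_filter, List.mem_toFinset] at hw
    obtain ⟨hwt, hadj⟩ := hw
    rw [mem_filter, SimpleGraph.mem_neighborFinset]
    refine ⟨hadj, ?_⟩
    obtain ⟨j, hj, hjw⟩ := List.mem_iff_getElem.1 hwt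
    have hlen : ((olist G κ σ).take (i : ℕ)).length = min (i : ℕ) (olist G κ σ).length :=
      List.length_take
    have hjlen : j < (olist G κ σ).length := by omega
    have hji : j < (i : ℕ) := by omega
    have hgw : (olist G κ σ)[j] = w := by
      rw [← hjw, List.getElem_take]
    have hpw := List.pairwise_iff_getElem.1 (olist_pairwise G κ σ) j i hjlen i.isLt hji
    rw [hgw] at hpw
    simpa [List.get_eq_getElem] using hpw
  have hcard := card_le_card hsub
  have h2 : ((G.neighborFinset ((olist G κ σ).get i)).filter
      (fun w => σ w < σ ((olist G κ σ).get i))).card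
      ≤ κ ((olist G κ σ).get i) := by
    have := (mem_filter.1 hu_mem).2
    simpa [rk] using this
  calc ((((olist G κ σ).take i).toFinset.filter
        (fun v => G.Adj ((olist G κ σ).get i) v)).card : ℤ)
      ≤ _ := by exact_mod_cast hcard
    _ ≤ κ ((olist G κ σ).get i) := h2



lemma sum_weights (c : V → ℝ) (κ : V → ℤ) :
    ∑ σ : V ≃ Fin (Fintype.card V), ∑ u ∈ Iset G κ σ, c u
      = ∑ u : V, c u *
        ((univ.filter (fun σ : V ≃ Fin (Fintype.card V) => (rk G σ u : ℤ) ≤ κ u)).card : ℝ) := by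
  have h1 : ∀ σ : V ≃ Fin (Fintype.card V), ∑ u ∈ Iset G κ σ, c u
      = ∑ u : V, if (rk G σ u : ℤ) ≤ κ u then c u else 0 := by
    intro σ
    rw [Iset, sum_filter]
  rw [Finset.sum_congr rfl (fun σ _ => h1 σ), Finset.sum_comm]
  refine Finset.sum_congr rfl (fun u _ => ?_)
  rw [← sum_filter, sum_const, nsmul_eq_mul, mul_comm]

lemma favorable_real (c : V → ℝ) (κ : V → ℤ) (u : V) (h0 : 0 ≤ κ u)
    (h1 : κ u ≤ (G.degree u : ℤ)) :
    (Fintype.card (V ≃ Fin (Fintype.card V)) : ℝ) * (c u * ((κ u : ℝ) + 1) / (G.degree u + 1))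
      = c u *
        ((univ.filter (fun σ : V ≃ Fin (Fintype.card V) => (rk G σ u : ℤ) ≤ κ u)).card : ℝ) := by
  set k := (κ u).toNat with hk
  have hkd : k ≤ G.degree u := by omega
  have hfilt : (univ.filter (fun σ : V ≃ Fin (Fintype.card V) => (rk G σ u : ℤ) ≤ κ u))
      = (univ.filter (fun σ : V ≃ Fin (Fintype.card V) => rk G σ u ≤ k)) := by
    apply filter_congr
    intro σ _
    omega
  rw [hfilt, favorable_card G u k hkd]
  have htot := total_card G u
  have hdpos : ((G.degree u : ℝ) + 1) ≠ 0 := by positivity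
  have hκk : ((k : ℝ)) = ((κ u : ℤ) : ℝ) := by
    rw [hk]
    exact_mod_cast congrArg (Int.cast : ℤ → ℝ) (Int.toNat_of_nonneg h0)
  rw [htot]
  push_cast
  rw [← hκk]
  field_simp

lemma exists_good_perm (c : V → ℝ) (κ : V → ℤ)
    (hκ : ∀ u, 0 ≤ κ u ∧ κ u ≤ (G.degree u : ℤ)) :
    ∃ σ : V ≃ Fin (Fintype.card V),
      (∑ u : V, c u * ((κ u : ℝ) + 1) / (G.degree u + 1)) ≤ ∑ u ∈ Iset G κ σ, c u := by
  have hne : Nonempty (V ≃ Fin (Fintype.card V)) := ⟨Fintype.equivFin V⟩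
  have hsum : ∑ σ : V ≃ Fin (Fintype.card V),
        (∑ u : V, c u * ((κ u : ℝ) + 1) / (G.degree u + 1))
      ≤ ∑ σ : V ≃ Fin (Fintype.card V), ∑ u ∈ Iset G κ σ, c u := by
    apply le_of_eq
    rw [sum_weights G c κ, Finset.sum_const, Finset.card_univ, nsmul_eq_mul, Finset.mul_sum]
    exact Finset.sum_congr rfl (fun u _ => favorable_real G c κ u (hκ u).1 (hκ u).2)
  obtain ⟨σ, _, hσ⟩ := Finset.exists_le_of_sum_le Finset.univ_nonempty hsum
  exact ⟨σ, hσ⟩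


end CGRVaux

end CGRVauxSection

/-- Cordasco–Gargano–Rescigno–Vaccaro weighted bound. -/
theorem cgrv_weighted_bound (G : SimpleGraph V) [DecidableRel G.Adj]
    (c : V → ℝ) (hc : ∀ u, 0 < c u)
    (κ : V → ℤ) (hκ : ∀ u, 0 ≤ κ u ∧ κ u ≤ (G.degree u : ℤ)) :
    (∑ u : V, c u * ((κ u : ℝ) + 1) / (G.degree u + 1)) ≤ alphaW G c κ := by
  obtain ⟨σ, hσ⟩ := CGRVaux.exists_good_perm G c κ hκ
  have hbdd : BddAbove {x : ℝ | ∃ I : Finset V, IsDegen G κ I ∧ x = ∑ u ∈ I, c u} := by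
    refine ⟨∑ u : V, c u, ?_⟩
    rintro x ⟨I, _, rfl⟩
    exact Finset.sum_le_sum_of_subset_of_nonneg (Finset.subset_univ I) (fun u _ _ => (hc u).le)
  have hmem : (∑ u ∈ CGRVaux.Iset G κ σ, c u)
      ∈ {x : ℝ | ∃ I : Finset V, IsDegen G κ I ∧ x = ∑ u ∈ I, c u} :=
    ⟨_, CGRVaux.isDegen_Iset G κ σ, rfl⟩
  exact le_trans hσ (le_csSup hbdd hmem)
end

section
/- Let G be a finite simple graph and κ: V(G) → ℤ with 0 ≤ κ(u) ≤ d(u) for all u. If u_1,…,u_n is a uniformly random linear ordering of V(G), then for each vertex u the expected value of max{0, |N(u) ∩ {earlier vertices}| − κ(u)} equals (1/(d(u)+1))·C(d(u)−κ(u)+1, 2). -/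
set_option linter.unusedSectionVars false
open Finset Equiv
open Fin.NatCast

section
variable {α : Type*} [LinearOrder α] [DecidableEq α] {m : ℕ}

lemma aux_card_filter_lt (A : Finset α) (hA : A.card = m) (i : Fin m) :
    (A.filter (fun a => a < (A.orderIsoOfFin hA i : α))).card = i := by
  classical
  have himg : A.filter (fun a => a < (A.orderIsoOfFin hA i : α)) =
      (Finset.univ.filter (fun j : Fin m => j < i)).image
        (fun j => (A.orderIsoOfFin hA j : α)) := by
    ext a
    simp only [Finset.mem_filter, Finset.mem_image, Finset.mem_univ, true_and]
    constructor
    · rintro ⟨ha, hlt⟩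
      refine ⟨(A.orderIsoOfFin hA).symm ⟨a, ha⟩, ?_, by simp⟩
      rw [← (A.orderIsoOfFin hA).lt_iff_lt, OrderIso.apply_symm_apply]
      exact hlt
    · rintro ⟨j, hj, rfl⟩
      refine ⟨(A.orderIsoOfFin hA j).2, ?_⟩
      exact_mod_cast (A.orderIsoOfFin hA).strictMono hj
  rw [himg, Finset.card_image_of_injective _
      (fun x y hxy => (A.orderIsoOfFin hA).injective (Subtype.coe_injective hxy))]
  have : Finset.univ.filter (fun j : Fin m => j < i) = Finset.Iio i := by
    ext j; simp
  rw [this, Fin.card_Iio]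

/-- rank of an element within a finset -/
def rkAux (A : Finset α) (hA : A.card = m) (x : α) (hx : x ∈ A) : Fin m :=
  (A.orderIsoOfFin hA).symm ⟨x, hx⟩

omit [DecidableEq α] in
lemma rkAux_congr {A B : Finset α} (h : A = B) (hA : A.card = m) (hB : B.card = m)
    (x : α) (hx : x ∈ A) (hx' : x ∈ B) : rkAux A hA x hx = rkAux B hB x hx' := by
  subst h; rfl

lemma card_filter_lt_eq_rkAux (A : Finset α) (hA : A.card = m) (x : α) (hx : x ∈ A) :
    (A.filter (fun a => a < x)).card = rkAux A hA x hx := by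
  have h := aux_card_filter_lt A hA (rkAux A hA x hx)
  rwa [show ((A.orderIsoOfFin hA) (rkAux A hA x hx) : α) = x by simp [rkAux]] at h

/-- cyclic rotation of a finset of size `m+1`, as a permutation of `α`. -/
def rotA (A : Finset α) (hA : A.card = m + 1) : Equiv.Perm α :=
  Equiv.Perm.ofSubtype (p := (· ∈ A))
    (((A.orderIsoOfFin hA).toEquiv.symm.trans (finRotate (m + 1))).trans
      (A.orderIsoOfFin hA).toEquiv)

lemma rotA_congr {A B : Finset α} (h : A = B) (hA : A.card = m + 1) (hB : B.card = m + 1) :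
    rotA A hA = rotA B hB := by subst h; rfl

lemma rotA_apply_of_mem (A : Finset α) (hA : A.card = m + 1) {x : α} (hx : x ∈ A) :
    rotA A hA x =
      (A.orderIsoOfFin hA ((finRotate (m + 1)) ((A.orderIsoOfFin hA).symm ⟨x, hx⟩)) : α) := by
  unfold rotA
  rw [Equiv.Perm.ofSubtype_apply_of_mem]
  rfl

lemma rotA_mem (A : Finset α) (hA : A.card = m + 1) {x : α} (hx : x ∈ A) :
    rotA A hA x ∈ A := by
  rw [rotA_apply_of_mem A hA hx]
  exact (A.orderIsoOfFin hA _).2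

lemma rkAux_rotA (A : Finset α) (hA : A.card = m + 1) {x : α} (hx : x ∈ A)
    (hx' : rotA A hA x ∈ A) :
    rkAux A hA (rotA A hA x) hx' = finRotate (m + 1) (rkAux A hA x hx) := by
  simp only [rkAux]
  have := rotA_apply_of_mem A hA hx
  rw [show (⟨rotA A hA x, hx'⟩ : {y // y ∈ A}) =
      (A.orderIsoOfFin hA ((finRotate (m + 1)) ((A.orderIsoOfFin hA).symm ⟨x, hx⟩)))
      from Subtype.ext this]
  simp

lemma rotA_image (A : Finset α) (hA : A.card = m + 1) :
    A.image (rotA A hA) = A := by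
  apply Finset.eq_of_subset_of_card_le
  · exact Finset.image_subset_iff.2 fun x hx => rotA_mem A hA hx
  · rw [Finset.card_image_of_injective _ (rotA A hA).injective]

lemma rotA_image_inv (A : Finset α) (hA : A.card = m + 1) :
    A.image ⇑(rotA A hA)⁻¹ = A := by
  calc A.image ⇑(rotA A hA)⁻¹ = (A.image ⇑(rotA A hA)).image ⇑(rotA A hA)⁻¹ := by
        rw [rotA_image A hA]
    _ = A.image (⇑(rotA A hA)⁻¹ ∘ ⇑(rotA A hA)) := Finset.image_image
    _ = A := by
        have h2 : ⇑(rotA A hA)⁻¹ ∘ ⇑(rotA A hA) = id :=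
          funext fun x => Equiv.symm_apply_apply _ _
        rw [h2, Finset.image_id]

end

section
variable {V : Type*} [DecidableEq V] {n m : ℕ}

lemma image_trans (T : Finset V) (σ : V ≃ Fin n) (π : Equiv.Perm (Fin n)) :
    T.image ⇑(σ.trans π) = (T.image ⇑σ).image ⇑π := by
  rw [Finset.image_image]; rfl

lemma phiCard (T : Finset V) (hT : T.card = m + 1) (σ : V ≃ Fin n) :
    (T.image ⇑σ).card = m + 1 := by
  rw [Finset.card_image_of_injective _ σ.injective, hT]

/-- apply the cyclic rotation of the image of `T` after `σ`. -/
def PhiFun (T : Finset V) (hT : T.card = m + 1) (σ : V ≃ Fin n) : V ≃ Fin n :=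
  σ.trans (rotA (T.image ⇑σ) (phiCard T hT σ))

def PhiInv (T : Finset V) (hT : T.card = m + 1) (σ : V ≃ Fin n) : V ≃ Fin n :=
  σ.trans (rotA (T.image ⇑σ) (phiCard T hT σ))⁻¹

lemma PhiFun_image (T : Finset V) (hT : T.card = m + 1) (σ : V ≃ Fin n) :
    T.image ⇑(PhiFun T hT σ) = T.image ⇑σ := by
  unfold PhiFun
  rw [image_trans, rotA_image]

lemma PhiInv_image (T : Finset V) (hT : T.card = m + 1) (σ : V ≃ Fin n) :
    T.image ⇑(PhiInv T hT σ) = T.image ⇑σ := by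
  unfold PhiInv
  rw [image_trans, rotA_image_inv]

lemma Phi_left_inv (T : Finset V) (hT : T.card = m + 1) (σ : V ≃ Fin n) :
    PhiInv T hT (PhiFun T hT σ) = σ := by
  unfold PhiInv
  rw [rotA_congr (PhiFun_image T hT σ) (phiCard T hT _) (phiCard T hT σ)]
  unfold PhiFun
  ext v
  simp

lemma Phi_right_inv (T : Finset V) (hT : T.card = m + 1) (σ : V ≃ Fin n) :
    PhiFun T hT (PhiInv T hT σ) = σ := by
  unfold PhiFun
  rw [rotA_congr (PhiInv_image T hT σ) (phiCard T hT _) (phiCard T hT σ)]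
  unfold PhiInv
  ext v
  simp

/-- the rotation map as a permutation of the set of orderings -/
def PhiEquiv (T : Finset V) (hT : T.card = m + 1) : Equiv.Perm (V ≃ Fin n) :=
  ⟨PhiFun T hT, PhiInv T hT, Phi_left_inv T hT, Phi_right_inv T hT⟩

lemma mem_image_of_mem' (T : Finset V) (σ : V ≃ Fin n) {u : V} (hu : u ∈ T) :
    σ u ∈ T.image ⇑σ := Finset.mem_image_of_mem _ hu

lemma rk_PhiFun (T : Finset V) (hT : T.card = m + 1) {u : V} (hu : u ∈ T) (σ : V ≃ Fin n) :
    rkAux (T.image ⇑(PhiFun T hT σ)) (phiCard T hT _) ((PhiFun T hT σ) u)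
        (mem_image_of_mem' T _ hu) =
      finRotate (m + 1) (rkAux (T.image ⇑σ) (phiCard T hT σ) (σ u)
        (mem_image_of_mem' T σ hu)) := by
  have h1 : (PhiFun T hT σ) u = rotA (T.image ⇑σ) (phiCard T hT σ) (σ u) := rfl
  have hmem : rotA (T.image ⇑σ) (phiCard T hT σ) (σ u) ∈ T.image ⇑σ :=
    rotA_mem _ _ (mem_image_of_mem' T σ hu)
  rw [rkAux_congr (PhiFun_image T hT σ) (phiCard T hT _) (phiCard T hT σ) _ _ (h1 ▸ hmem)]
  exact rkAux_rotA _ _ (mem_image_of_mem' T σ hu) _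

end

section
variable {V : Type*} [DecidableEq V] {n m : ℕ}

/-- rank of `σ u` among the images of `T`. -/
def rkOf (T : Finset V) (hT : T.card = m + 1) {u : V} (hu : u ∈ T) (σ : V ≃ Fin n) :
    Fin (m + 1) :=
  rkAux (T.image ⇑σ) (phiCard T hT σ) (σ u) (mem_image_of_mem' T σ hu)

lemma rkOf_PhiFun (T : Finset V) (hT : T.card = m + 1) {u : V} (hu : u ∈ T) (σ : V ≃ Fin n) :
    rkOf T hT hu (PhiFun T hT σ) = finRotate (m + 1) (rkOf T hT hu σ) :=
  rk_PhiFun T hT hu σ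

lemma rkOf_iterate (T : Finset V) (hT : T.card = m + 1) {u : V} (hu : u ∈ T)
    (σ : V ≃ Fin n) (j : ℕ) :
    rkOf T hT hu ((PhiFun T hT)^[j] σ) = rkOf T hT hu σ + (j : Fin (m + 1)) := by
  induction j with
  | zero => simp
  | succ j ih =>
    rw [Function.iterate_succ_apply', rkOf_PhiFun, ih, finRotate_succ_apply]
    push_cast
    rw [add_assoc]

lemma sum_f_rkOf [Fintype V] (T : Finset V) (hT : T.card = m + 1) {u : V} (hu : u ∈ T)
    (f : Fin (m + 1) → ℝ) :
    ((m : ℝ) + 1) * ∑ σ : V ≃ Fin n, f (rkOf T hT hu σ) =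
      (Fintype.card (V ≃ Fin n) : ℝ) * ∑ k : Fin (m + 1), f k := by
  classical
  have hsum : ∀ j : ℕ,
      ∑ σ : V ≃ Fin n, f (rkOf T hT hu ((PhiFun T hT)^[j] σ)) =
        ∑ σ : V ≃ Fin n, f (rkOf T hT hu σ) := by
    intro j
    induction j with
    | zero => rfl
    | succ j ih =>
      calc ∑ σ : V ≃ Fin n, f (rkOf T hT hu ((PhiFun T hT)^[j+1] σ))
          = ∑ σ : V ≃ Fin n, f (rkOf T hT hu ((PhiFun T hT)^[j] (PhiEquiv T hT σ))) := by
            simp only [Function.iterate_succ_apply]; rfl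
        _ = ∑ σ : V ≃ Fin n, f (rkOf T hT hu ((PhiFun T hT)^[j] σ)) :=
            Equiv.sum_comp (PhiEquiv T hT) (fun σ => f (rkOf T hT hu ((PhiFun T hT)^[j] σ)))
        _ = ∑ σ : V ≃ Fin n, f (rkOf T hT hu σ) := ih
  calc ((m : ℝ) + 1) * ∑ σ : V ≃ Fin n, f (rkOf T hT hu σ)
      = ∑ j ∈ Finset.range (m + 1), ∑ σ : V ≃ Fin n, f (rkOf T hT hu ((PhiFun T hT)^[j] σ)) := by
        rw [Finset.sum_congr rfl fun j _ => hsum j, Finset.sum_const, Finset.card_range,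
          nsmul_eq_mul]
        push_cast
        ring
    _ = ∑ σ : V ≃ Fin n, ∑ j ∈ Finset.range (m + 1), f (rkOf T hT hu σ + (j : Fin (m + 1))) := by
        rw [Finset.sum_comm]
        exact Finset.sum_congr rfl fun σ _ => Finset.sum_congr rfl fun j _ => by
          rw [rkOf_iterate]
    _ = ∑ σ : V ≃ Fin n, ∑ k : Fin (m + 1), f k := by
        refine Finset.sum_congr rfl fun σ _ => ?_
        rw [← Fin.sum_univ_eq_sum_range (fun j : ℕ => f (rkOf T hT hu σ + (j : Fin (m + 1))))]
        rw [Fintype.sum_equiv (Equiv.addLeft (rkOf T hT hu σ))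
          (fun j => f (rkOf T hT hu σ + ((j : ℕ) : Fin (m + 1)))) f
          (fun j => by
            show f (rkOf T hT hu σ + ((j : ℕ) : Fin (m + 1))) = _
            rw [Fin.cast_val_eq_self]
            rfl)]
    _ = (Fintype.card (V ≃ Fin n) : ℝ) * ∑ k : Fin (m + 1), f k := by
        rw [Finset.sum_const, nsmul_eq_mul, Fintype.card]

end
lemma nat_sum_range_sub (N m : ℕ) :
    ∑ j ∈ Finset.range N, (j - m) = (N - m).choose 2 := by
  induction N with
  | zero => simp
  | succ N ih =>
    rw [Finset.sum_range_succ, ih]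
    rcases le_or_gt m N with h | h
    · rw [Nat.succ_sub h]
      have h2 : (N - m + 1).choose 2 = (N - m).choose 1 + (N - m).choose 2 :=
        Nat.choose_succ_succ (N - m) 1
      rw [h2, Nat.choose_one_right]
      omega
    · rw [Nat.sub_eq_zero_of_le h, Nat.sub_eq_zero_of_le (by omega)]
      simp [Nat.sub_eq_zero_of_le h.le]

/-- For a uniformly random linear ordering of the vertices (modelled as an
equivalence V ≃ Fin n), the expected value of
max{0, #(earlier neighbors of u) − κ(u)} equals (1/(d(u)+1))·C(d(u)−κ(u)+1, 2). -/
theorem expected_increase {V : Type*} [Fintype V] [DecidableEq V]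
    (G : SimpleGraph V) [DecidableRel G.Adj]
    (κ : V → ℤ) (hκ : ∀ u, 0 ≤ κ u ∧ κ u ≤ (G.degree u : ℤ)) (u : V) :
    (∑ σ : V ≃ Fin (Fintype.card V),
        ((max 0 ((((G.neighborFinset u).filter fun v => σ v < σ u).card : ℤ) - κ u) : ℤ) : ℝ))
      / (Nat.factorial (Fintype.card V)) =
    (1 / ((G.degree u : ℝ) + 1)) * ((((G.degree u : ℤ) - κ u + 1).toNat.choose 2 : ℝ)) := by
  classical
  set n := Fintype.card V with hn
  set d := G.degree u with hd
  set T : Finset V := insert u (G.neighborFinset u) with hTdef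
  have hu : u ∈ T := Finset.mem_insert_self _ _
  have hT : T.card = d + 1 := by
    rw [hTdef, Finset.card_insert_of_notMem (G.notMem_neighborFinset_self u),
      G.card_neighborFinset_eq_degree]
  set f : Fin (d + 1) → ℝ := fun k => ((max 0 (((k : ℕ) : ℤ) - κ u) : ℤ) : ℝ) with hf
  -- the number of earlier neighbors equals the rank of `σ u` in the image of `T`
  have hc : ∀ σ : V ≃ Fin n,
      ((G.neighborFinset u).filter fun v => σ v < σ u).card = ((rkOf T hT hu σ : Fin (d+1)) : ℕ) := by
    intro σ
    have himg : (T.image ⇑σ).filter (fun a => a < σ u) =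
        ((G.neighborFinset u).filter fun v => σ v < σ u).image ⇑σ := by
      rw [hTdef, Finset.image_insert, Finset.filter_insert, if_neg (lt_irrefl (σ u)),
        Finset.filter_image]
    have h2 := card_filter_lt_eq_rkAux (T.image ⇑σ) (phiCard T hT σ) (σ u)
      (mem_image_of_mem' T σ hu)
    rw [himg, Finset.card_image_of_injective _ σ.injective] at h2
    exact h2
  -- rewrite the sum
  have hrw : (∑ σ : V ≃ Fin n,
        ((max 0 ((((G.neighborFinset u).filter fun v => σ v < σ u).card : ℤ) - κ u) : ℤ) : ℝ))
      = ∑ σ : V ≃ Fin n, f (rkOf T hT hu σ) := by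
    refine Finset.sum_congr rfl fun σ _ => ?_
    rw [hc σ]
  -- the key symmetry identity
  have key := sum_f_rkOf (n := n) T hT hu f
  have hcard : Fintype.card (V ≃ Fin n) = n.factorial :=
    Fintype.card_equiv (Fintype.equivFin V)
  -- compute the sum of f over all ranks
  obtain ⟨hκ0, hκd⟩ := hκ u
  set m0 : ℕ := (κ u).toNat with hm0
  have hκu : κ u = (m0 : ℤ) := (Int.toNat_of_nonneg hκ0).symm
  have hm0d : m0 ≤ d := by omega
  have hF : ∑ k : Fin (d + 1), f k = ((d + 1 - m0).choose 2 : ℝ) := by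
    have : ∀ j ∈ Finset.range (d + 1),
        ((max 0 ((j : ℤ) - κ u) : ℤ) : ℝ) = ((j - m0 : ℕ) : ℝ) := by
      intro j _
      rw [hκu]
      rcases le_total m0 j with h | h
      · rw [max_eq_right (by push_cast; omega), ← Nat.cast_sub h]
        push_cast
        ring
      · rw [max_eq_left (by push_cast; omega), Nat.sub_eq_zero_of_le h]
        simp
    rw [Fin.sum_univ_eq_sum_range (fun k : ℕ => ((max 0 ((k : ℤ) - κ u) : ℤ) : ℝ)) (d + 1),
      Finset.sum_congr rfl this, ← Nat.cast_sum, nat_sum_range_sub]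
  have htoNat : ((d : ℤ) - κ u + 1).toNat = d + 1 - m0 := by
    rw [hκu]; omega
  -- final arithmetic
  rw [hrw, htoNat]
  rw [hcard, hF] at key
  have hd1 : ((d : ℝ) + 1) ≠ 0 := by positivity
  have hfac : ((n.factorial : ℕ) : ℝ) ≠ 0 := by positivity
  field_simp
  linarith [key]
end

section
/- Let G be a finite simple graph, c: V(G) → ℝ_{>0}, and κ: V(G) → ℤ with 0 ≤ κ(u) ≤ d(u) for all vertices u. Define β(G,c,κ) as the minimum of ∑_{u} c(u)ι(u) over all functions ι: V(G) → ℤ_{≥0} such that V(G) is (κ+ι)-degenerate. Then β(G,c,κ) ≤ ∑_{u∈V(G)} c(u)(d(u)−κ(u))(d(u)−κ(u)+1) / (2(d(u)+1)). -/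
variable {V : Type*} [Fintype V] [DecidableEq V]

/-- Minimum total c-weighted increase ι making the whole vertex set (κ+ι)-degenerate. -/
noncomputable def betaW (G : SimpleGraph V) [DecidableRel G.Adj] (c : V → ℝ) (κ : V → ℤ) : ℝ :=
  sInf {x : ℝ | ∃ ι : V → ℤ, (∀ u, 0 ≤ ι u) ∧
    IsDegen G (fun u => κ u + ι u) Finset.univ ∧ x = ∑ u : V, c u * (ι u : ℝ)}


open Finset

set_option linter.unusedSectionVars false

namespace WPI

lemma card_filter_lt_orderIsoOfFin {α : Type*} [LinearOrder α] [DecidableEq α]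
    (T : Finset α) {m : ℕ} (h : T.card = m) (j : Fin m) :
    (T.filter (fun x => x < (T.orderIsoOfFin h j : α))).card = j := by
  have himg : T.filter (fun x => x < (T.orderIsoOfFin h j : α))
      = (Finset.univ.filter (fun i : Fin m => i < j)).image
          (fun i => (T.orderIsoOfFin h i : α)) := by
    ext x
    simp only [mem_filter, mem_image, mem_univ, true_and]
    constructor
    · rintro ⟨hxT, hxlt⟩
      refine ⟨(T.orderIsoOfFin h).symm ⟨x, hxT⟩, ?_, by simp⟩
      rw [← OrderIso.lt_iff_lt (T.orderIsoOfFin h)]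
      simpa [← Subtype.coe_lt_coe] using hxlt
    · rintro ⟨i, hij, rfl⟩
      refine ⟨(T.orderIsoOfFin h i).2, ?_⟩
      have := (T.orderIsoOfFin h).lt_iff_lt.mpr hij
      exact Subtype.coe_lt_coe.mpr this
  rw [himg, Finset.card_image_of_injective _
    (fun i i' hii' => (T.orderIsoOfFin h).injective (Subtype.ext hii'))]
  rw [← Fin.card_Iio j]; congr 1; ext i; simp [Finset.mem_Iio]

variable {V : Type*} [Fintype V] [DecidableEq V] {n : ℕ}

/-- rank of `x` within `S` w.r.t. the ordering `σ`. -/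
def rkS (S : Finset V) (σ : Fin n ≃ V) (x : V) : ℕ :=
  (S.filter (fun y => σ.symm y < σ.symm x)).card

lemma rkS_eq_pos (S : Finset V) (σ : Fin n ≃ V) (x : V) :
    rkS S σ x = ((S.image σ.symm).filter (fun p => p < σ.symm x)).card := by
  rw [rkS, Finset.filter_image, Finset.card_image_of_injective _ σ.symm.injective]

lemma rkS_lt_card {S : Finset V} (σ : Fin n ≃ V) {x : V} (hx : x ∈ S) :
    rkS S σ x < S.card := by
  apply Finset.card_lt_card
  refine ⟨Finset.filter_subset _ _, fun hsub => ?_⟩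
  have := hsub hx
  simp at this

lemma rkS_strictMono {S : Finset V} (σ : Fin n ≃ V) {x y : V} (hx : x ∈ S) (hy : y ∈ S)
    (h : σ.symm x < σ.symm y) : rkS S σ x < rkS S σ y := by
  apply Finset.card_lt_card
  constructor
  · exact Finset.filter_subset_filter _ (le_refl S) |>.trans (by
      intro z hz
      simp only [mem_filter] at *
      exact ⟨hz.1, hz.2.trans h⟩)
  · intro hsub
    have hxmem : x ∈ S.filter (fun y' => σ.symm y' < σ.symm y) := by
      simp [hx, h]
    have := hsub hxmem
    simp at this

lemma rkS_injOn {S : Finset V} (σ : Fin n ≃ V) {x y : V} (hx : x ∈ S) (hy : y ∈ S)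
    (hxy : rkS S σ x = rkS S σ y) : x = y := by
  rcases lt_trichotomy (σ.symm x) (σ.symm y) with h | h | h
  · exact absurd hxy (by have := rkS_strictMono σ hx hy h; omega)
  · exact σ.symm.injective h
  · exact absurd hxy (by have := rkS_strictMono σ hy hx h; omega)

section wEl
variable (S : Finset V) (σ : Fin n ≃ V)

lemma card_image_symm : (S.image σ.symm).card = S.card :=
  Finset.card_image_of_injective _ σ.symm.injective

/-- the element of `S` having rank `j` under `σ`. -/
noncomputable def wEl (j : ℕ) (hj : j < S.card) : V :=
  σ ((S.image σ.symm).orderIsoOfFin (card_image_symm S σ) ⟨j, hj⟩)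

lemma wEl_mem (j : ℕ) (hj : j < S.card) : wEl S σ j hj ∈ S := by
  have h2 := ((S.image σ.symm).orderIsoOfFin (card_image_symm S σ) ⟨j, hj⟩).2
  simp only [Finset.mem_image] at h2
  obtain ⟨y, hy, hyy⟩ := h2
  have : wEl S σ j hj = y := by
    rw [wEl, ← hyy, Equiv.apply_symm_apply]
  rwa [this]

lemma rkS_wEl (j : ℕ) (hj : j < S.card) : rkS S σ (wEl S σ j hj) = j := by
  rw [rkS_eq_pos, wEl, Equiv.symm_apply_apply]
  exact card_filter_lt_orderIsoOfFin _ _ _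

lemma eq_wEl {x : V} {j : ℕ} (hj : j < S.card) (hx : x ∈ S) (hr : rkS S σ x = j) :
    x = wEl S σ j hj :=
  rkS_injOn σ hx (wEl_mem S σ j hj) (by rw [hr, rkS_wEl])

end wEl

section swap
variable (S : Finset V) (u : V) (σ : Fin n ≃ V)

/-- move `u` to the slot of rank `j` by swapping with the rank-`j` element. -/
noncomputable def swapTo (j : ℕ) (hj : j < S.card) : Fin n ≃ V :=
  (Equiv.swap (σ.symm u) (σ.symm (wEl S σ j hj))).trans σ

variable {j : ℕ} (hj : j < S.card)

lemma swapTo_symm_apply (y : V) :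
    (swapTo S u σ j hj).symm y
      = Equiv.swap (σ.symm u) (σ.symm (wEl S σ j hj)) (σ.symm y) := by
  simp [swapTo, Equiv.symm_trans_apply]

lemma image_swap_self {P : Finset (Fin n)} {a b : Fin n} (ha : a ∈ P) (hb : b ∈ P) :
    P.image (Equiv.swap a b) = P := by
  apply Finset.eq_of_subset_of_card_le
  · intro p hp
    simp only [Finset.mem_image] at hp
    obtain ⟨q, hq, rfl⟩ := hp
    rcases eq_or_ne q a with rfl | hqa
    · simpa [Equiv.swap_apply_left] using hb
    rcases eq_or_ne q b with rfl | hqb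
    · simpa [Equiv.swap_apply_right] using ha
    · rwa [Equiv.swap_apply_of_ne_of_ne hqa hqb]
  · rw [Finset.card_image_of_injective _ (Equiv.swap a b).injective]

lemma swapTo_image (hu : u ∈ S) :
    S.image (swapTo S u σ j hj).symm = S.image σ.symm := by
  have : S.image (swapTo S u σ j hj).symm
      = (S.image σ.symm).image (Equiv.swap (σ.symm u) (σ.symm (wEl S σ j hj))) := by
    rw [Finset.image_image]
    apply Finset.image_congr
    intro y _
    exact swapTo_symm_apply S u σ hj y
  rw [this]
  exact image_swap_self (Finset.mem_image_of_mem _ hu)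
    (Finset.mem_image_of_mem _ (wEl_mem S σ j hj))

lemma rkS_swapTo_u (hu : u ∈ S) : rkS S (swapTo S u σ j hj) u = j := by
  rw [rkS_eq_pos, swapTo_image S u σ hj hu, swapTo_symm_apply,
    Equiv.swap_apply_left]
  rw [← rkS_eq_pos, rkS_wEl]

lemma rkS_swapTo_wEl (hu : u ∈ S) :
    rkS S (swapTo S u σ j hj) (wEl S σ j hj) = rkS S σ u := by
  rw [rkS_eq_pos, swapTo_image S u σ hj hu, swapTo_symm_apply,
    Equiv.swap_apply_right, ← rkS_eq_pos]

lemma swapTo_swapTo {j' : ℕ} (hj' : j' < S.card) (hu : u ∈ S)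
    (hσ : rkS S σ u = j') :
    swapTo S u (swapTo S u σ j hj) j' hj' = σ := by
  set σ' := swapTo S u σ j hj with hσ'
  have hw : wEl S σ' j' hj' = wEl S σ j hj := by
    refine (eq_wEl S σ' hj' (wEl_mem S σ j hj) ?_).symm
    rw [rkS_swapTo_wEl S u σ hj hu, hσ]
  rw [swapTo, hw]
  have h1 : σ'.symm u = σ.symm (wEl S σ j hj) := by
    rw [hσ', swapTo_symm_apply, Equiv.swap_apply_left]
  have h2 : σ'.symm (wEl S σ j hj) = σ.symm u := by
    rw [hσ', swapTo_symm_apply, Equiv.swap_apply_right]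
  rw [h1, h2]
  ext x
  simp [hσ', swapTo, Equiv.swap_comm (σ.symm (wEl S σ j hj)) (σ.symm u)]

end swap

section counting
variable [Fintype V] {S : Finset V} {u : V}

lemma class_card_eq (hu : u ∈ S) {j j' : ℕ} (hj : j < S.card) (hj' : j' < S.card) :
    (Finset.univ.filter (fun σ : Fin n ≃ V => rkS S σ u = j)).card
      = (Finset.univ.filter (fun σ : Fin n ≃ V => rkS S σ u = j')).card := by
  apply Finset.card_bij' (fun σ _ => swapTo S u σ j' hj') (fun σ _ => swapTo S u σ j hj)
  · intro σ hσ
    simp only [Finset.mem_filter, Finset.mem_univ, true_and] at *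
    exact rkS_swapTo_u S u σ hj' hu
  · intro σ hσ
    simp only [Finset.mem_filter, Finset.mem_univ, true_and] at *
    exact rkS_swapTo_u S u σ hj hu
  · intro σ hσ
    simp only [Finset.mem_filter, Finset.mem_univ, true_and] at hσ
    exact swapTo_swapTo S u σ hj' hj hu hσ
  · intro σ hσ
    simp only [Finset.mem_filter, Finset.mem_univ, true_and] at hσ
    exact swapTo_swapTo S u σ hj hj' hu hσ

lemma card_class_mul (hu : u ∈ S) {j : ℕ} (hj : j < S.card) :
    S.card * (Finset.univ.filter (fun σ : Fin n ≃ V => rkS S σ u = j)).card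
      = Fintype.card (Fin n ≃ V) := by
  have h1 : (Finset.univ : Finset (Fin n ≃ V)).card
      = ∑ t ∈ Finset.range S.card,
          (Finset.univ.filter (fun σ : Fin n ≃ V => rkS S σ u = t)).card :=
    Finset.card_eq_sum_card_fiberwise
      (fun σ _ => Finset.mem_range.mpr (rkS_lt_card σ hu))
  have h2 : ∀ t ∈ Finset.range S.card,
      (Finset.univ.filter (fun σ : Fin n ≃ V => rkS S σ u = t)).card
        = (Finset.univ.filter (fun σ : Fin n ≃ V => rkS S σ u = j)).card := by
    intro t ht
    exact class_card_eq hu (Finset.mem_range.mp ht) hj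
  rw [Fintype.card, h1, Finset.sum_congr rfl h2, Finset.sum_const, Finset.card_range,
    smul_eq_mul]

end counting

section expectation

lemma sum_sub_range (m k : ℕ) :
    ∑ t ∈ Finset.range m, (t - k) = ∑ i ∈ Finset.range (m - k), i := by
  induction m with
  | zero => simp
  | succ m ih =>
    rw [Finset.sum_range_succ, ih]
    rcases le_or_gt k m with h | h
    · have hm : m + 1 - k = (m - k) + 1 := by omega
      rw [hm, Finset.sum_range_succ]
    · have h1 : m + 1 - k = 0 := by omega
      have h2 : m - k = 0 := by omega
      have h3 : m - k = 0 := by omega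
      simp [h1, h2, h3, Nat.sub_eq_zero_of_le h.le]

lemma two_mul_sum_sub (d k : ℕ) :
    2 * (∑ t ∈ Finset.range (d+1), (t - k)) = (d - k) * ((d - k) + 1) := by
  rw [sum_sub_range, mul_comm, Finset.sum_range_id_mul_two]
  rcases le_or_gt k d with h | h
  · have h1 : d + 1 - k = (d - k) + 1 := by omega
    rw [h1]; simp [Nat.add_sub_cancel]; ring
  · have h1 : d + 1 - k = 0 ∨ d + 1 - k = 1 := by omega
    have h2 : d - k = 0 := by omega
    rcases h1 with h1 | h1 <;> simp [h1, h2]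

lemma max_zero_cast (t k : ℕ) : (max 0 ((t : ℤ) - (k : ℤ))) = ((t - k : ℕ) : ℤ) := by
  omega

variable [Fintype V]

/-- number of neighbors of `u` coming before `u` in the ordering `σ`. -/
def eN (G : SimpleGraph V) [DecidableRel G.Adj] (u : V) (σ : Fin n ≃ V) : ℕ :=
  ((G.neighborFinset u).filter (fun v => σ.symm v < σ.symm u)).card

lemma eN_eq_rkS (G : SimpleGraph V) [DecidableRel G.Adj] (u : V) (σ : Fin n ≃ V) :
    eN G u σ = rkS (insert u (G.neighborFinset u)) σ u := by
  rw [rkS, Finset.filter_insert, if_neg (by simp)]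
  rfl

lemma sum_payoff (G : SimpleGraph V) [DecidableRel G.Adj] (u : V) (κu : ℤ)
    (h0 : 0 ≤ κu) (h1 : κu ≤ (G.degree u : ℤ)) :
    ∑ σ : Fin n ≃ V, ((max 0 ((eN G u σ : ℤ) - κu) : ℤ) : ℝ)
      = (Fintype.card (Fin n ≃ V) : ℝ) *
        ((((G.degree u : ℝ) - κu) * ((G.degree u : ℝ) - κu + 1)) /
          (2 * ((G.degree u : ℝ) + 1))) := by
  classical
  set d := G.degree u with hd
  set S : Finset V := insert u (G.neighborFinset u) with hSdef
  have huS : u ∈ S := Finset.mem_insert_self _ _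
  have hS : S.card = d + 1 := by
    rw [hSdef, Finset.card_insert_of_notMem (by simp), SimpleGraph.card_neighborFinset_eq_degree]
  set k : ℕ := κu.toNat with hk
  have hkz : (k : ℤ) = κu := Int.toNat_of_nonneg h0
  have hkd : k ≤ d := by omega
  set f : ℕ → ℝ := fun t => ((t - k : ℕ) : ℝ) with hf
  -- replace payoff by f (rkS S σ u)
  have hrepl : ∀ σ : Fin n ≃ V,
      ((max 0 ((eN G u σ : ℤ) - κu) : ℤ) : ℝ) = f (rkS S σ u) := by
    intro σ
    rw [eN_eq_rkS, hf]
    rw [← hSdef, ← hkz, max_zero_cast (rkS S σ u) k]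
    push_cast
    simp
  rw [Finset.sum_congr rfl (fun σ _ => hrepl σ)]
  -- fiberwise
  have hfib : ∑ σ : Fin n ≃ V, f (rkS S σ u)
      = ∑ t ∈ Finset.range (d+1),
          ((Finset.univ.filter (fun σ : Fin n ≃ V => rkS S σ u = t)).card : ℝ) * f t := by
    rw [← Finset.sum_fiberwise_of_maps_to (g := fun σ : Fin n ≃ V => rkS S σ u) (t := Finset.range (d+1))
      (fun σ _ => Finset.mem_range.mpr (by rw [← hS]; exact rkS_lt_card σ huS))
      (fun σ => f (rkS S σ u))]
    refine Finset.sum_congr rfl (fun t _ => ?_)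
    rw [Finset.sum_congr rfl (fun σ hσ => by
      rw [(Finset.mem_filter.mp hσ).2]), Finset.sum_const, nsmul_eq_mul]
  rw [hfib]
  set C : ℕ := (Finset.univ.filter (fun σ : Fin n ≃ V => rkS S σ u = 0)).card with hC
  have hCt : ∀ t ∈ Finset.range (d+1),
      ((Finset.univ.filter (fun σ : Fin n ≃ V => rkS S σ u = t)).card : ℝ) * f t
        = (C : ℝ) * f t := by
    intro t ht
    rw [hC]
    congr 2
    exact class_card_eq huS (by rw [hS]; exact Finset.mem_range.mp ht) (by omega)
  rw [Finset.sum_congr rfl hCt, ← Finset.mul_sum]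
  have hNC : ((d : ℕ) + 1) * C = Fintype.card (Fin n ≃ V) := by
    have := card_class_mul (V := V) (n := n) huS (j := 0) (by omega)
    rwa [hS] at this
  have hsumf : ∑ t ∈ Finset.range (d+1), f t
      = ((∑ t ∈ Finset.range (d+1), (t - k) : ℕ) : ℝ) := by
    rw [hf]; exact (Nat.cast_sum _ _).symm
  have h2W : (2 : ℝ) * ((∑ t ∈ Finset.range (d+1), (t - k) : ℕ) : ℝ)
      = ((d - k : ℕ) : ℝ) * (((d - k : ℕ) : ℝ) + 1) := by
    have := two_mul_sum_sub d k
    exact_mod_cast congrArg (Nat.cast : ℕ → ℝ) this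
  have hdk : ((d - k : ℕ) : ℝ) = (d : ℝ) - κu := by
    rw [← hkz]; push_cast [hkd]; ring
  have hNcast : (Fintype.card (Fin n ≃ V) : ℝ) = ((d : ℝ) + 1) * C := by
    rw [← hNC]; push_cast; ring
  rw [hsumf, hNcast, ← hdk, ← h2W]
  have hdpos : ((d : ℝ) + 1) ≠ 0 := by positivity
  field_simp

end expectation

section assemble
variable [Fintype V]

lemma mem_take_ofFn (σ : Fin n ≃ V) (t : ℕ) (v : V) :
    v ∈ (List.ofFn σ).take t ↔ (σ.symm v : ℕ) < t := by
  rw [List.mem_take_iff_getElem]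
  constructor
  · rintro ⟨i, hi, hv⟩
    rw [List.getElem_ofFn] at hv
    have : σ.symm v = ⟨i, by simpa [List.length_ofFn] using (lt_of_lt_of_le hi inf_le_right)⟩ := by
      rw [← hv, Equiv.symm_apply_apply]
    rw [this]
    exact lt_of_lt_of_le hi inf_le_left
  · intro h
    refine ⟨(σ.symm v : ℕ), ?_, ?_⟩
    · simp only [List.length_ofFn, lt_inf_iff]
      exact ⟨h, (σ.symm v).2⟩
    · rw [List.getElem_ofFn]
      simp
end assemble

end WPI

/-- Theorem 1 of the paper: weighted partial-incentives bound. -/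
theorem weighted_partial_incentives (G : SimpleGraph V) [DecidableRel G.Adj]
    (c : V → ℝ) (hc : ∀ u, 0 < c u)
    (κ : V → ℤ) (hκ : ∀ u, 0 ≤ κ u ∧ κ u ≤ (G.degree u : ℤ)) :
    betaW G c κ ≤ ∑ u : V,
      c u * (((G.degree u : ℝ) - κ u) * ((G.degree u : ℝ) - κ u + 1)) / (2 * (G.degree u + 1)) := by
  classical
  set n := Fintype.card V with hn
  set B : V → ℝ := fun u =>
    c u * (((G.degree u : ℝ) - κ u) * ((G.degree u : ℝ) - κ u + 1)) / (2 * (G.degree u + 1))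
    with hB
  have hne : Nonempty (Fin n ≃ V) := ⟨(Fintype.equivFin V).symm⟩
  set N := Fintype.card (Fin n ≃ V) with hN
  set f : (Fin n ≃ V) → ℝ := fun σ =>
    ∑ u : V, c u * ((max 0 ((WPI.eN G u σ : ℤ) - κ u) : ℤ) : ℝ) with hf
  have per_u : ∀ u : V, ∑ σ : Fin n ≃ V, c u * ((max 0 ((WPI.eN G u σ : ℤ) - κ u) : ℤ) : ℝ)
      = (N : ℝ) * B u := by
    intro u
    rw [← Finset.mul_sum, WPI.sum_payoff G u (κ u) (hκ u).1 (hκ u).2, hB]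
    ring
  have hsum : ∑ σ : Fin n ≃ V, f σ = ∑ σ : Fin n ≃ V, ∑ u : V, B u := by
    rw [hf, Finset.sum_comm, Finset.sum_congr rfl (fun u _ => per_u u)]
    rw [Finset.sum_const, Finset.card_univ, ← hN, nsmul_eq_mul, Finset.mul_sum]
  obtain ⟨σ, -, hσ⟩ := Finset.exists_le_of_sum_le (Finset.univ_nonempty (α := Fin n ≃ V))
    (le_of_eq hsum)
  -- the incentive function
  set ι : V → ℤ := fun u => max 0 ((WPI.eN G u σ : ℤ) - κ u) with hι
  have hι0 : ∀ u, 0 ≤ ι u := fun u => le_max_left _ _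
  -- degeneracy witness
  have hdeg : IsDegen G (fun u => κ u + ι u) Finset.univ := by
    refine ⟨List.ofFn σ, ?_, List.nodup_ofFn.mpr σ.injective, ?_⟩
    · ext v
      simp only [List.mem_toFinset, List.mem_ofFn, Finset.mem_univ, iff_true]
      exact ⟨σ.symm v, by simp⟩
    · intro i
      set i' : Fin n := Fin.cast (List.length_ofFn (f := σ)) i with hi'
      have hget : (List.ofFn σ).get i = σ i' := List.get_ofFn σ i
      have hset : (((List.ofFn σ).take i).toFinset).filter
            (fun v => G.Adj ((List.ofFn σ).get i) v)
          = (G.neighborFinset (σ i')).filter (fun v => σ.symm v < σ.symm (σ i')) := by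
        ext v
        simp only [Finset.mem_filter, List.mem_toFinset, WPI.mem_take_ofFn,
          SimpleGraph.mem_neighborFinset, hget, Equiv.symm_apply_apply, Fin.lt_def]
        have : ((i : ℕ) : ℕ) = (i' : ℕ) := rfl
        rw [this]
        tauto
      rw [hset, hget]
      have hcard : ((G.neighborFinset (σ i')).filter
          (fun v => σ.symm v < σ.symm (σ i'))).card = WPI.eN G (σ i') σ := rfl
      rw [hcard]
      show (WPI.eN G (σ i') σ : ℤ) ≤ κ (σ i') + ι (σ i')
      have hιe : ι (σ i') = max 0 ((WPI.eN G (σ i') σ : ℤ) - κ (σ i')) := rfl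
      rw [hιe]
      have hmax := le_max_right (0 : ℤ) ((WPI.eN G (σ i') σ : ℤ) - κ (σ i'))
      linarith
  have hmem : f σ ∈ {x : ℝ | ∃ ι : V → ℤ, (∀ u, 0 ≤ ι u) ∧
      IsDegen G (fun u => κ u + ι u) Finset.univ ∧ x = ∑ u : V, c u * (ι u : ℝ)} :=
    ⟨ι, hι0, hdeg, rfl⟩
  have hbdd : BddBelow {x : ℝ | ∃ ι : V → ℤ, (∀ u, 0 ≤ ι u) ∧
      IsDegen G (fun u => κ u + ι u) Finset.univ ∧ x = ∑ u : V, c u * (ι u : ℝ)} := by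
    refine ⟨0, fun x hx => ?_⟩
    obtain ⟨ι', h0, -, rfl⟩ := hx
    exact Finset.sum_nonneg (fun u _ => mul_nonneg (hc u).le (by exact_mod_cast h0 u))
  calc betaW G c κ ≤ f σ := csInf_le hbdd hmem
    _ ≤ ∑ u : V, B u := hσ
end

section
/- Let G be a finite simple graph and κ, τ: V(G) → ℤ with τ(u) + κ(u) = d(u) and 0 ≤ κ(u) ≤ d(u) for all vertices u. Then a set I ⊆ V(G) is κ-degenerate in G if and only if V(G) \ I is a dynamic monopoly in G with threshold function τ. -/
variable {V : Type*} [Fintype V] [DecidableEq V]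

/-- One activation step: add every vertex having at least τ(u) active neighbors. -/
def dynStep (G : SimpleGraph V) [DecidableRel G.Adj] (τ : V → ℤ) (D : Finset V) : Finset V :=
  D ∪ Finset.univ.filter fun u => τ u ≤ ((G.neighborFinset u ∩ D).card : ℤ)

/-- D is a dynamic monopoly (target set) for threshold function τ if iterating the
activation step starting from D eventually activates all vertices. -/
def IsDynMonopoly (G : SimpleGraph V) [DecidableRel G.Adj] (τ : V → ℤ) (D : Finset V) : Prop :=
  ∃ k : ℕ, (dynStep G τ)^[k] D = Finset.univ

lemma subset_dynStep (G : SimpleGraph V) [DecidableRel G.Adj] (τ : V → ℤ) (D : Finset V) :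
    D ⊆ dynStep G τ D := Finset.subset_union_left

lemma dynStep_mono (G : SimpleGraph V) [DecidableRel G.Adj] (τ : V → ℤ) {D E : Finset V}
    (h : D ⊆ E) : dynStep G τ D ⊆ dynStep G τ E := by
  unfold dynStep
  apply Finset.union_subset (h.trans Finset.subset_union_left)
  intro u hu
  rw [Finset.mem_filter] at hu
  refine Finset.mem_union_right _ (Finset.mem_filter.2 ⟨Finset.mem_univ u, ?_⟩)
  have hc : (G.neighborFinset u ∩ D).card ≤ (G.neighborFinset u ∩ E).card :=
    Finset.card_le_card (Finset.inter_subset_inter Finset.Subset.rfl h)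
  exact hu.2.trans (by exact_mod_cast hc)

lemma filter_adj_eq (G : SimpleGraph V) [DecidableRel G.Adj] (u : V) (s : Finset V) :
    s.filter (fun v => G.Adj u v) = s ∩ G.neighborFinset u := by
  ext v; simp [SimpleGraph.mem_neighborFinset, and_comm]

lemma card_nbr_sdiff (G : SimpleGraph V) [DecidableRel G.Adj] (u : V) (S : Finset V) :
    ((G.neighborFinset u \ S).card : ℤ)
      = (G.degree u : ℤ) - ((G.neighborFinset u ∩ S).card : ℤ) := by
  have h : G.neighborFinset u ∩ S ⊆ G.neighborFinset u := Finset.inter_subset_left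
  have h2 : G.neighborFinset u \ S = G.neighborFinset u \ (G.neighborFinset u ∩ S) := by
    rw [Finset.sdiff_inter_self_left]
  rw [h2, Finset.card_sdiff_of_subset h, SimpleGraph.degree]
  push_cast [Nat.cast_sub (Finset.card_le_card h)]
  ring

lemma take_succ_eq (l : List V) (m : ℕ) (hm : m < l.length) :
    l.take (m+1) = l.take m ++ [l.get ⟨m, hm⟩] := by
  rw [← List.concat_eq_append]; exact (List.take_concat_get hm).symm

lemma step_take (G : SimpleGraph V) [DecidableRel G.Adj] (κ τ : V → ℤ)
    (hτκ : ∀ u, τ u + κ u = (G.degree u : ℤ)) (l : List V) (hl : DegenList G κ l)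
    (m : ℕ) (hm : m < l.length) :
    Finset.univ \ (l.take m).toFinset ⊆ dynStep G τ (Finset.univ \ (l.take (m+1)).toFinset) := by
  intro v hv
  rw [Finset.mem_sdiff] at hv
  by_cases h : v ∈ (l.take (m+1)).toFinset
  · -- v is the m-th vertex of l
    have hv' : v = l.get ⟨m, hm⟩ := by
      rw [List.mem_toFinset, take_succ_eq l m hm, List.mem_append] at h
      rcases h with h | h
      · exact absurd (List.mem_toFinset.2 h) hv.2
      · simpa using h
    refine Finset.mem_union_right _ (Finset.mem_filter.2 ⟨Finset.mem_univ v, ?_⟩)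
    have key : G.neighborFinset v ∩ (Finset.univ \ (l.take (m+1)).toFinset)
        = G.neighborFinset v \ (l.take m).toFinset := by
      rw [take_succ_eq l m hm]
      ext w
      simp only [Finset.mem_inter, Finset.mem_sdiff, Finset.mem_univ, true_and,
        List.toFinset_append, Finset.mem_union, List.mem_toFinset,
        SimpleGraph.mem_neighborFinset, List.mem_singleton]
      constructor
      · rintro ⟨hadj, hw⟩
        exact ⟨hadj, fun hww => hw (Or.inl hww)⟩
      · rintro ⟨hadj, hw⟩
        refine ⟨hadj, ?_⟩
        rintro (hw1 | hw2)
        · exact hw hw1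
        · rw [hw2, ← hv'] at hadj; exact G.irrefl hadj
    rw [key, card_nbr_sdiff]
    have hκle : (((l.take m).toFinset ∩ G.neighborFinset v).card : ℤ) ≤ κ v := by
      have h2 := hl.2 ⟨m, hm⟩
      rw [filter_adj_eq] at h2
      rw [hv']
      exact h2
    rw [Finset.inter_comm] at hκle
    have h3 := hτκ v
    linarith
  · exact Finset.mem_union_left _ (Finset.mem_sdiff.2 ⟨Finset.mem_univ v, h⟩)

lemma forward_iter (G : SimpleGraph V) [DecidableRel G.Adj] (κ τ : V → ℤ)
    (hτκ : ∀ u, τ u + κ u = (G.degree u : ℤ)) (l : List V) (hl : DegenList G κ l) :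
    ∀ j, j ≤ l.length →
      Finset.univ \ (l.take (l.length - j)).toFinset
        ⊆ (dynStep G τ)^[j] (Finset.univ \ l.toFinset) := by
  intro j
  induction j with
  | zero =>
    intro _
    simp
  | succ j ih =>
    intro hj
    have hj' : j ≤ l.length := le_of_lt (Nat.lt_of_lt_of_le (Nat.lt_succ_self j) hj)
    have hm : l.length - (j+1) < l.length := by omega
    have hstep := step_take G κ τ hτκ l hl (l.length - (j+1)) hm
    have heq : l.length - (j+1) + 1 = l.length - j := by omega
    rw [heq] at hstep
    rw [Function.iterate_succ_apply']
    exact hstep.trans (dynStep_mono G τ (ih hj'))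

lemma backward_main (G : SimpleGraph V) [DecidableRel G.Adj] (κ τ : V → ℤ)
    (hτκ : ∀ u, τ u + κ u = (G.degree u : ℤ)) :
    ∀ k : ℕ, ∀ I : Finset V,
      (dynStep G τ)^[k] (Finset.univ \ I) = Finset.univ → IsDegen G κ I := by
  intro k
  induction k with
  | zero =>
    intro I h
    simp only [Function.iterate_zero, id_eq] at h
    have hI : I = ∅ := by
      apply Finset.eq_empty_of_forall_notMem
      intro a ha
      have h2 : a ∈ Finset.univ \ I := by rw [h]; exact Finset.mem_univ a
      exact (Finset.mem_sdiff.1 h2).2 ha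
    exact ⟨[], by simp [hI], List.nodup_nil, fun i => absurd i.2 (by simp)⟩
  | succ k ih =>
    intro I h
    rw [Function.iterate_succ_apply] at h
    set D := Finset.univ \ I with hD
    set F := Finset.univ.filter (fun u => τ u ≤ ((G.neighborFinset u ∩ D).card : ℤ)) with hF
    have hstep : dynStep G τ D = Finset.univ \ (I \ F) := by
      rw [hD]
      ext v
      simp only [dynStep, Finset.mem_union, Finset.mem_sdiff, Finset.mem_univ, true_and, hF,
        Finset.mem_filter]
      tauto
    rw [hstep] at h
    obtain ⟨l', hl'I, hl'nd, hl'deg⟩ := ih (I \ F) h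
    refine ⟨l' ++ (I ∩ F).toList, ?_, ?_, ?_⟩
    · rw [List.toFinset_append, hl'I, Finset.toList_toFinset]
      ext v
      simp only [Finset.mem_union, Finset.mem_sdiff, Finset.mem_inter]
      tauto
    · refine List.Nodup.append hl'nd (Finset.nodup_toList _) ?_
      intro a ha ha2
      have h1 : a ∈ I \ F := hl'I ▸ List.mem_toFinset.2 ha
      have h2 : a ∈ I ∩ F := (Finset.mem_toList).1 ha2
      exact (Finset.mem_sdiff.1 h1).2 (Finset.mem_inter.1 h2).2
    · intro i
      by_cases hi : (i : ℕ) < l'.length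
      · -- vertex from l'
        have hget : (l' ++ (I ∩ F).toList).get i = l'.get ⟨i, hi⟩ := by
          simp [List.getElem_append_left hi]
        have htake : (l' ++ (I ∩ F).toList).take i = l'.take i :=
          List.take_append_of_le_length (le_of_lt hi)
        rw [hget, htake]
        exact hl'deg ⟨i, hi⟩
      · -- newly activated vertex
        have hle : l'.length ≤ (i : ℕ) := le_of_not_gt hi
        have hilen : (i : ℕ) - l'.length < (I ∩ F).toList.length := by
          have h2 : (i : ℕ) < l'.length + (I ∩ F).toList.length := by
            simpa [List.length_append] using i.2
          omega
        have hget : (l' ++ (I ∩ F).toList).get i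
            = (I ∩ F).toList.get ⟨(i : ℕ) - l'.length, hilen⟩ := by
          simp [List.getElem_append_right hle]
        set u := (l' ++ (I ∩ F).toList).get i with hu
        have humem : u ∈ I ∩ F := by
          rw [← Finset.mem_toList, hget]
          exact List.get_mem _ _
        have huF : τ u ≤ ((G.neighborFinset u ∩ D).card : ℤ) := by
          have := (Finset.mem_inter.1 humem).2
          rw [hF, Finset.mem_filter] at this
          exact this.2
        have hsub : (((l' ++ (I ∩ F).toList).take i).toFinset.filter (fun v => G.Adj u v))
            ⊆ G.neighborFinset u \ D := by
          intro w hw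
          rw [Finset.mem_filter, List.mem_toFinset] at hw
          refine Finset.mem_sdiff.2 ⟨(SimpleGraph.mem_neighborFinset G u w).2 hw.2, ?_⟩
          have hwl : w ∈ l' ++ (I ∩ F).toList := List.take_subset _ _ hw.1
          have hwI : w ∈ I := by
            rw [List.mem_append] at hwl
            rcases hwl with h1 | h1
            · exact (Finset.mem_sdiff.1 (hl'I ▸ List.mem_toFinset.2 h1)).1
            · exact (Finset.mem_inter.1 (Finset.mem_toList.1 h1)).1
          rw [hD, Finset.mem_sdiff]
          push_neg
          intro _
          exact hwI
        have hcard : ((((l' ++ (I ∩ F).toList).take i).toFinset.filter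
            (fun v => G.Adj u v)).card : ℤ) ≤ ((G.neighborFinset u \ D).card : ℤ) := by
          exact_mod_cast Finset.card_le_card hsub
        rw [card_nbr_sdiff] at hcard
        have h3 := hτκ u
        calc ((((l' ++ (I ∩ F).toList).take i).toFinset.filter
            (fun v => G.Adj u v)).card : ℤ) ≤ (G.degree u : ℤ)
              - ((G.neighborFinset u ∩ D).card : ℤ) := hcard
          _ ≤ κ u := by linarith

/-- Duality: I is κ-degenerate iff its complement is a dynamic monopoly for τ = d − κ. -/
theorem degenerate_iff_complement_dynMonopoly (G : SimpleGraph V) [DecidableRel G.Adj]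
    (κ τ : V → ℤ) (hτκ : ∀ u, τ u + κ u = (G.degree u : ℤ))
    (hκ : ∀ u, 0 ≤ κ u ∧ κ u ≤ (G.degree u : ℤ)) (I : Finset V) :
    IsDegen G κ I ↔ IsDynMonopoly G τ (Finset.univ \ I) := by
  constructor
  · rintro ⟨l, hlI, hl⟩
    refine ⟨l.length, ?_⟩
    have h := forward_iter G κ τ hτκ l hl l.length le_rfl
    simp only [Nat.sub_self, List.take_zero, List.toFinset_nil, Finset.sdiff_empty] at h
    rw [hlI] at h
    exact Finset.eq_univ_of_forall (fun v => h (Finset.mem_univ v))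
  · rintro ⟨k, hk⟩
    exact backward_main G κ τ hτκ k I hk
end

section
/- Let G be a finite simple graph, c: V(G) → ℝ_{>0}, and κ: V(G) → ℤ with 0 ≤ κ(u) ≤ d(u) for all u. If α(G,c,κ) = ∑_{u∈V(G)} c(u)(κ(u)+1)/(d(u)+1), then for every vertex u of G: c(u) = c(u)(κ(u)+1)/(d(u)+1) + ∑_{v∈N(u)} c(v)(κ(v)+1)/(d(v)+1) − ∑_{v∈N(u)} c(v)κ(v)/d(v). -/
variable {V : Type*} [Fintype V] [DecidableEq V]

section Rank
variable {W : Type*} [Fintype W] [DecidableEq W] {m : ℕ}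

/-- number of elements of `T` before `w` in the ordering `σ` -/
def rk (σ : W ≃ Fin m) (w : W) (T : Finset W) : ℕ :=
  (T.filter (fun v => σ v < σ w)).card

lemma rk_add (w : W) (T : Finset W) (hw : w ∉ T) (σ : W ≃ Fin m) :
    rk σ w T + (T.filter (fun v => σ w < σ v)).card = T.card := by
  have he : (T.filter (fun v => σ w < σ v)) = T.filter (fun v => ¬ σ v < σ w) := by
    apply Finset.filter_congr
    intro v hv
    have hne : σ v ≠ σ w := fun e => hw (σ.injective e ▸ hv)
    constructor
    · exact fun h h' => absurd h (asymm h')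
    · exact fun h => (hne.lt_or_gt).resolve_left h
  rw [rk, he, Finset.card_filter_add_card_filter_not]

def upSwap (w : W) (T : Finset W) (σ : W ≃ Fin m) : W ≃ Fin m :=
  if h : ((T.filter (fun v => σ w < σ v)).image σ).Nonempty then
    σ.trans (Equiv.swap (σ w) (((T.filter (fun v => σ w < σ v)).image σ).min' h))
  else σ

def downSwap (w : W) (T : Finset W) (σ : W ≃ Fin m) : W ≃ Fin m :=
  if h : ((T.filter (fun v => σ v < σ w)).image σ).Nonempty then
    σ.trans (Equiv.swap (σ w) (((T.filter (fun v => σ v < σ w)).image σ).max' h))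
  else σ

lemma up_spec (w : W) (T : Finset W) (hw : w ∉ T) (σ : W ≃ Fin m)
    (h : rk σ w T < T.card) :
    rk (upSwap w T σ) w T = rk σ w T + 1 ∧ downSwap w T (upSwap w T σ) = σ := by
  have hA : (T.filter (fun v => σ w < σ v)).Nonempty := by
    rw [← Finset.card_pos]
    have := rk_add w T hw σ; omega
  have hAim : ((T.filter (fun v => σ w < σ v)).image σ).Nonempty := hA.image σ
  set b := ((T.filter (fun v => σ w < σ v)).image σ).min' hAim with hb
  have hbmem : b ∈ (T.filter (fun v => σ w < σ v)).image σ := Finset.min'_mem _ _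
  obtain ⟨v₀, hv₀mem, hv₀⟩ := Finset.mem_image.mp hbmem
  have hv₀T : v₀ ∈ T := (Finset.mem_filter.mp hv₀mem).1
  have hwb : σ w < b := hv₀ ▸ (Finset.mem_filter.mp hv₀mem).2
  have hmin : ∀ x ∈ T, σ w < σ x → b ≤ σ x := fun x hx hx' =>
    Finset.min'_le _ _ (Finset.mem_image_of_mem σ (Finset.mem_filter.mpr ⟨hx, hx'⟩))
  have hup : upSwap w T σ = σ.trans (Equiv.swap (σ w) b) := by
    rw [upSwap, dif_pos hAim]
  set σ' := σ.trans (Equiv.swap (σ w) b) with hσ'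
  have hσ'w : σ' w = b := by simp [hσ', Equiv.swap_apply_left]
  have hσ'v₀ : σ' v₀ = σ w := by simp [hσ', hv₀, Equiv.swap_apply_right]
  have hσ'x : ∀ x, x ≠ w → x ≠ v₀ → σ' x = σ x := by
    intro x hxw hxv
    simp only [hσ', Equiv.trans_apply]
    exact Equiv.swap_apply_of_ne_of_ne (fun e => hxw (σ.injective e))
      (fun e => hxv (σ.injective (e.trans hv₀.symm)))
  have hfilter : T.filter (fun v => σ' v < σ' w)
      = insert v₀ (T.filter (fun v => σ v < σ w)) := by
    ext x
    simp only [Finset.mem_filter, Finset.mem_insert]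
    constructor
    · rintro ⟨hxT, hlt⟩
      by_cases hxv : x = v₀
      · exact Or.inl hxv
      · have hxw : x ≠ w := fun e => hw (e ▸ hxT)
        rw [hσ'x x hxw hxv, hσ'w] at hlt
        refine Or.inr ⟨hxT, ?_⟩
        rcases lt_trichotomy (σ x) (σ w) with h1 | h1 | h1
        · exact h1
        · exact absurd (σ.injective h1) hxw
        · exact absurd (hmin x hxT h1) (not_le.mpr hlt)
    · rintro (rfl | ⟨hxT, hlt⟩)
      · exact ⟨hv₀T, by rw [hσ'v₀, hσ'w]; exact hwb⟩
      · have hxw : x ≠ w := fun e => hw (e ▸ hxT)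
        have hxv : x ≠ v₀ := fun e => absurd (e ▸ hlt) (by rw [hv₀]; exact asymm hwb)
        exact ⟨hxT, by rw [hσ'x x hxw hxv, hσ'w]; exact hlt.trans hwb⟩
  have hv₀notin : v₀ ∉ T.filter (fun v => σ v < σ w) := by
    simp only [Finset.mem_filter, hv₀, not_and]
    exact fun _ => asymm hwb
  have hrk' : rk σ' w T = rk σ w T + 1 := by
    rw [rk, hfilter, Finset.card_insert_of_notMem hv₀notin]; rfl
  constructor
  · rw [hup]; exact hrk'
  · rw [hup]
    have hBim : ((T.filter (fun v => σ' v < σ' w)).image σ').Nonempty := by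
      rw [hfilter]
      exact ⟨σ' v₀, Finset.mem_image_of_mem _ (Finset.mem_insert_self _ _)⟩
    rw [downSwap, dif_pos hBim]
    have hmax : ((T.filter (fun v => σ' v < σ' w)).image σ').max' hBim = σ w := by
      apply le_antisymm
      · apply Finset.max'_le
        intro y hy
        obtain ⟨x, hxmem, rfl⟩ := Finset.mem_image.mp hy
        rw [hfilter] at hxmem
        rcases Finset.mem_insert.mp hxmem with rfl | hx
        · rw [hσ'v₀]
        · have hxT := (Finset.mem_filter.mp hx).1
          have hxw : x ≠ w := fun e => hw (e ▸ hxT)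
          have hxv : x ≠ v₀ := fun e => hv₀notin (e ▸ hx)
          rw [hσ'x x hxw hxv]
          exact ((Finset.mem_filter.mp hx).2).le
      · exact Finset.le_max' _ _ (Finset.mem_image.mpr
          ⟨v₀, by rw [hfilter]; exact Finset.mem_insert_self _ _, hσ'v₀⟩)
    rw [hmax, hσ'w, hσ', Equiv.trans_assoc, Equiv.swap_comm, Equiv.swap_swap,
      Equiv.trans_refl]

lemma down_spec (w : W) (T : Finset W) (hw : w ∉ T) (σ : W ≃ Fin m)
    (h : 0 < rk σ w T) :
    rk (downSwap w T σ) w T + 1 = rk σ w T ∧ upSwap w T (downSwap w T σ) = σ := by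
  have hA : (T.filter (fun v => σ v < σ w)).Nonempty := by
    rw [← Finset.card_pos]; exact h
  have hAim : ((T.filter (fun v => σ v < σ w)).image σ).Nonempty := hA.image σ
  set b := ((T.filter (fun v => σ v < σ w)).image σ).max' hAim with hb
  have hbmem : b ∈ (T.filter (fun v => σ v < σ w)).image σ := Finset.max'_mem _ _
  obtain ⟨v₀, hv₀mem, hv₀⟩ := Finset.mem_image.mp hbmem
  have hv₀T : v₀ ∈ T := (Finset.mem_filter.mp hv₀mem).1
  have hwb : b < σ w := hv₀ ▸ (Finset.mem_filter.mp hv₀mem).2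
  have hmax : ∀ x ∈ T, σ x < σ w → σ x ≤ b := fun x hx hx' =>
    Finset.le_max' _ _ (Finset.mem_image_of_mem σ (Finset.mem_filter.mpr ⟨hx, hx'⟩))
  have hdown : downSwap w T σ = σ.trans (Equiv.swap (σ w) b) := by
    rw [downSwap, dif_pos hAim]
  set σ' := σ.trans (Equiv.swap (σ w) b) with hσ'
  have hσ'w : σ' w = b := by simp [hσ', Equiv.swap_apply_left]
  have hσ'v₀ : σ' v₀ = σ w := by simp [hσ', hv₀, Equiv.swap_apply_right]
  have hσ'x : ∀ x, x ≠ w → x ≠ v₀ → σ' x = σ x := by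
    intro x hxw hxv
    simp only [hσ', Equiv.trans_apply]
    exact Equiv.swap_apply_of_ne_of_ne (fun e => hxw (σ.injective e))
      (fun e => hxv (σ.injective (e.trans hv₀.symm)))
  have hfilter : T.filter (fun v => σ v < σ w)
      = insert v₀ (T.filter (fun v => σ' v < σ' w)) := by
    ext x
    simp only [Finset.mem_filter, Finset.mem_insert]
    constructor
    · rintro ⟨hxT, hlt⟩
      by_cases hxv : x = v₀
      · exact Or.inl hxv
      · have hxw : x ≠ w := fun e => hw (e ▸ hxT)
        refine Or.inr ⟨hxT, ?_⟩
        rw [hσ'x x hxw hxv, hσ'w]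
        have hne : σ x ≠ b := fun e => hxv (σ.injective (e.trans hv₀.symm))
        exact lt_of_le_of_ne (hmax x hxT hlt) hne
    · rintro (rfl | ⟨hxT, hlt⟩)
      · exact ⟨hv₀T, hv₀ ▸ hwb⟩
      · have hxw : x ≠ w := fun e => hw (e ▸ hxT)
        have hxv : x ≠ v₀ := fun e => by
          rw [e, hσ'v₀, hσ'w] at hlt; exact absurd hwb (asymm hlt)
        rw [hσ'x x hxw hxv, hσ'w] at hlt
        exact ⟨hxT, hlt.trans hwb⟩
  have hv₀notin : v₀ ∉ T.filter (fun v => σ' v < σ' w) := by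
    simp only [Finset.mem_filter, hσ'v₀, hσ'w, not_and]
    exact fun _ => asymm hwb
  have hrk' : rk σ' w T + 1 = rk σ w T := by
    rw [rk, rk, hfilter, Finset.card_insert_of_notMem hv₀notin]
  constructor
  · rw [hdown]; exact hrk'
  · rw [hdown]
    have hBne : (T.filter (fun v => σ' w < σ' v)).Nonempty :=
      ⟨v₀, Finset.mem_filter.mpr ⟨hv₀T, by rw [hσ'v₀, hσ'w]; exact hwb⟩⟩
    have hBim : ((T.filter (fun v => σ' w < σ' v)).image σ').Nonempty := hBne.image σ'
    rw [upSwap, dif_pos hBim]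
    have hmin : ((T.filter (fun v => σ' w < σ' v)).image σ').min' hBim = σ w := by
      apply le_antisymm
      · exact Finset.min'_le _ _ (Finset.mem_image.mpr
          ⟨v₀, Finset.mem_filter.mpr ⟨hv₀T, by rw [hσ'v₀, hσ'w]; exact hwb⟩, hσ'v₀⟩)
      · apply Finset.le_min'
        intro y hy
        obtain ⟨x, hxmem, rfl⟩ := Finset.mem_image.mp hy
        have hxT := (Finset.mem_filter.mp hxmem).1
        have hgt := (Finset.mem_filter.mp hxmem).2
        have hxw : x ≠ w := fun e => hw (e ▸ hxT)
        by_cases hxv : x = v₀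
        · subst hxv; rw [hσ'v₀]
        · rw [hσ'x x hxw hxv] at hgt ⊢
          rw [hσ'w] at hgt
          by_contra hcon
          push_neg at hcon
          have := hmax x hxT hcon
          exact absurd hgt (not_lt.mpr this)
    rw [hmin, hσ'w, hσ', Equiv.trans_assoc, Equiv.swap_comm, Equiv.swap_swap,
      Equiv.trans_refl]

lemma fiber_succ (w : W) (T : Finset W) (hw : w ∉ T) (j : ℕ) (hj : j < T.card) :
    (Finset.univ.filter (fun σ : W ≃ Fin m => rk σ w T = j)).card
      = (Finset.univ.filter (fun σ : W ≃ Fin m => rk σ w T = j + 1)).card := by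
  apply Finset.card_bij' (fun σ _ => upSwap w T σ) (fun σ _ => downSwap w T σ)
  · intro σ hσ
    simp only [Finset.mem_filter, Finset.mem_univ, true_and] at hσ ⊢
    rw [(up_spec w T hw σ (hσ ▸ hj)).1, hσ]
  · intro σ hσ
    simp only [Finset.mem_filter, Finset.mem_univ, true_and] at hσ ⊢
    have := (down_spec w T hw σ (by omega)).1
    omega
  · intro σ hσ
    simp only [Finset.mem_filter, Finset.mem_univ, true_and] at hσ
    exact (up_spec w T hw σ (hσ ▸ hj)).2
  · intro σ hσ
    simp only [Finset.mem_filter, Finset.mem_univ, true_and] at hσ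
    exact (down_spec w T hw σ (by omega)).2

lemma fiber_const (w : W) (T : Finset W) (hw : w ∉ T) (j : ℕ) (hj : j ≤ T.card) :
    (Finset.univ.filter (fun σ : W ≃ Fin m => rk σ w T = j)).card
      = (Finset.univ.filter (fun σ : W ≃ Fin m => rk σ w T = 0)).card := by
  induction j with
  | zero => rfl
  | succ i ih =>
    rw [← fiber_succ w T hw i (by omega), ih (by omega)]

lemma count_rk_lt (w : W) (T : Finset W) (hw : w ∉ T) (k : ℕ) (hk : k ≤ T.card + 1) :
    (Finset.univ.filter (fun σ : W ≃ Fin m => rk σ w T < k)).card * (T.card + 1)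
      = k * Fintype.card (W ≃ Fin m) := by
  have hle : ∀ σ : W ≃ Fin m, rk σ w T ≤ T.card := fun σ => Finset.card_filter_le _ _
  set f0 := (Finset.univ.filter (fun σ : W ≃ Fin m => rk σ w T = 0)).card with hf0
  have htot : Fintype.card (W ≃ Fin m) = (T.card + 1) * f0 := by
    rw [← Finset.card_univ]
    rw [Finset.card_eq_sum_card_fiberwise
      (f := fun σ : W ≃ Fin m => rk σ w T) (t := Finset.range (T.card + 1))
      (fun σ _ => Finset.mem_range.mpr (Nat.lt_succ_of_le (hle σ)))]
    rw [Finset.sum_congr rfl (fun j hj => ?_), Finset.sum_const, Finset.card_range,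
      smul_eq_mul]
    show (Finset.univ.filter (fun σ : W ≃ Fin m => rk σ w T = j)).card = f0
    exact fiber_const w T hw j (by have := Finset.mem_range.mp hj; omega)
  have hcnt : (Finset.univ.filter (fun σ : W ≃ Fin m => rk σ w T < k)).card = k * f0 := by
    rw [Finset.card_eq_sum_card_fiberwise
      (f := fun σ : W ≃ Fin m => rk σ w T) (t := Finset.range k)
      (fun σ hσ => Finset.mem_range.mpr (Finset.mem_filter.mp hσ).2)]
    rw [Finset.sum_congr rfl (fun j hj => ?_), Finset.sum_const, Finset.card_range,
      smul_eq_mul]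
    have hjk := Finset.mem_range.mp hj
    have heq : (Finset.univ.filter (fun σ : W ≃ Fin m => rk σ w T < k)).filter
        (fun σ => rk σ w T = j) = Finset.univ.filter (fun σ : W ≃ Fin m => rk σ w T = j) := by
      ext σ; simp only [Finset.mem_filter, Finset.mem_univ, true_and]
      constructor
      · rintro ⟨-, h2⟩; exact h2
      · intro h; exact ⟨by omega, h⟩
    rw [heq]
    exact fiber_const w T hw j (by omega)
  rw [hcnt, htot]; ring

lemma sum_weight (c' : W → ℝ) (T : W → Finset W) (hT : ∀ v, v ∉ T v) (k : W → ℕ)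
    (hk : ∀ v, k v ≤ (T v).card + 1) :
    ∑ σ : W ≃ Fin m, ∑ v ∈ Finset.univ.filter (fun v => rk σ v (T v) < k v), c' v
      = (Fintype.card (W ≃ Fin m) : ℝ) * ∑ v : W, c' v * (k v : ℝ) / ((T v).card + 1) := by
  have h1 : ∀ σ : W ≃ Fin m, ∑ v ∈ Finset.univ.filter (fun v => rk σ v (T v) < k v), c' v
      = ∑ v : W, if rk σ v (T v) < k v then c' v else 0 := fun σ =>
    (Finset.sum_filter _ _)
  simp_rw [h1]
  rw [Finset.sum_comm, Finset.mul_sum]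
  apply Finset.sum_congr rfl
  intro v _
  rw [← Finset.sum_filter, Finset.sum_const, nsmul_eq_mul]
  have hcount := count_rk_lt (m := m) v (T v) (hT v) (k v) (hk v)
  have hcast : ((Finset.univ.filter (fun σ : W ≃ Fin m => rk σ v (T v) < k v)).card : ℝ)
      * (((T v).card : ℝ) + 1) = (k v : ℝ) * (Fintype.card (W ≃ Fin m) : ℝ) := by
    exact_mod_cast congrArg (fun x : ℕ => (x : ℝ)) hcount
  have hpos : ((T v).card : ℝ) + 1 ≠ 0 := by positivity
  field_simp
  linear_combination c' v * hcast

end Rank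

lemma sum_le_alphaW (G : SimpleGraph V) [DecidableRel G.Adj] (c : V → ℝ) (κ : V → ℤ)
    (I : Finset V) (hI : IsDegen G κ I) : ∑ u ∈ I, c u ≤ alphaW G c κ := by
  apply le_csSup
  · apply Set.Finite.bddAbove
    apply Set.Finite.subset (Set.finite_range (fun J : Finset V => ∑ u ∈ J, c u))
    rintro x ⟨J, -, rfl⟩; exact ⟨J, rfl⟩
  · exact ⟨I, hI, rfl⟩

lemma greedy_isDegen (G : SimpleGraph V) [DecidableRel G.Adj] (κ : V → ℤ)
    {m : ℕ} (σ : V ≃ Fin m) :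
    IsDegen G κ (Finset.univ.filter (fun v => (rk σ v (G.neighborFinset v) : ℤ) ≤ κ v)) := by
  classical
  set I := Finset.univ.filter (fun v => (rk σ v (G.neighborFinset v) : ℤ) ≤ κ v) with hI
  set base := (List.finRange m).map σ.symm with hbase
  have hmem : ∀ x : V, x ∈ base :=
    fun x => List.mem_map.mpr ⟨σ x, List.mem_finRange _, σ.symm_apply_apply x⟩
  have hnodup : base.Nodup := (List.nodup_finRange m).map σ.symm.injective
  have hsorted : base.Pairwise (fun a b => σ a < σ b) := by
    refine List.Pairwise.map _ ?_ (List.pairwise_lt_finRange m)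
    intro a b hab
    simpa using hab
  set l := base.filter (fun v => v ∈ I) with hl
  have hlsorted : l.Pairwise (fun a b => σ a < σ b) :=
    hsorted.sublist (List.filter_sublist (l := base))
  refine ⟨l, ?_, ?_, ?_⟩
  · ext x
    simp only [hl, List.mem_toFinset, List.mem_filter, decide_eq_true_eq]
    exact ⟨fun h => h.2, fun h => ⟨hmem x, h⟩⟩
  · exact hnodup.filter _
  · intro i
    set w := l.get i with hw
    have hwl : w ∈ l := List.get_mem l i
    have hwI : w ∈ I := by
      have := (List.mem_filter.mp hwl).2
      simpa using this
    have hrk : (rk σ w (G.neighborFinset w) : ℤ) ≤ κ w :=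
      (Finset.mem_filter.mp hwI).2
    refine le_trans ?_ hrk
    have hsub : ((l.take i).toFinset.filter (fun v => G.Adj w v))
        ⊆ (G.neighborFinset w).filter (fun v => σ v < σ w) := by
      intro x hx
      rw [Finset.mem_filter, List.mem_toFinset] at hx
      obtain ⟨hx1, hx2⟩ := hx
      refine Finset.mem_filter.mpr ⟨(G.mem_neighborFinset _ _).mpr hx2, ?_⟩
      have h2 : (l.take ↑i ++ l.drop ↑i).Pairwise (fun a b => σ a < σ b) := by
        rw [List.take_append_drop]
        exact hlsorted
      have h3 := (List.pairwise_append.mp h2).2.2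
      apply h3 x hx1 w
      have hi : (i : ℕ) < l.length := i.isLt
      rw [hw, List.get_eq_getElem, List.drop_eq_getElem_cons hi]
      exact List.mem_cons_self
    exact_mod_cast Int.ofNat_le.mpr (Finset.card_le_card hsub)

lemma all_orders_eq (G : SimpleGraph V) [DecidableRel G.Adj]
    (c : V → ℝ) (κ : V → ℤ) (hκ : ∀ u, 0 ≤ κ u ∧ κ u ≤ (G.degree u : ℤ))
    (hext : alphaW G c κ = ∑ u : V, c u * ((κ u : ℝ) + 1) / (G.degree u + 1))
    {m : ℕ} (σ : V ≃ Fin m) :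
    ∑ v ∈ Finset.univ.filter (fun v => (rk σ v (G.neighborFinset v) : ℤ) ≤ κ v), c v
      = ∑ u : V, c u * ((κ u : ℝ) + 1) / (G.degree u + 1) := by
  classical
  set bound := ∑ u : V, c u * ((κ u : ℝ) + 1) / (G.degree u + 1) with hbound
  set k : V → ℕ := fun v => (κ v).toNat + 1 with hk
  have hT : ∀ v : V, v ∉ G.neighborFinset v := fun v hv =>
    G.irrefl ((G.mem_neighborFinset _ _).mp hv)
  have hkle : ∀ v, k v ≤ (G.neighborFinset v).card + 1 := by
    intro v
    rw [G.card_neighborFinset_eq_degree]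
    show (κ v).toNat + 1 ≤ G.degree v + 1
    have h1 := (hκ v).1
    have h2 := (hκ v).2
    omega
  have hfeq : ∀ τ : V ≃ Fin m,
      Finset.univ.filter (fun v => (rk τ v (G.neighborFinset v) : ℤ) ≤ κ v)
        = Finset.univ.filter (fun v => rk τ v (G.neighborFinset v) < k v) := by
    intro τ
    apply Finset.filter_congr
    intro v _
    show _ ↔ rk τ v (G.neighborFinset v) < (κ v).toNat + 1
    have h0 := (hκ v).1
    omega
  have hsum := sum_weight (m := m) c (fun v => G.neighborFinset v) hT k hkle
  have hterm : ∑ v : V, c v * (k v : ℝ) / ((G.neighborFinset v).card + 1) = bound := by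
    apply Finset.sum_congr rfl
    intro v _
    rw [G.card_neighborFinset_eq_degree]
    show c v * (((κ v).toNat + 1 : ℕ) : ℝ) / (G.degree v + 1) = _
    have h0 := (hκ v).1
    have h1 : ((κ v).toNat : ℤ) = κ v := Int.toNat_of_nonneg h0
    have h2 : (((κ v).toNat : ℕ) : ℝ) = (κ v : ℝ) := by
      exact_mod_cast congrArg (Int.cast : ℤ → ℝ) h1
    push_cast [h2]
    ring
  have hle : ∀ τ : V ≃ Fin m,
      ∑ v ∈ Finset.univ.filter (fun v => (rk τ v (G.neighborFinset v) : ℤ) ≤ κ v), c v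
        ≤ bound := by
    intro τ
    rw [← hext]
    exact sum_le_alphaW G c κ _ (greedy_isDegen G κ τ)
  have hpos : 0 < Fintype.card (V ≃ Fin m) := Fintype.card_pos_iff.mpr ⟨σ⟩
  have htotal : ∑ τ : V ≃ Fin m,
      ∑ v ∈ Finset.univ.filter (fun v => (rk τ v (G.neighborFinset v) : ℤ) ≤ κ v), c v
        = (Fintype.card (V ≃ Fin m) : ℝ) * bound := by
    rw [← hterm, ← hsum]
    exact Finset.sum_congr rfl (fun τ _ => by rw [hfeq τ])
  have hzero : ∑ τ : V ≃ Fin m, (bound -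
      ∑ v ∈ Finset.univ.filter (fun v => (rk τ v (G.neighborFinset v) : ℤ) ≤ κ v), c v) = 0 := by
    rw [Finset.sum_sub_distrib, htotal, Finset.sum_const, Finset.card_univ, nsmul_eq_mul,
      sub_self]
  have hall := (Finset.sum_eq_zero_iff_of_nonneg
    (fun τ _ => sub_nonneg.mpr (hle τ))).mp hzero σ (Finset.mem_univ σ)
  linarith [hall]

def extOrd (u : V) {m' : ℕ} (σ : {v : V // v ≠ u} ≃ Fin m') : V ≃ Fin (m' + 1) :=
  ((Equiv.optionSubtypeNe u).symm.trans σ.optionCongr).trans (finSuccEquiv m').symm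

lemma extOrd_self (u : V) {m' : ℕ} (σ : {v : V // v ≠ u} ≃ Fin m') : extOrd u σ u = 0 := by
  simp [extOrd, Equiv.optionSubtypeNe_symm_self]

lemma extOrd_ne (u : V) {m' : ℕ} (σ : {v : V // v ≠ u} ≃ Fin m') (v : V) (hv : v ≠ u) :
    extOrd u σ v = (σ ⟨v, hv⟩).succ := by
  simp [extOrd, Equiv.optionSubtypeNe_symm_of_ne hv]

def Tsub (G : SimpleGraph V) [DecidableRel G.Adj] (u : V) (x : {v : V // v ≠ u}) :
    Finset {v : V // v ≠ u} :=
  (G.neighborFinset (x : V)).subtype (· ≠ u)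

def ksub (G : SimpleGraph V) [DecidableRel G.Adj] (κ : V → ℤ) (u : V)
    (x : {v : V // v ≠ u}) : ℕ :=
  if G.Adj u (x : V) then (κ (x : V)).toNat else (κ (x : V)).toNat + 1

lemma Tsub_card (G : SimpleGraph V) [DecidableRel G.Adj] (u : V) (x : {v : V // v ≠ u}) :
    (Tsub G u x).card = if G.Adj u (x : V) then G.degree (x : V) - 1 else G.degree (x : V) := by
  rw [Tsub, Finset.card_subtype]
  by_cases hadj : G.Adj u (x : V)
  · rw [if_pos hadj]
    have hu : u ∈ G.neighborFinset (x : V) := (G.mem_neighborFinset _ _).mpr hadj.symm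
    rw [Finset.filter_ne', Finset.card_erase_of_mem hu, G.card_neighborFinset_eq_degree]
  · rw [if_neg hadj, Finset.filter_true_of_mem, G.card_neighborFinset_eq_degree]
    intro y hy hyu
    exact hadj (hyu ▸ ((G.mem_neighborFinset _ _).mp hy).symm)

lemma not_mem_Tsub (G : SimpleGraph V) [DecidableRel G.Adj] (u : V) (x : {v : V // v ≠ u}) :
    x ∉ Tsub G u x := by
  rw [Tsub, Finset.mem_subtype]
  intro h
  exact G.irrefl ((G.mem_neighborFinset _ _).mp h)

lemma rank_extOrd (G : SimpleGraph V) [DecidableRel G.Adj] (u : V) {m' : ℕ}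
    (σ : {v : V // v ≠ u} ≃ Fin m') (v : V) (hv : v ≠ u) :
    rk (extOrd u σ) v (G.neighborFinset v)
      = rk σ ⟨v, hv⟩ (Tsub G u ⟨v, hv⟩) + (if G.Adj u v then 1 else 0) := by
  have hvpos : (0 : Fin (m' + 1)) < extOrd u σ v := by
    rw [extOrd_ne u σ v hv]; exact Fin.succ_pos _
  have herase : (Finset.filter (fun x => extOrd u σ x < extOrd u σ v) (G.neighborFinset v)).erase u
      = ((Tsub G u ⟨v, hv⟩).filter (fun y => σ y < σ ⟨v, hv⟩)).image Subtype.val := by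
    ext x
    simp only [Finset.mem_erase, Finset.mem_filter, Finset.mem_image]
    constructor
    · rintro ⟨hxu, hxN, hxlt⟩
      refine ⟨⟨x, hxu⟩, ⟨by rw [Tsub, Finset.mem_subtype]; exact hxN, ?_⟩, rfl⟩
      rw [extOrd_ne u σ x hxu, extOrd_ne u σ v hv] at hxlt
      exact Fin.succ_lt_succ_iff.mp hxlt
    · rintro ⟨⟨y, hyu⟩, hy, rfl⟩
      have h1 := hy.1
      rw [Tsub, Finset.mem_subtype] at h1
      refine ⟨hyu, h1, ?_⟩
      rw [extOrd_ne u σ y hyu, extOrd_ne u σ v hv]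
      exact Fin.succ_lt_succ_iff.mpr hy.2
  have humem : u ∈ Finset.filter (fun x => extOrd u σ x < extOrd u σ v) (G.neighborFinset v)
      ↔ G.Adj u v := by
    simp only [Finset.mem_filter, G.mem_neighborFinset, extOrd_self u σ]
    constructor
    · exact fun h => h.1.symm
    · exact fun h => ⟨h.symm, hvpos⟩
  rw [rk, rk]
  by_cases hadj : G.Adj u v
  · rw [if_pos hadj]
    have h1 := Finset.card_erase_add_one (humem.mpr hadj)
    rw [herase, Finset.card_image_of_injective _ Subtype.val_injective] at h1
    omega
  · rw [if_neg hadj, add_zero]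
    have hnot : u ∉ Finset.filter (fun x => extOrd u σ x < extOrd u σ v) (G.neighborFinset v) :=
      fun h => hadj (humem.mp h)
    rw [← Finset.erase_eq_of_notMem hnot, herase,
      Finset.card_image_of_injective _ Subtype.val_injective]

lemma greedy_extOrd (G : SimpleGraph V) [DecidableRel G.Adj] (κ : V → ℤ)
    (hκ0 : ∀ v, 0 ≤ κ v) (u : V) {m' : ℕ} (σ : {v : V // v ≠ u} ≃ Fin m') :
    Finset.univ.filter (fun v => (rk (extOrd u σ) v (G.neighborFinset v) : ℤ) ≤ κ v)
      = insert u ((Finset.univ.filter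
          (fun x : {v : V // v ≠ u} => rk σ x (Tsub G u x) < ksub G κ u x)).image
            Subtype.val) := by
  ext v
  simp only [Finset.mem_filter, Finset.mem_univ, true_and, Finset.mem_insert, Finset.mem_image]
  by_cases hv : v = u
  · constructor
    · intro _; exact Or.inl hv
    · intro _
      have hz : rk (extOrd u σ) v (G.neighborFinset v) = 0 := by
        rw [rk, Finset.card_eq_zero]
        apply Finset.filter_false_of_mem
        intro x _
        rw [hv, extOrd_self u σ]
        exact Fin.not_lt_zero _
      rw [hz]
      exact_mod_cast hκ0 v
  · rw [rank_extOrd G u σ v hv]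
    have h0 := hκ0 v
    constructor
    · intro h
      refine Or.inr ⟨⟨v, hv⟩, ?_, rfl⟩
      show rk σ ⟨v, hv⟩ (Tsub G u ⟨v, hv⟩) < ksub G κ u ⟨v, hv⟩
      have hco : ((⟨v, hv⟩ : {x : V // x ≠ u}) : V) = v := rfl
      rw [ksub, hco]
      by_cases hadj : G.Adj u v
      · rw [if_pos hadj] at h ⊢
        omega
      · rw [if_neg hadj] at h ⊢
        omega
    · rintro (hvu | ⟨x, hx, hxv⟩)
      · exact absurd hvu hv
      · have hco : (x : V) = v := hxv
        have h2 : rk σ x (Tsub G u x) < ksub G κ u x := hx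
        rw [ksub, hco] at h2
        have hxx : (⟨v, hv⟩ : {x : V // x ≠ u}) = x := Subtype.ext hco.symm
        rw [hxx]
        by_cases hadj : G.Adj u v
        · rw [if_pos hadj] at h2 ⊢
          omega
        · rw [if_neg hadj] at h2 ⊢
          omega


/-- Key local identity for extremal triples of the weighted degenerate-set bound. -/
theorem extremal_local_identity_alpha (G : SimpleGraph V) [DecidableRel G.Adj]
    (c : V → ℝ) (hc : ∀ u, 0 < c u)
    (κ : V → ℤ) (hκ : ∀ u, 0 ≤ κ u ∧ κ u ≤ (G.degree u : ℤ))
    (hext : alphaW G c κ = ∑ u : V, c u * ((κ u : ℝ) + 1) / (G.degree u + 1)) :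
    ∀ u : V, c u = c u * ((κ u : ℝ) + 1) / (G.degree u + 1)
      + ∑ v ∈ G.neighborFinset u, c v * ((κ v : ℝ) + 1) / (G.degree v + 1)
      - ∑ v ∈ G.neighborFinset u, c v * (κ v : ℝ) / (G.degree v) := by
  intro u
  classical
  set bound := ∑ v : V, c v * ((κ v : ℝ) + 1) / (G.degree v + 1) with hbound
  set m' := Fintype.card {v : V // v ≠ u} with hm'
  have hstep1 : ∀ σ : {v : V // v ≠ u} ≃ Fin m',
      c u + ∑ x ∈ Finset.univ.filter
          (fun x : {v : V // v ≠ u} => rk σ x (Tsub G u x) < ksub G κ u x), c (x : V)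
        = bound := by
    intro σ
    have h1 := all_orders_eq G c κ hκ hext (extOrd u σ)
    rw [greedy_extOrd G κ (fun v => (hκ v).1) u σ] at h1
    have hnotmem : u ∉ (Finset.univ.filter
        (fun x : {v : V // v ≠ u} => rk σ x (Tsub G u x) < ksub G κ u x)).image
          Subtype.val := by
      rintro hmem
      obtain ⟨x, -, hxu⟩ := Finset.mem_image.mp hmem
      exact x.2 hxu
    rw [Finset.sum_insert hnotmem,
      Finset.sum_image (fun x _ y _ h => Subtype.val_injective h)] at h1
    exact h1
  have hτ : Nonempty ({v : V // v ≠ u} ≃ Fin m') := ⟨Fintype.equivFin _⟩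
  have hpos : 0 < Fintype.card ({v : V // v ≠ u} ≃ Fin m') := Fintype.card_pos_iff.mpr hτ
  have hT' : ∀ x, x ∉ Tsub G u x := not_mem_Tsub G u
  have hdeg1 : ∀ x : {v : V // v ≠ u}, G.Adj u (x : V) → 1 ≤ G.degree (x : V) := by
    intro x hadj
    have h1 : u ∈ G.neighborFinset (x : V) := (G.mem_neighborFinset _ _).mpr hadj.symm
    have h2 := Finset.card_pos.mpr ⟨u, h1⟩
    rw [G.card_neighborFinset_eq_degree] at h2
    omega
  have hkle : ∀ x : {v : V // v ≠ u}, ksub G κ u x ≤ (Tsub G u x).card + 1 := by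
    intro x
    rw [Tsub_card, ksub]
    have h1 := (hκ (x : V)).1
    have h2 := (hκ (x : V)).2
    by_cases hadj : G.Adj u (x : V)
    · rw [if_pos hadj, if_pos hadj]
      have := hdeg1 x hadj
      omega
    · rw [if_neg hadj, if_neg hadj]
      omega
  have hsum := sum_weight (W := {v : V // v ≠ u}) (m := m') (fun x => c (x : V)) (Tsub G u) hT' (ksub G κ u) hkle
  have hlhs : ∑ σ : {v : V // v ≠ u} ≃ Fin m',
      ∑ x ∈ Finset.univ.filter (fun x => rk σ x (Tsub G u x) < ksub G κ u x), c (x : V)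
        = (Fintype.card ({v : V // v ≠ u} ≃ Fin m') : ℝ) * (bound - c u) := by
    rw [Finset.sum_congr rfl (fun σ _ => by linarith [hstep1 σ] :
      ∀ σ ∈ (Finset.univ : Finset ({v : V // v ≠ u} ≃ Fin m')), _ = bound - c u),
      Finset.sum_const, Finset.card_univ, nsmul_eq_mul]
  have hkey : bound - c u = ∑ x : {v : V // v ≠ u},
      c (x : V) * (ksub G κ u x : ℝ) / ((Tsub G u x).card + 1) := by
    rw [hlhs] at hsum
    have hcard : ((Fintype.card ({v : V // v ≠ u} ≃ Fin m') : ℝ)) ≠ 0 :=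
      Nat.cast_ne_zero.mpr hpos.ne'
    exact mul_left_cancel₀ hcard hsum
  have hterm : ∀ x : {v : V // v ≠ u},
      c (x : V) * (ksub G κ u x : ℝ) / ((Tsub G u x).card + 1)
        = if G.Adj u (x : V) then c (x : V) * ((κ (x : V) : ℝ)) / (G.degree (x : V))
          else c (x : V) * ((κ (x : V) : ℝ) + 1) / (G.degree (x : V) + 1) := by
    intro x
    have h1 := (hκ (x : V)).1
    have htn : (((κ (x : V)).toNat : ℕ) : ℝ) = ((κ (x : V) : ℤ) : ℝ) := by
      exact_mod_cast congrArg (Int.cast : ℤ → ℝ) (Int.toNat_of_nonneg h1)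
    rw [Tsub_card, ksub]
    by_cases hadj : G.Adj u (x : V)
    · rw [if_pos hadj, if_pos hadj, if_pos hadj]
      have hd := hdeg1 x hadj
      rw [Nat.cast_sub hd, Nat.cast_one, htn]
      ring_nf
    · rw [if_neg hadj, if_neg hadj, if_neg hadj]
      push_cast
      rw [htn]
  have hsub2 : ∑ x : {v : V // v ≠ u},
      (if G.Adj u (x : V) then c (x : V) * ((κ (x : V) : ℝ)) / (G.degree (x : V))
        else c (x : V) * ((κ (x : V) : ℝ) + 1) / (G.degree (x : V) + 1))
      = ∑ v ∈ Finset.univ.erase u, (if G.Adj u v then c v * ((κ v : ℝ)) / (G.degree v)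
          else c v * ((κ v : ℝ) + 1) / (G.degree v + 1)) :=
    (Finset.sum_subtype (p := fun v => v ≠ u) (s := Finset.univ.erase u) (fun x => by simp)
      (fun v => if G.Adj u v then c v * ((κ v : ℝ)) / (G.degree v)
        else c v * ((κ v : ℝ) + 1) / (G.degree v + 1))).symm
  have hfilterN : (Finset.univ.erase u).filter (fun v => G.Adj u v) = G.neighborFinset u := by
    ext v
    simp only [Finset.mem_filter, Finset.mem_erase, Finset.mem_univ, and_true, true_and,
      SimpleGraph.mem_neighborFinset]
    constructor
    · exact fun h => h.2
    · exact fun h => ⟨h.ne', h⟩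
  have hsplit : ∑ v ∈ Finset.univ.erase u, (if G.Adj u v then c v * ((κ v : ℝ)) / (G.degree v)
          else c v * ((κ v : ℝ) + 1) / (G.degree v + 1))
      = ∑ v ∈ G.neighborFinset u, c v * ((κ v : ℝ)) / (G.degree v)
        + ∑ v ∈ (Finset.univ.erase u).filter (fun v => ¬ G.Adj u v),
            c v * ((κ v : ℝ) + 1) / (G.degree v + 1) := by
    rw [Finset.sum_ite, hfilterN]
  have hboundsplit : bound = c u * ((κ u : ℝ) + 1) / (G.degree u + 1)
      + ∑ v ∈ G.neighborFinset u, c v * ((κ v : ℝ) + 1) / (G.degree v + 1)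
      + ∑ v ∈ (Finset.univ.erase u).filter (fun v => ¬ G.Adj u v),
          c v * ((κ v : ℝ) + 1) / (G.degree v + 1) := by
    rw [hbound, ← Finset.add_sum_erase _ _ (Finset.mem_univ u),
      ← Finset.sum_filter_add_sum_filter_not (Finset.univ.erase u) (fun v => G.Adj u v),
      hfilterN, add_assoc]
  have hfinal : bound - c u = ∑ v ∈ G.neighborFinset u, c v * ((κ v : ℝ)) / (G.degree v)
        + ∑ v ∈ (Finset.univ.erase u).filter (fun v => ¬ G.Adj u v),
            c v * ((κ v : ℝ) + 1) / (G.degree v + 1) := by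
    rw [hkey, Finset.sum_congr rfl (fun x _ => hterm x), hsub2, hsplit]
  linarith [hfinal, hboundsplit]
end

section
/- Let G be a finite connected graph, c: V(G) → ℝ_{>0}, and κ: V(G) → ℤ with 0 ≤ κ(u) ≤ d(u) for all u. If α(G,c,κ) = ∑_{u∈V(G)} c(u)(κ(u)+1)/(d(u)+1), then the quantity c(u)(d(u)−κ(u)) / (d(u)(d(u)+1)) is the same for every vertex u of G. -/
variable {V : Type*} [Fintype V] [DecidableEq V]

set_option linter.unusedSectionVars false

namespace ExtremalAux

open Finset

variable (G : SimpleGraph V) [DecidableRel G.Adj]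

/-- Number of neighbors of `x` that come before `x` in the ordering `σ`. -/
def X (σ : V ≃ Fin (Fintype.card V)) (x : V) : ℕ :=
  ((G.neighborFinset x).filter (fun t => σ t < σ x)).card

/-- Greedy degenerate set associated to an ordering. -/
def greedySet (κ : V → ℤ) (σ : V ≃ Fin (Fintype.card V)) : Finset V :=
  univ.filter (fun z => (X G σ z : ℤ) ≤ κ z)

/-- weight of the greedy set -/
noncomputable def wgt (c : V → ℝ) (κ : V → ℤ) (σ : V ≃ Fin (Fintype.card V)) : ℝ :=
  ∑ z : V, if (X G σ z : ℤ) ≤ κ z then c z else 0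

lemma wgt_eq_sum (c : V → ℝ) (κ : V → ℤ) (σ : V ≃ Fin (Fintype.card V)) :
    wgt G c κ σ = ∑ z ∈ greedySet G κ σ, c z := by
  rw [wgt, greedySet, sum_filter]

lemma sum_le_alphaW (c : V → ℝ) (κ : V → ℤ) (I : Finset V) (h : IsDegen G κ I) :
    ∑ u ∈ I, c u ≤ alphaW G c κ := by
  apply le_csSup
  · refine BddAbove.mono ?_
      ((univ.powerset.image (fun J : Finset V => ∑ u ∈ J, c u)) : Finset ℝ).bddAbove
    intro x hx
    obtain ⟨J, _, rfl⟩ := hx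
    simp only [Finset.coe_image, Set.mem_image, Finset.mem_coe, Finset.mem_image]
    exact ⟨J, by simp, rfl⟩
  · exact ⟨I, h, rfl⟩

lemma isDegen_greedySet (κ : V → ℤ) (σ : V ≃ Fin (Fintype.card V)) :
    IsDegen G κ (greedySet G κ σ) := by
  classical
  set l : List V := ((List.finRange (Fintype.card V)).map σ.symm).filter
    (fun z => decide ((X G σ z : ℤ) ≤ κ z)) with hl
  have hbnd : ((List.finRange (Fintype.card V)).map σ.symm).Nodup :=
    (List.nodup_finRange _).map σ.symm.injective
  have hmem : ∀ x : V, x ∈ (List.finRange (Fintype.card V)).map σ.symm := by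
    intro x
    exact List.mem_map.2 ⟨σ x, List.mem_finRange _, by simp⟩
  have hpair : ((List.finRange (Fintype.card V)).map σ.symm).Pairwise
      (fun a b => σ a < σ b) := by
    rw [List.pairwise_map]
    simpa using List.pairwise_lt_finRange _
  have hnd : l.Nodup := hbnd.filter _
  have hlp : l.Pairwise (fun a b => σ a < σ b) := hpair.filter _
  have hmem_l : ∀ z : V, z ∈ l ↔ (X G σ z : ℤ) ≤ κ z := by
    intro z
    simp [hl, List.mem_filter, hmem z]
  have htf : l.toFinset = greedySet G κ σ := by
    ext z
    simp only [List.mem_toFinset, hmem_l z, greedySet, Finset.mem_filter,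
      Finset.mem_univ, true_and]
  refine ⟨l, htf, hnd, ?_⟩
  intro i
  set x := l.get i with hx
  have hxl : x ∈ l := List.get_mem l i
  have hbefore : ∀ v ∈ l.take i, σ v < σ x := by
    have h2 := hlp
    rw [← List.take_append_drop (i : ℕ) l, List.pairwise_append] at h2
    have hxd : x ∈ l.drop i := by
      rw [List.drop_eq_getElem_cons i.isLt]
      have : x = l[(i:ℕ)] := rfl
      rw [this]
      exact List.mem_cons_self
    intro v hv
    exact h2.2.2 v hv x hxd
  refine le_trans ?_ ((hmem_l x).1 hxl)
  have hsub : ((l.take i).toFinset.filter (fun v => G.Adj x v)) ⊆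
      (G.neighborFinset x).filter (fun t => σ t < σ x) := by
    intro v hvmem
    rw [Finset.mem_filter] at hvmem ⊢
    obtain ⟨hv1, hv2⟩ := hvmem
    rw [List.mem_toFinset] at hv1
    exact ⟨(SimpleGraph.mem_neighborFinset G x v).2 hv2, hbefore v hv1⟩
  have := Finset.card_le_card hsub
  rw [X] at *
  exact_mod_cast this

lemma wgt_le_alphaW (c : V → ℝ) (κ : V → ℤ) (σ : V ≃ Fin (Fintype.card V)) :
    wgt G c κ σ ≤ alphaW G c κ := by
  rw [wgt_eq_sum]; exact sum_le_alphaW G c κ _ (isDegen_greedySet G κ σ)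

/-- rank of `w` within the closed neighborhood of `u`, under ordering `σ`. -/
def rankC (u : V) (σ : V ≃ Fin (Fintype.card V)) (w : V) : ℕ :=
  ((insert u (G.neighborFinset u)).filter (fun t => σ t < σ w)).card

lemma X_eq_rank (u : V) (σ : V ≃ Fin (Fintype.card V)) : X G σ u = rankC G u σ u := by
  rw [X, rankC, Finset.filter_insert, if_neg (lt_irrefl _)]

lemma mem_closedNbhd_self (u : V) : u ∈ insert u (G.neighborFinset u) :=
  Finset.mem_insert_self _ _

lemma card_closedNbhd (u : V) : (insert u (G.neighborFinset u)).card = G.degree u + 1 := by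
  rw [Finset.card_insert_of_notMem (by simp), SimpleGraph.card_neighborFinset_eq_degree]

lemma rank_le (u : V) (σ : V ≃ Fin (Fintype.card V)) (w : V)
    (hw : w ∈ insert u (G.neighborFinset u)) : rankC G u σ w ≤ G.degree u := by
  have hsub : (insert u (G.neighborFinset u)).filter (fun t => σ t < σ w) ⊆
      (insert u (G.neighborFinset u)).erase w := by
    intro t ht
    rw [Finset.mem_filter] at ht
    refine Finset.mem_erase.2 ⟨?_, ht.1⟩
    rintro rfl
    exact lt_irrefl _ ht.2
  have := Finset.card_le_card hsub
  rwa [Finset.card_erase_of_mem hw, card_closedNbhd, Nat.add_sub_cancel] at this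

lemma rank_strictMono (u : V) (σ : V ≃ Fin (Fintype.card V)) (a b : V)
    (ha : a ∈ insert u (G.neighborFinset u)) (hab : σ a < σ b) :
    rankC G u σ a < rankC G u σ b := by
  apply Finset.card_lt_card
  rw [Finset.ssubset_iff_of_subset]
  · exact ⟨a, Finset.mem_filter.2 ⟨ha, hab⟩, fun hmem =>
      lt_irrefl _ (Finset.mem_filter.1 hmem).2⟩
  · intro t ht
    rw [Finset.mem_filter] at ht ⊢
    exact ⟨ht.1, lt_trans ht.2 hab⟩

lemma rank_injOn (u : V) (σ : V ≃ Fin (Fintype.card V)) (a b : V)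
    (ha : a ∈ insert u (G.neighborFinset u)) (hb : b ∈ insert u (G.neighborFinset u))
    (hab : rankC G u σ a = rankC G u σ b) : a = b := by
  rcases lt_trichotomy (σ a) (σ b) with h | h | h
  · exact absurd hab (ne_of_lt (rank_strictMono G u σ a b ha h))
  · exact σ.injective h
  · exact absurd hab.symm (ne_of_lt (rank_strictMono G u σ b a hb h))

lemma rank_surjOn (u : V) (σ : V ≃ Fin (Fintype.card V)) (s : ℕ) (hs : s ≤ G.degree u) :
    ∃ w, w ∈ insert u (G.neighborFinset u) ∧ rankC G u σ w = s := by
  classical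
  have himg : (insert u (G.neighborFinset u)).image (rankC G u σ) =
      Finset.range (G.degree u + 1) := by
    apply Finset.eq_of_subset_of_card_le
    · intro m hm
      rw [Finset.mem_image] at hm
      obtain ⟨w, hw, rfl⟩ := hm
      exact Finset.mem_range.2 (Nat.lt_succ_of_le (rank_le G u σ w hw))
    · rw [Finset.card_range, Finset.card_image_of_injOn
        (fun a ha b hb hab => rank_injOn G u σ a b ha hb hab), card_closedNbhd]
  have : s ∈ (insert u (G.neighborFinset u)).image (rankC G u σ) := by
    rw [himg]
    exact Finset.mem_range.2 (Nat.lt_succ_of_le hs)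
  rw [Finset.mem_image] at this
  obtain ⟨w, hw, hrw⟩ := this
  exact ⟨w, hw, hrw⟩

lemma swap_mem_closedNbhd (u w t : V) (hw : w ∈ insert u (G.neighborFinset u))
    (ht : t ∈ insert u (G.neighborFinset u)) :
    Equiv.swap u w t ∈ insert u (G.neighborFinset u) := by
  rcases eq_or_ne t u with rfl | htu
  · rwa [Equiv.swap_apply_left]
  rcases eq_or_ne t w with rfl | htw
  · rw [Equiv.swap_apply_right]
    exact mem_closedNbhd_self G u
  · rwa [Equiv.swap_apply_of_ne_of_ne htu htw]

lemma rank_comp_swap (u : V) (σ : V ≃ Fin (Fintype.card V)) (w : V)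
    (hw : w ∈ insert u (G.neighborFinset u)) (z : V) :
    rankC G u ((Equiv.swap u w).trans σ) z = rankC G u σ ((Equiv.swap u w) z) := by
  rw [rankC, rankC]
  apply Finset.card_bij' (fun t _ => Equiv.swap u w t) (fun t _ => Equiv.swap u w t)
  · intro t ht
    rw [Finset.mem_filter] at ht ⊢
    exact ⟨swap_mem_closedNbhd G u w t hw ht.1, ht.2⟩
  · intro t ht
    rw [Finset.mem_filter] at ht ⊢
    refine ⟨swap_mem_closedNbhd G u w t hw ht.1, ?_⟩
    simpa [Equiv.trans_apply, Equiv.swap_apply_self] using ht.2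
  · intro t _
    exact Equiv.swap_apply_self _ _ _
  · intro t _
    exact Equiv.swap_apply_self _ _ _

lemma card_rank_eq (u : V) (r s : ℕ) (hr : r ≤ G.degree u) (hs : s ≤ G.degree u) :
    (univ.filter (fun σ : V ≃ Fin (Fintype.card V) => rankC G u σ u = r)).card =
    (univ.filter (fun σ : V ≃ Fin (Fintype.card V) => rankC G u σ u = s)).card := by
  classical
  have hex : ∀ (σ : V ≃ Fin (Fintype.card V)) (m : ℕ), m ≤ G.degree u →
      ∃ w, w ∈ insert u (G.neighborFinset u) ∧ rankC G u σ w = m :=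
    fun σ m hm => rank_surjOn G u σ m hm
  have key : ∀ (σ : V ≃ Fin (Fintype.card V)) (a b : ℕ) (ha : a ≤ G.degree u)
      (hb : b ≤ G.degree u), rankC G u σ u = a →
      rankC G u ((Equiv.swap u (hex σ b hb).choose).trans σ) u = b ∧
      rankC G u ((Equiv.swap u (hex σ b hb).choose).trans σ) (hex σ b hb).choose = a := by
    intro σ a b ha hb hσa
    obtain ⟨hwC, hwr⟩ := (hex σ b hb).choose_spec
    constructor
    · rw [rank_comp_swap G u σ _ hwC u, Equiv.swap_apply_left, hwr]
    · rw [rank_comp_swap G u σ _ hwC, Equiv.swap_apply_right, hσa]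
  apply Finset.card_bij' (fun σ _ => (Equiv.swap u (hex σ s hs).choose).trans σ)
    (fun σ _ => (Equiv.swap u (hex σ r hr).choose).trans σ)
  · intro σ hσ
    rw [Finset.mem_filter] at hσ ⊢
    exact ⟨Finset.mem_univ _, (key σ r s hr hs hσ.2).1⟩
  · intro σ hσ
    rw [Finset.mem_filter] at hσ ⊢
    exact ⟨Finset.mem_univ _, (key σ s r hs hr hσ.2).1⟩
  · intro σ hσ
    rw [Finset.mem_filter] at hσ
    obtain ⟨hk1, hk2⟩ := key σ r s hr hs hσ.2
    set w := (hex σ s hs).choose with hwdef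
    set σ' := (Equiv.swap u w).trans σ with hσ'def
    obtain ⟨hw'C, hw'r⟩ := (hex σ' r hr).choose_spec
    have hww : (hex σ' r hr).choose = w := by
      apply rank_injOn G u σ' _ _ hw'C ((hex σ s hs).choose_spec.1)
      rw [hw'r, hk2]
    rw [hww]
    refine Equiv.ext fun x => ?_
    simp [hσ'def, Equiv.trans_apply, Equiv.swap_apply_self]
  · intro σ hσ
    rw [Finset.mem_filter] at hσ
    obtain ⟨hk1, hk2⟩ := key σ s r hs hr hσ.2
    set w := (hex σ r hr).choose with hwdef
    set σ' := (Equiv.swap u w).trans σ with hσ'def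
    obtain ⟨hw'C, hw'r⟩ := (hex σ' s hs).choose_spec
    have hww : (hex σ' s hs).choose = w := by
      apply rank_injOn G u σ' _ _ hw'C ((hex σ r hr).choose_spec.1)
      rw [hw'r, hk2]
    rw [hww]
    refine Equiv.ext fun x => ?_
    simp [hσ'def, Equiv.trans_apply, Equiv.swap_apply_self]

/-- The counting lemma : number of orderings where `u` has at most `k` earlier
neighbors, times `(d+1)`, equals `(k+1) * n!`. -/
lemma count_good (u : V) (k : ℕ) (hk : k ≤ G.degree u) :
    (univ.filter (fun σ : V ≃ Fin (Fintype.card V) => X G σ u ≤ k)).card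
      * (G.degree u + 1) = (k + 1) * (Fintype.card V).factorial := by
  classical
  set N0 := (univ.filter (fun σ : V ≃ Fin (Fintype.card V) => rankC G u σ u = 0)).card with hN0
  have step : ∀ m : ℕ, m ≤ G.degree u →
      (univ.filter (fun σ : V ≃ Fin (Fintype.card V) => X G σ u ≤ m)).card = (m + 1) * N0 := by
    intro m hm
    have hXr : (univ.filter (fun σ : V ≃ Fin (Fintype.card V) => X G σ u ≤ m)) =
        (univ.filter (fun σ : V ≃ Fin (Fintype.card V) => rankC G u σ u ≤ m)) := by
      apply Finset.filter_congr
      intro σ _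
      rw [X_eq_rank]
    rw [hXr]
    rw [Finset.card_eq_sum_card_fiberwise
      (f := fun σ : V ≃ Fin (Fintype.card V) => rankC G u σ u) (t := Finset.range (m + 1))
      (fun σ hσ => Finset.mem_range.2 (Nat.lt_succ_of_le (Finset.mem_filter.1 hσ).2))]
    have hfib : ∀ r ∈ Finset.range (m + 1),
        ((univ.filter (fun σ : V ≃ Fin (Fintype.card V) => rankC G u σ u ≤ m)).filter
          (fun σ => rankC G u σ u = r)).card = N0 := by
      intro r hr
      rw [Finset.mem_range] at hr
      have : ((univ.filter (fun σ : V ≃ Fin (Fintype.card V) => rankC G u σ u ≤ m)).filter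
          (fun σ => rankC G u σ u = r)) =
          univ.filter (fun σ : V ≃ Fin (Fintype.card V) => rankC G u σ u = r) := by
        rw [Finset.filter_filter]
        apply Finset.filter_congr
        intro σ _
        constructor
        · exact fun h => h.2
        · exact fun h => ⟨h ▸ Nat.lt_succ_iff.1 hr, h⟩
      rw [this, hN0]
      exact card_rank_eq G u r 0 (le_trans (Nat.lt_succ_iff.1 hr) hm) (Nat.zero_le _)
    rw [Finset.sum_congr rfl hfib, Finset.sum_const, Finset.card_range, smul_eq_mul]
  have htotal : (Fintype.card V).factorial = (G.degree u + 1) * N0 := by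
    have hall : (univ.filter (fun σ : V ≃ Fin (Fintype.card V) => X G σ u ≤ G.degree u)) =
        univ := by
      apply Finset.filter_true_of_mem
      intro σ _
      rw [X_eq_rank]
      exact rank_le G u σ u (mem_closedNbhd_self G u)
    have := step (G.degree u) le_rfl
    rw [hall, Finset.card_univ, Fintype.card_equiv (Fintype.equivFin V)] at this
    exact this
  rw [step k hk, htotal]
  ring

/-- All greedy weights are equal to alphaW under the extremality assumption. -/
lemma wgt_eq_alphaW (c : V → ℝ) (hc : ∀ u, 0 < c u) (κ : V → ℤ)
    (hκ : ∀ u, 0 ≤ κ u ∧ κ u ≤ (G.degree u : ℤ))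
    (hext : alphaW G c κ = ∑ u : V, c u * ((κ u : ℝ) + 1) / (G.degree u + 1))
    (σ : V ≃ Fin (Fintype.card V)) :
    wgt G c κ σ = alphaW G c κ := by
  classical
  have hcard : ∀ z : V,
      ((univ.filter (fun τ : V ≃ Fin (Fintype.card V) => (X G τ z : ℤ) ≤ κ z)).card : ℝ)
        = ((κ z : ℝ) + 1) * (Fintype.card V).factorial / ((G.degree z : ℝ) + 1) := by
    intro z
    set k := (κ z).toNat with hkdef
    have hk0 : (k : ℤ) = κ z := Int.toNat_of_nonneg (hκ z).1
    have hkd : k ≤ G.degree z := by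
      have := (hκ z).2
      omega
    have hpred : (univ.filter (fun τ : V ≃ Fin (Fintype.card V) => (X G τ z : ℤ) ≤ κ z)) =
        (univ.filter (fun τ : V ≃ Fin (Fintype.card V) => X G τ z ≤ k)) := by
      apply Finset.filter_congr
      intro τ _
      rw [← hk0]
      exact_mod_cast Iff.rfl
    have hcg := count_good G z k hkd
    rw [hpred]
    have hd1 : ((G.degree z : ℝ) + 1) ≠ 0 := by positivity
    rw [eq_div_iff hd1]
    have hkr : ((κ z : ℝ)) = (k : ℝ) := by exact_mod_cast hk0.symm
    rw [hkr]
    exact_mod_cast hcg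
  have hsum : ∑ τ : V ≃ Fin (Fintype.card V), wgt G c κ τ =
      ((Fintype.card V).factorial : ℝ) * alphaW G c κ := by
    rw [hext]
    unfold wgt
    rw [Finset.sum_comm]
    rw [Finset.mul_sum]
    apply Finset.sum_congr rfl
    intro z _
    rw [← Finset.sum_filter]
    rw [Finset.sum_const, nsmul_eq_mul, hcard z]
    field_simp
  by_contra hne
  have hlt : wgt G c κ σ < alphaW G c κ :=
    lt_of_le_of_ne (wgt_le_alphaW G c κ σ) hne
  have hstrict : ∑ τ : V ≃ Fin (Fintype.card V), wgt G c κ τ <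
      ∑ _τ : V ≃ Fin (Fintype.card V), alphaW G c κ := by
    apply Finset.sum_lt_sum
    · intro τ _
      exact wgt_le_alphaW G c κ τ
    · exact ⟨σ, Finset.mem_univ σ, hlt⟩
  rw [Finset.sum_const, Finset.card_univ, Fintype.card_equiv (Fintype.equivFin V),
    nsmul_eq_mul, hsum] at hstrict
  exact lt_irrefl _ hstrict

/-- Construct an ordering from a complete nodup list. -/
lemma exists_ordering (L : List V) (nd : L.Nodup) (hcom : ∀ x, x ∈ L) :
    ∃ σ : V ≃ Fin (Fintype.card V), ∀ t, (σ t : ℕ) = L.idxOf t := by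
  have hlen : L.length = Fintype.card V := by
    rw [← List.toFinset_card_of_nodup nd]
    congr 1
    apply Finset.eq_univ_iff_forall.2
    intro x; simpa using hcom x
  have hf : ∀ t : V, L.idxOf t < Fintype.card V := by
    intro t; rw [← hlen]; exact List.idxOf_lt_length_iff.2 (hcom t)
  set f : V → Fin (Fintype.card V) := fun t => ⟨L.idxOf t, hf t⟩ with hfdef
  have hinj : Function.Injective f := by
    intro a b hab
    have : L.idxOf a = L.idxOf b := congrArg Fin.val hab
    exact (List.idxOf_inj (hcom a)).1 this
  have hbij : Function.Bijective f :=
    (Fintype.bijective_iff_injective_and_card f).2 ⟨hinj, by simp⟩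
  exact ⟨Equiv.ofBijective f hbij, fun t => rfl⟩

/-- The key local relation coming from swapping two consecutive vertices. -/
lemma swap_relation (c : V → ℝ) (hc : ∀ u, 0 < c u) (κ : V → ℤ)
    (hκ : ∀ u, 0 ≤ κ u ∧ κ u ≤ (G.degree u : ℤ))
    (hext : alphaW G c κ = ∑ u : V, c u * ((κ u : ℝ) + 1) / (G.degree u + 1))
    (u v : V) (huv : G.Adj u v) (P : Finset V) (hu : u ∉ P) (hv : v ∉ P) :
    ((((G.neighborFinset u).filter (· ∈ P)).card : ℤ) = κ u ↔
      (((G.neighborFinset v).filter (· ∈ P)).card : ℤ) = κ v) ∧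
    ((((G.neighborFinset u).filter (· ∈ P)).card : ℤ) = κ u → c u = c v) := by
  classical
  have hne : u ≠ v := G.ne_of_adj huv
  set A := P.toList with hA
  set R := (univ \ (insert u (insert v P))).toList with hR
  have hmemR : ∀ x : V, x ∈ R ↔ (x ≠ u ∧ x ≠ v ∧ x ∉ P) := by
    intro x
    rw [hR, Finset.mem_toList, Finset.mem_sdiff]
    simp only [Finset.mem_univ, true_and, Finset.mem_insert, not_or]
  have hmemA : ∀ x : V, x ∈ A ↔ x ∈ P := fun x => Finset.mem_toList
  set L1 := A ++ u :: v :: R with hL1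
  set L2 := A ++ v :: u :: R with hL2
  have hndR : R.Nodup := Finset.nodup_toList _
  have hnd1 : L1.Nodup := by
    rw [hL1, List.nodup_append]
    refine ⟨Finset.nodup_toList _, ?_, ?_⟩
    · rw [List.nodup_cons, List.nodup_cons]
      refine ⟨?_, ?_, hndR⟩
      · intro hmem
        rcases List.mem_cons.1 hmem with h | h
        · exact hne h
        · exact ((hmemR u).1 h).1 rfl
      · intro hmem
        exact ((hmemR v).1 hmem).2.1 rfl
    · intro x hxA y hxC hxy
      subst hxy
      have hxP := (hmemA x).1 hxA
      rcases List.mem_cons.1 hxC with h | h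
      · exact hu (h ▸ hxP)
      rcases List.mem_cons.1 h with h' | h'
      · exact hv (h' ▸ hxP)
      · exact ((hmemR x).1 h').2.2 hxP
  have hnd2 : L2.Nodup := by
    rw [hL2, List.nodup_append]
    refine ⟨Finset.nodup_toList _, ?_, ?_⟩
    · rw [List.nodup_cons, List.nodup_cons]
      refine ⟨?_, ?_, hndR⟩
      · intro hmem
        rcases List.mem_cons.1 hmem with h | h
        · exact hne h.symm
        · exact ((hmemR v).1 h).2.1 rfl
      · intro hmem
        exact ((hmemR u).1 hmem).1 rfl
    · intro x hxA y hxC hxy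
      subst hxy
      have hxP := (hmemA x).1 hxA
      rcases List.mem_cons.1 hxC with h | h
      · exact hv (h ▸ hxP)
      rcases List.mem_cons.1 h with h' | h'
      · exact hu (h' ▸ hxP)
      · exact ((hmemR x).1 h').2.2 hxP
  have hcom1 : ∀ x : V, x ∈ L1 := by
    intro x
    rw [hL1, List.mem_append, List.mem_cons, List.mem_cons]
    by_cases hxP : x ∈ P
    · exact Or.inl ((hmemA x).2 hxP)
    by_cases hxu : x = u
    · exact Or.inr (Or.inl hxu)
    by_cases hxv : x = v
    · exact Or.inr (Or.inr (Or.inl hxv))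
    · exact Or.inr (Or.inr (Or.inr ((hmemR x).2 ⟨hxu, hxv, hxP⟩)))
  have hcom2 : ∀ x : V, x ∈ L2 := by
    intro x
    rw [hL2, List.mem_append, List.mem_cons, List.mem_cons]
    by_cases hxP : x ∈ P
    · exact Or.inl ((hmemA x).2 hxP)
    by_cases hxv : x = v
    · exact Or.inr (Or.inl hxv)
    by_cases hxu : x = u
    · exact Or.inr (Or.inr (Or.inl hxu))
    · exact Or.inr (Or.inr (Or.inr ((hmemR x).2 ⟨hxu, hxv, hxP⟩)))
  obtain ⟨σ1, hσ1⟩ := exists_ordering L1 hnd1 hcom1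
  obtain ⟨σ2, hσ2⟩ := exists_ordering L2 hnd2 hcom2
  set p := A.length with hp
  have huA : u ∉ A := fun h => hu ((hmemA u).1 h)
  have hvA : v ∉ A := fun h => hv ((hmemA v).1 h)
  have i1u : L1.idxOf u = p := by
    rw [hL1, List.idxOf_append_of_notMem huA, List.idxOf_cons_self]
    omega
  have i1v : L1.idxOf v = p + 1 := by
    rw [hL1, List.idxOf_append_of_notMem hvA, List.idxOf_cons_ne _ hne,
      List.idxOf_cons_self]
  have i2v : L2.idxOf v = p := by
    rw [hL2, List.idxOf_append_of_notMem hvA, List.idxOf_cons_self]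
    omega
  have i2u : L2.idxOf u = p + 1 := by
    rw [hL2, List.idxOf_append_of_notMem huA, List.idxOf_cons_ne _ hne.symm,
      List.idxOf_cons_self]
  have iPx : ∀ x ∈ P, L1.idxOf x < p ∧ L1.idxOf x = L2.idxOf x := by
    intro x hx
    have hxA : x ∈ A := (hmemA x).2 hx
    rw [hL1, hL2, List.idxOf_append_of_mem hxA, List.idxOf_append_of_mem hxA]
    exact ⟨List.idxOf_lt_length_iff.2 hxA, rfl⟩
  have iRx : ∀ x, x ∉ P → x ≠ u → x ≠ v → p + 1 < L1.idxOf x ∧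
      L1.idxOf x = L2.idxOf x := by
    intro x hxP hxu hxv
    have hxA : x ∉ A := fun h => hxP ((hmemA x).1 h)
    rw [hL1, hL2, List.idxOf_append_of_notMem hxA, List.idxOf_append_of_notMem hxA,
      List.idxOf_cons_ne _ (Ne.symm hxu), List.idxOf_cons_ne _ (Ne.symm hxv),
      List.idxOf_cons_ne _ (Ne.symm hxv), List.idxOf_cons_ne _ (Ne.symm hxu)]
    omega
  have c1u : ∀ t, t ≠ u → (σ1 t < σ1 u ↔ t ∈ P) := by
    intro t ht
    rw [Fin.lt_def, hσ1 t, hσ1 u, i1u]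
    by_cases htP : t ∈ P
    · simp only [htP, iff_true]
      exact (iPx t htP).1
    by_cases htv : t = v
    · subst htv
      rw [i1v]
      simp only [htP, iff_false]
      omega
    · have hgt := (iRx t htP ht htv).1
      simp only [htP, iff_false]
      omega
  have c1v : ∀ t, t ≠ v → (σ1 t < σ1 v ↔ (t ∈ P ∨ t = u)) := by
    intro t ht
    rw [Fin.lt_def, hσ1 t, hσ1 v, i1v]
    by_cases htP : t ∈ P
    · have := (iPx t htP).1
      simp only [htP, true_or, iff_true]
      omega
    by_cases htu : t = u
    · subst htu
      rw [i1u]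
      simp only [htP, false_or, iff_true]
      omega
    · have hgt := (iRx t htP htu ht).1
      simp only [htP, htu, or_self, iff_false, false_or]
      omega
  have c2v : ∀ t, t ≠ v → (σ2 t < σ2 v ↔ t ∈ P) := by
    intro t ht
    rw [Fin.lt_def, hσ2 t, hσ2 v, i2v]
    by_cases htP : t ∈ P
    · have h1 := (iPx t htP).1
      have h2 := (iPx t htP).2
      simp only [htP, iff_true]
      omega
    by_cases htu : t = u
    · subst htu
      rw [i2u]
      simp only [htP, iff_false]
      omega
    · have hgt := (iRx t htP htu ht).1
      have heq := (iRx t htP htu ht).2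
      simp only [htP, iff_false]
      omega
  have c2u : ∀ t, t ≠ u → (σ2 t < σ2 u ↔ (t ∈ P ∨ t = v)) := by
    intro t ht
    rw [Fin.lt_def, hσ2 t, hσ2 u, i2u]
    by_cases htP : t ∈ P
    · have h1 := (iPx t htP).1
      have h2 := (iPx t htP).2
      simp only [htP, true_or, iff_true]
      omega
    by_cases htv : t = v
    · subst htv
      rw [i2v]
      simp only [htP, false_or, iff_true]
      omega
    · have hgt := (iRx t htP ht htv).1
      have heq := (iRx t htP ht htv).2
      simp only [htP, htv, or_self, iff_false, false_or]
      omega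
  have hXz : ∀ z, z ≠ u → z ≠ v → X G σ1 z = X G σ2 z := by
    intro z hzu hzv
    rw [X, X]
    apply congrArg Finset.card
    apply Finset.filter_congr
    intro t _
    have hzidx : L1.idxOf z = L2.idxOf z ∧ (L1.idxOf z < p ∨ p + 1 < L1.idxOf z) := by
      by_cases hzP : z ∈ P
      · obtain ⟨h1, h2⟩ := iPx z hzP
        exact ⟨h2, Or.inl h1⟩
      · obtain ⟨h1, h2⟩ := iRx z hzP hzu hzv
        exact ⟨h2, Or.inr h1⟩
    rw [Fin.lt_def, Fin.lt_def, hσ1 t, hσ1 z, hσ2 t, hσ2 z, ← hzidx.1]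
    by_cases htu : t = u
    · subst htu
      rw [i1u, i2u]
      obtain ⟨_, h⟩ := hzidx
      omega
    by_cases htv : t = v
    · subst htv
      rw [i1v, i2v]
      obtain ⟨_, h⟩ := hzidx
      omega
    by_cases htP : t ∈ P
    · rw [← (iPx t htP).2]
    · rw [← (iRx t htP htu htv).2]
  set a := ((G.neighborFinset u).filter (· ∈ P)).card with ha
  set b := ((G.neighborFinset v).filter (· ∈ P)).card with hb
  have hXu1 : X G σ1 u = a := by
    rw [X, ha]
    apply congrArg Finset.card
    apply Finset.filter_congr
    intro t htN
    exact c1u t ((G.mem_neighborFinset u t).1 htN).ne'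
  have hXv2 : X G σ2 v = b := by
    rw [X, hb]
    apply congrArg Finset.card
    apply Finset.filter_congr
    intro t htN
    exact c2v t ((G.mem_neighborFinset v t).1 htN).ne'
  have hXu2 : X G σ2 u = a + 1 := by
    rw [X]
    have hset : (G.neighborFinset u).filter (fun t => σ2 t < σ2 u) =
        insert v ((G.neighborFinset u).filter (· ∈ P)) := by
      ext t
      simp only [Finset.mem_filter, Finset.mem_insert]
      constructor
      · rintro ⟨htN, hlt⟩
        have htu : t ≠ u := ((G.mem_neighborFinset u t).1 htN).ne'
        rcases (c2u t htu).1 hlt with h | h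
        · exact Or.inr ⟨htN, h⟩
        · exact Or.inl h
      · rintro (rfl | ⟨htN, htP⟩)
        · exact ⟨(G.mem_neighborFinset u t).2 huv, (c2u t hne.symm).2 (Or.inr rfl)⟩
        · have htu : t ≠ u := ((G.mem_neighborFinset u t).1 htN).ne'
          exact ⟨htN, (c2u t htu).2 (Or.inl htP)⟩
    rw [hset, Finset.card_insert_of_notMem, ha]
    intro hmem
    exact hv (Finset.mem_filter.1 hmem).2
  have hXv1 : X G σ1 v = b + 1 := by
    rw [X]
    have hset : (G.neighborFinset v).filter (fun t => σ1 t < σ1 v) =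
        insert u ((G.neighborFinset v).filter (· ∈ P)) := by
      ext t
      simp only [Finset.mem_filter, Finset.mem_insert]
      constructor
      · rintro ⟨htN, hlt⟩
        have htv : t ≠ v := ((G.mem_neighborFinset v t).1 htN).ne'
        rcases (c1v t htv).1 hlt with h | h
        · exact Or.inr ⟨htN, h⟩
        · exact Or.inl h
      · rintro (rfl | ⟨htN, htP⟩)
        · exact ⟨(G.mem_neighborFinset v t).2 huv.symm, (c1v t hne).2 (Or.inr rfl)⟩
        · have htv : t ≠ v := ((G.mem_neighborFinset v t).1 htN).ne'
          exact ⟨htN, (c1v t htv).2 (Or.inl htP)⟩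
    rw [hset, Finset.card_insert_of_notMem, hb]
    intro hmem
    exact hu (Finset.mem_filter.1 hmem).2
  -- weight comparison
  have hw12 : wgt G c κ σ1 = wgt G c κ σ2 := by
    rw [wgt_eq_alphaW G c hc κ hκ hext σ1, wgt_eq_alphaW G c hc κ hκ hext σ2]
  have hvmem : v ∈ univ.erase u := Finset.mem_erase.2 ⟨hne.symm, Finset.mem_univ v⟩
  have hexp : ∀ σ : V ≃ Fin (Fintype.card V), wgt G c κ σ =
      (if (X G σ u : ℤ) ≤ κ u then c u else 0) + ((if (X G σ v : ℤ) ≤ κ v then c v else 0) +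
        ∑ z ∈ (univ.erase u).erase v, (if (X G σ z : ℤ) ≤ κ z then c z else 0)) := by
    intro σ
    rw [wgt, ← Finset.add_sum_erase _ _ (Finset.mem_univ u), ← Finset.add_sum_erase _ _ hvmem]
  rw [hexp σ1, hexp σ2] at hw12
  have htail : ∑ z ∈ (univ.erase u).erase v, (if (X G σ1 z : ℤ) ≤ κ z then c z else 0) =
      ∑ z ∈ (univ.erase u).erase v, (if (X G σ2 z : ℤ) ≤ κ z then c z else 0) := by
    apply Finset.sum_congr rfl
    intro z hz
    have hzv : z ≠ v := (Finset.mem_erase.1 hz).1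
    have hzu : z ≠ u := (Finset.mem_erase.1 (Finset.mem_erase.1 hz).2).1
    rw [hXz z hzu hzv]
  rw [htail] at hw12
  have E' : (if (a : ℤ) ≤ κ u then c u else 0) + (if (b : ℤ) + 1 ≤ κ v then c v else 0) =
      (if (a : ℤ) + 1 ≤ κ u then c u else 0) + (if (b : ℤ) ≤ κ v then c v else 0) := by
    rw [hXu1, hXu2, hXv1, hXv2] at hw12
    push_cast at hw12
    linarith [hw12]
  have key1 : (a : ℤ) = κ u → ((b : ℤ) = κ v ∧ c u = c v) := by
    intro h
    have h1 : (a : ℤ) ≤ κ u := le_of_eq h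
    have h3 : ¬((a : ℤ) + 1 ≤ κ u) := by omega
    rw [if_pos h1, if_neg h3] at E'
    by_cases h4 : (b : ℤ) ≤ κ v
    · by_cases h2 : (b : ℤ) + 1 ≤ κ v
      · rw [if_pos h2, if_pos h4] at E'
        exfalso
        linarith [hc u]
      · rw [if_neg h2, if_pos h4] at E'
        exact ⟨by omega, by linarith⟩
    · rw [if_neg (by omega : ¬((b : ℤ) + 1 ≤ κ v)), if_neg h4] at E'
      exfalso
      linarith [hc u]
  have key2 : (b : ℤ) = κ v → (a : ℤ) = κ u := by
    intro h
    by_contra hau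
    have h4 : (b : ℤ) ≤ κ v := le_of_eq h
    have h2 : ¬((b : ℤ) + 1 ≤ κ v) := by omega
    rw [if_neg h2, if_pos h4] at E'
    by_cases h1 : (a : ℤ) ≤ κ u
    · have h3 : (a : ℤ) + 1 ≤ κ u := by omega
      rw [if_pos h1, if_pos h3] at E'
      linarith [hc v]
    · rw [if_neg h1, if_neg (by omega : ¬((a : ℤ) + 1 ≤ κ u))] at E'
      linarith [hc v]
  exact ⟨⟨fun h => (key1 h).1, key2⟩, fun h => (key1 h).2⟩

lemma filter_mem_card_of_subset (s P : Finset V) (h : P ⊆ s) :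
    (s.filter (· ∈ P)).card = P.card := by
  have hset : s.filter (· ∈ P) = P := by
    ext t
    simp only [Finset.mem_filter]
    exact ⟨fun ht => ht.2, fun ht => ⟨h ht, ht⟩⟩
  rw [hset]

lemma nbhd_sub (c : V → ℝ) (hc : ∀ u, 0 < c u) (κ : V → ℤ)
    (hκ : ∀ u, 0 ≤ κ u ∧ κ u ≤ (G.degree u : ℤ))
    (hext : alphaW G c κ = ∑ u : V, c u * ((κ u : ℝ) + 1) / (G.degree u + 1))
    (u v : V) (huv : G.Adj u v)
    (hu : κ u < (G.degree u : ℤ)) (hv : κ v < (G.degree v : ℤ)) :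
    (G.neighborFinset u).erase v ⊆ (G.neighborFinset v).erase u := by
  intro x hx
  by_contra hxn
  obtain ⟨hxv, hxNu⟩ := Finset.mem_erase.1 hx
  have hxu : x ≠ u := ((G.mem_neighborFinset u x).1 hxNu).ne'
  have hxNv : x ∉ G.neighborFinset v := fun h => hxn (Finset.mem_erase.2 ⟨hxu, h⟩)
  have hκu0 := (hκ u).1
  by_cases hk0 : κ u = 0
  · have h0 := swap_relation G c hc κ hκ hext u v huv ∅
      (Finset.notMem_empty u) (Finset.notMem_empty v)
    have ha0 : ((G.neighborFinset u).filter (· ∈ (∅ : Finset V))).card = 0 := by simp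
    have hb0 : ((G.neighborFinset v).filter (· ∈ (∅ : Finset V))).card = 0 := by simp
    rw [ha0, hb0] at h0
    have hκv0 : κ v = 0 := by
      have := (h0.1).1 (by omega)
      omega
    have hx1 := swap_relation G c hc κ hκ hext u v huv {x}
      (by simp [Ne.symm hxu]) (by simp [Ne.symm hxv])
    have ha1 : ((G.neighborFinset u).filter (· ∈ ({x} : Finset V))).card = 1 := by
      have hset : (G.neighborFinset u).filter (· ∈ ({x} : Finset V)) = {x} := by
        ext t
        simp only [Finset.mem_filter, Finset.mem_singleton]
        constructor
        · exact fun ht => ht.2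
        · rintro rfl
          exact ⟨hxNu, rfl⟩
      rw [hset, Finset.card_singleton]
    have hb1 : ((G.neighborFinset v).filter (· ∈ ({x} : Finset V))).card = 0 := by
      rw [Finset.card_eq_zero]
      apply Finset.filter_eq_empty_iff.2
      intro t htN
      simp only [Finset.mem_singleton]
      rintro rfl
      exact hxNv htN
    rw [ha1, hb1] at hx1
    have := (hx1.1).2 (by omega)
    omega
  · have hcard_erase : ((G.neighborFinset u).erase v).card = G.degree u - 1 := by
      rw [Finset.card_erase_of_mem ((G.mem_neighborFinset u v).2 huv),
        SimpleGraph.card_neighborFinset_eq_degree]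
    have hcard2 : (((G.neighborFinset u).erase v).erase x).card = G.degree u - 2 := by
      rw [Finset.card_erase_of_mem hx, hcard_erase]
      omega
    obtain ⟨P', hP'sub, hP'card⟩ := Finset.exists_subset_card_eq
      (show (κ u).toNat - 1 ≤ (((G.neighborFinset u).erase v).erase x).card by
        rw [hcard2]; omega)
    set P := insert x P' with hP
    have hxP' : x ∉ P' := fun h => (Finset.mem_erase.1 (hP'sub h)).1 rfl
    have hPcard : P.card = (κ u).toNat := by
      rw [hP, Finset.card_insert_of_notMem hxP', hP'card]
      omega
    have hPsub : P ⊆ (G.neighborFinset u).erase v := by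
      rw [hP]
      intro t ht
      rcases Finset.mem_insert.1 ht with rfl | h
      · exact hx
      · exact Finset.mem_of_mem_erase (hP'sub h)
    have huP : u ∉ P := fun h =>
      G.irrefl ((G.mem_neighborFinset u u).1 (Finset.mem_of_mem_erase (hPsub h)))
    have hvP : v ∉ P := fun h => (Finset.mem_erase.1 (hPsub h)).1 rfl
    have haP : ((G.neighborFinset u).filter (· ∈ P)).card = (κ u).toNat := by
      rw [filter_mem_card_of_subset _ _ (hPsub.trans (Finset.erase_subset _ _)), hPcard]
    have hrel := swap_relation G c hc κ hκ hext u v huv P huP hvP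
    have haPZ : (((G.neighborFinset u).filter (· ∈ P)).card : ℤ) = κ u := by
      rw [haP]; omega
    have hbP := (hrel.1).1 haPZ
    have huP' : u ∉ P' := fun h => huP (Finset.mem_insert_of_mem h)
    have hvP' : v ∉ P' := fun h => hvP (Finset.mem_insert_of_mem h)
    have hrel2 := swap_relation G c hc κ hκ hext u v huv P' huP' hvP'
    have hbeq : (G.neighborFinset v).filter (· ∈ P') = (G.neighborFinset v).filter (· ∈ P) := by
      apply Finset.filter_congr
      intro t htN
      rw [hP]
      simp only [Finset.mem_insert]
      constructor
      · exact fun h => Or.inr h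
      · rintro (rfl | h)
        · exact absurd htN hxNv
        · exact h
    have haP' : ((G.neighborFinset u).filter (· ∈ P')).card = (κ u).toNat - 1 := by
      rw [filter_mem_card_of_subset _ _
        ((hP'sub.trans (Finset.erase_subset _ _)).trans (Finset.erase_subset _ _)), hP'card]
    have hfin := (hrel2.1).2 (by rw [hbeq]; exact hbP)
    rw [haP'] at hfin
    omega

lemma adj_constant (c : V → ℝ) (hc : ∀ u, 0 < c u) (κ : V → ℤ)
    (hκ : ∀ u, 0 ≤ κ u ∧ κ u ≤ (G.degree u : ℤ))
    (hext : alphaW G c κ = ∑ u : V, c u * ((κ u : ℝ) + 1) / (G.degree u + 1))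
    (u v : V) (huv : G.Adj u v) :
    c u * ((G.degree u : ℝ) - κ u) / ((G.degree u : ℝ) * ((G.degree u : ℝ) + 1)) =
    c v * ((G.degree v : ℝ) - κ v) / ((G.degree v : ℝ) * ((G.degree v : ℝ) + 1)) := by
  have hvNu : v ∈ G.neighborFinset u := (G.mem_neighborFinset u v).2 huv
  have huNv : u ∈ G.neighborFinset v := (G.mem_neighborFinset v u).2 huv.symm
  have himp : ∀ u' v', G.Adj u' v' → κ u' = (G.degree u' : ℤ) →
      κ v' < (G.degree v' : ℤ) → False := by
    intro u' v' h' hku hkv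
    have hv'Nu : v' ∈ G.neighborFinset u' := (G.mem_neighborFinset u' v').2 h'
    have hu'Nv : u' ∈ G.neighborFinset v' := (G.mem_neighborFinset v' u').2 h'.symm
    have hcard : ((G.neighborFinset v').erase u').card = G.degree v' - 1 := by
      rw [Finset.card_erase_of_mem hu'Nv, SimpleGraph.card_neighborFinset_eq_degree]
    have hk0 := (hκ v').1
    obtain ⟨P, hPsub, hPcard⟩ := Finset.exists_subset_card_eq
      (show (κ v').toNat ≤ ((G.neighborFinset v').erase u').card by rw [hcard]; omega)
    have huP : u' ∉ P := fun h => (Finset.mem_erase.1 (hPsub h)).1 rfl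
    have hvP : v' ∉ P := fun h =>
      G.irrefl ((G.mem_neighborFinset v' v').1 (Finset.mem_of_mem_erase (hPsub h)))
    have hrel := swap_relation G c hc κ hκ hext u' v' h' P huP hvP
    have hbZ : (((G.neighborFinset v').filter (· ∈ P)).card : ℤ) = κ v' := by
      rw [filter_mem_card_of_subset _ _ (hPsub.trans (Finset.erase_subset _ _)), hPcard]
      omega
    have haZ := (hrel.1).2 hbZ
    have hasub : (G.neighborFinset u').filter (· ∈ P) ⊆ (G.neighborFinset u').erase v' := by
      intro t ht
      obtain ⟨h1, h2⟩ := Finset.mem_filter.1 ht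
      refine Finset.mem_erase.2 ⟨?_, h1⟩
      rintro rfl
      exact hvP h2
    have hale := Finset.card_le_card hasub
    have hcard' : ((G.neighborFinset u').erase v').card = G.degree u' - 1 := by
      rw [Finset.card_erase_of_mem hv'Nu, SimpleGraph.card_neighborFinset_eq_degree]
    rw [hcard'] at hale
    have hd1 : 1 ≤ G.degree u' := by
      rw [← SimpleGraph.card_neighborFinset_eq_degree]
      exact Finset.card_pos.2 ⟨v', hv'Nu⟩
    omega
  rcases eq_or_lt_of_le (hκ u).2 with hku | hku
  · rcases eq_or_lt_of_le (hκ v).2 with hkv | hkv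
    · have h1 : ((κ u : ℝ)) = (G.degree u : ℝ) := by exact_mod_cast hku
      have h2 : ((κ v : ℝ)) = (G.degree v : ℝ) := by exact_mod_cast hkv
      rw [h1, h2, sub_self, sub_self, mul_zero, mul_zero, zero_div, zero_div]
    · exact (himp u v huv hku hkv).elim
  · rcases eq_or_lt_of_le (hκ v).2 with hkv | hkv
    · exact (himp v u huv.symm hkv hku).elim
    · have hsub1 := nbhd_sub G c hc κ hκ hext u v huv hku hkv
      have hsub2 := nbhd_sub G c hc κ hκ hext v u huv.symm hkv hku
      have hEq : (G.neighborFinset u).erase v = (G.neighborFinset v).erase u :=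
        Finset.Subset.antisymm hsub1 hsub2
      have hcu : ((G.neighborFinset u).erase v).card = G.degree u - 1 := by
        rw [Finset.card_erase_of_mem hvNu, SimpleGraph.card_neighborFinset_eq_degree]
      have hcv : ((G.neighborFinset v).erase u).card = G.degree v - 1 := by
        rw [Finset.card_erase_of_mem huNv, SimpleGraph.card_neighborFinset_eq_degree]
      have hdu1 : 1 ≤ G.degree u := by
        rw [← SimpleGraph.card_neighborFinset_eq_degree]
        exact Finset.card_pos.2 ⟨v, hvNu⟩
      have hdv1 : 1 ≤ G.degree v := by
        rw [← SimpleGraph.card_neighborFinset_eq_degree]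
        exact Finset.card_pos.2 ⟨u, huNv⟩
      have hdeg : G.degree u = G.degree v := by
        have hcc := congrArg Finset.card hEq
        rw [hcu, hcv] at hcc
        omega
      have hκu0 := (hκ u).1
      obtain ⟨P0, hP0sub, hP0card⟩ := Finset.exists_subset_card_eq
        (show (κ u).toNat ≤ ((G.neighborFinset u).erase v).card by rw [hcu]; omega)
      have huP0 : u ∉ P0 := fun h =>
        G.irrefl ((G.mem_neighborFinset u u).1 (Finset.mem_of_mem_erase (hP0sub h)))
      have hvP0 : v ∉ P0 := fun h => (Finset.mem_erase.1 (hP0sub h)).1 rfl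
      have hrel := swap_relation G c hc κ hκ hext u v huv P0 huP0 hvP0
      have haZ : (((G.neighborFinset u).filter (· ∈ P0)).card : ℤ) = κ u := by
        rw [filter_mem_card_of_subset _ _ (hP0sub.trans (Finset.erase_subset _ _)), hP0card]
        omega
      have hbZ := (hrel.1).1 haZ
      have hbval : ((G.neighborFinset v).filter (· ∈ P0)).card = (κ u).toNat := by
        rw [filter_mem_card_of_subset _ _
          ((hEq ▸ hP0sub).trans (Finset.erase_subset _ _)), hP0card]
      rw [hbval] at hbZ
      have hκeq : κ u = κ v := by omega
      have hceq : c u = c v := hrel.2 haZ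
      have hκr : ((κ u : ℝ)) = ((κ v : ℝ)) := by exact_mod_cast hκeq
      have hdr : ((G.degree u : ℝ)) = ((G.degree v : ℝ)) := by exact_mod_cast hdeg
      rw [hceq, hκr, hdr]

end ExtremalAux

/-- In a connected extremal graph for the weighted degenerate-set bound, the quantity
c(u)(d(u)−κ(u))/(d(u)(d(u)+1)) is the same for every vertex. -/
theorem extremal_constant_alpha (G : SimpleGraph V) [DecidableRel G.Adj] (hG : G.Connected)
    (c : V → ℝ) (hc : ∀ u, 0 < c u)
    (κ : V → ℤ) (hκ : ∀ u, 0 ≤ κ u ∧ κ u ≤ (G.degree u : ℤ))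
    (hext : alphaW G c κ = ∑ u : V, c u * ((κ u : ℝ) + 1) / (G.degree u + 1)) :
    ∀ u v : V,
      c u * ((G.degree u : ℝ) - κ u) / ((G.degree u : ℝ) * ((G.degree u : ℝ) + 1)) =
      c v * ((G.degree v : ℝ) - κ v) / ((G.degree v : ℝ) * ((G.degree v : ℝ) + 1)) := by
  intro u v
  obtain ⟨w⟩ := hG.preconnected u v
  induction w with
  | nil => rfl
  | cons h _ ih => exact (ExtremalAux.adj_constant G c hc κ hκ hext _ _ h).trans ih
end
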